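/- arXiv:1901.03613 — 13 statements merged into one kernel-verified Lean document; each statement's English description precedes it below -/
import Mathlib

section
/- Let A and B be finite sets and let G = Sym(A × B). Then G = G_L · G_R · G_L and G = G_R · G_L · G_R; that is, every permutation π of A × B can be written as π = g₁ ∘ g₂ ∘ g₃ with g₁, g₃ ∈ G_L and g₂ ∈ G_R, and can also be written as π = h₁ ∘ h₂ ∘ h₃ with h₁, h₃ ∈ G_R and h₂ ∈ G_L. -/
open Finset

/-- Integer Birkhoff: a `B × B` matrix of naturals with all row and column sums
equal to `n` is a sum of `n` permutation matrices. -/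
lemma nat_birkhoff (n : ℕ) (B : Type*) [Fintype B] [DecidableEq B]
    (M : B → B → ℕ) (hrow : ∀ b, ∑ b', M b b' = n) (hcol : ∀ b', ∑ b, M b b' = n) :
    ∃ σ : Fin n → Equiv.Perm B, ∀ b b',
      M b b' = (univ.filter (fun i => σ i b = b')).card := by
  induction n generalizing M with
  | zero =>
    refine ⟨fun i => i.elim0, fun b b' => ?_⟩
    have h1 : M b b' = 0 := by
      have := hrow b
      exact (Finset.sum_eq_zero_iff.mp this) b' (mem_univ b')
    simp [h1]
  | succ n ih =>
    -- Hall's condition for the bipartite graph of positive entries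
    have hall : ∀ S : Finset B,
        S.card ≤ (S.biUnion (fun b => univ.filter (fun b' => 0 < M b b'))).card := by
      intro S
      set T := S.biUnion (fun b => univ.filter (fun b' => 0 < M b b')) with hT
      have h2 : ∀ b ∈ S, ∑ b', M b b' = ∑ b' ∈ T, M b b' := by
        intro b hb
        refine (Finset.sum_subset (Finset.subset_univ T) ?_).symm
        intro b' _ hb'
        by_contra h
        exact hb' (Finset.mem_biUnion.mpr ⟨b, hb, by simp [Nat.pos_of_ne_zero h]⟩)
      have h3 : (n+1) * S.card ≤ (n+1) * T.card := by
        calc (n+1) * S.card = ∑ b ∈ S, ∑ b', M b b' := by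
              simp [hrow, mul_comm]
          _ = ∑ b ∈ S, ∑ b' ∈ T, M b b' := Finset.sum_congr rfl h2
          _ ≤ ∑ b ∈ univ, ∑ b' ∈ T, M b b' :=
              Finset.sum_le_sum_of_subset (Finset.subset_univ S)
          _ = ∑ b' ∈ T, ∑ b, M b b' := Finset.sum_comm
          _ = (n+1) * T.card := by simp [hcol, mul_comm]
      exact Nat.le_of_mul_le_mul_left h3 (Nat.succ_pos n)
    obtain ⟨f, hfinj, hf⟩ :=
      (Finset.all_card_le_biUnion_card_iff_exists_injective
        (fun b => univ.filter (fun b' => 0 < M b b'))).mp hall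
    have hfpos : ∀ b, 0 < M b (f b) := fun b => (Finset.mem_filter.mp (hf b)).2
    let σ₀ : Equiv.Perm B := Equiv.ofBijective f (Finite.injective_iff_bijective.mp hfinj)
    have hσ₀ : ∀ b, σ₀ b = f b := fun b => rfl
    have hle : ∀ b b', (if σ₀ b = b' then 1 else 0) ≤ M b b' := by
      intro b b'
      split
      · next h => rw [← h, hσ₀]; exact hfpos b
      · exact Nat.zero_le _
    set M' : B → B → ℕ := fun b b' => M b b' - (if σ₀ b = b' then 1 else 0) with hM'
    have hrow' : ∀ b, ∑ b', M' b b' = n := by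
      intro b
      have hd : ∑ b', M' b b' = (∑ b', M b b') - ∑ b', (if σ₀ b = b' then 1 else 0) :=
        Finset.sum_tsub_distrib univ (fun b' _ => hle b b')
      rw [hd, hrow b]
      simp
    have hcol' : ∀ b', ∑ b, M' b b' = n := by
      intro b'
      have hd : ∑ b, M' b b' = (∑ b, M b b') - ∑ b, (if σ₀ b = b' then 1 else 0) :=
        Finset.sum_tsub_distrib univ (fun b _ => hle b b')
      rw [hd, hcol b']
      have h6 : ∑ b, (if σ₀ b = b' then 1 else 0) = 1 := by
        simp only [Equiv.apply_eq_iff_eq_symm_apply]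
        simp
      rw [h6]
      omega
    obtain ⟨σ', hσ'⟩ := ih M' hrow' hcol'
    refine ⟨Fin.cons σ₀ σ', fun b b' => ?_⟩
    rw [Finset.card_filter]
    rw [Fin.sum_univ_succ]
    simp only [Fin.cons_zero, Fin.cons_succ]
    rw [← Finset.card_filter, ← hσ' b b']
    rcases eq_or_ne (σ₀ b) b' with h | h
    · have h1 := hle b b'
      rw [if_pos h] at h1
      have h2 : M' b b' = M b b' - 1 := by simp only [hM']; rw [if_pos h]
      rw [h2, if_pos h]
      omega
    · have h2 : M' b b' = M b b' := by simp only [hM']; rw [if_neg h]; omega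
      rw [h2, if_neg h]
      omega

/-- If two functions on a fintype have equinumerous fibers, one is the other
composed with a permutation. -/
lemma exists_perm_comp {α β : Type*} [Fintype α] [DecidableEq β] (f g : α → β)
    (h : ∀ b, Fintype.card {a // f a = b} = Fintype.card {a // g a = b}) :
    ∃ e : Equiv.Perm α, ∀ a, f (e a) = g a := by
  have E : ∀ b, {a // g a = b} ≃ {a // f a = b} := fun b => Fintype.equivOfCardEq (h b).symm
  refine ⟨(Equiv.sigmaFiberEquiv g).symm.trans
    ((Equiv.sigmaCongrRight E).trans (Equiv.sigmaFiberEquiv f)), fun a => ?_⟩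
  have h1 : (Equiv.sigmaFiberEquiv g).symm a = ⟨g a, a, rfl⟩ := rfl
  simp only [Equiv.trans_apply, h1, Equiv.sigmaCongrRight_apply, Sigma.map]
  exact (E (g a) ⟨a, rfl⟩).prop

lemma oneSide (A B : Type*) [Finite A] [Finite B] (π : Equiv.Perm (A × B)) :
    ∃ g₁ g₂ g₃ : Equiv.Perm (A × B),
      (∀ p, (g₁ p).2 = p.2) ∧ (∀ p, (g₂ p).1 = p.1) ∧ (∀ p, (g₃ p).2 = p.2) ∧
      ∀ p, π p = g₁ (g₂ (g₃ p)) := by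
  classical
  cases nonempty_fintype A
  cases nonempty_fintype B
  set M : B → B → ℕ := fun b b' => (univ.filter (fun a : A => (π (a, b)).2 = b')).card with hM
  have hrow : ∀ b, ∑ b', M b b' = Fintype.card A := by
    intro b
    rw [← Finset.card_univ (α := A)]
    exact (Finset.card_eq_sum_card_fiberwise (f := fun a => (π (a, b)).2)
      (fun a _ => mem_univ _)).symm
  have hcol : ∀ b', ∑ b, M b b' = Fintype.card A := by
    intro b'
    have e1 : (Σ b : B, {a : A // (π (a, b)).2 = b'}) ≃ {x : B × A // (π (x.2, x.1)).2 = b'} :=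
      (Equiv.subtypeProdEquivSigmaSubtype (fun b a => (π (a, b)).2 = b')).symm
    have e2 : {x : B × A // (π (x.2, x.1)).2 = b'} ≃ {q : A × B // (π q).2 = b'} :=
      Equiv.subtypeEquiv (Equiv.prodComm B A) (fun x => Iff.rfl)
    have e3 : {q : A × B // (π q).2 = b'} ≃ {q : A × B // q.2 = b'} :=
      Equiv.subtypeEquiv π (fun q => Iff.rfl)
    have e4 : {q : A × B // q.2 = b'} ≃ A :=
      { toFun := fun q => q.1.1
        invFun := fun a => ⟨(a, b'), rfl⟩
        left_inv := by rintro ⟨⟨a, b⟩, rfl⟩; rfl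
        right_inv := fun a => rfl }
    calc ∑ b, M b b' = ∑ b, Fintype.card {a : A // (π (a, b)).2 = b'} := by
          simp [hM, Fintype.card_subtype]
      _ = Fintype.card (Σ b : B, {a : A // (π (a, b)).2 = b'}) := Fintype.card_sigma.symm
      _ = Fintype.card A := Fintype.card_congr (((e1.trans e2).trans e3).trans e4)
  obtain ⟨σ, hσ⟩ := nat_birkhoff (Fintype.card A) B M hrow hcol
  set eA : A ≃ Fin (Fintype.card A) := Fintype.equivFin A with heA
  set σ' : A → Equiv.Perm B := fun a => σ (eA a) with hσ'
  have key : ∀ b : B, ∃ e : Equiv.Perm A, ∀ a, (π (e a, b)).2 = σ' a b := by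
    intro b
    have main : ∀ b', Fintype.card {a : A // (fun a : A => (π (a, b)).2) a = b'} =
        Fintype.card {a : A // (fun a : A => σ' a b) a = b'} := ?_
    · obtain ⟨e, he⟩ := exists_perm_comp (fun a : A => (π (a, b)).2) (fun a => σ' a b) main
      exact ⟨e, he⟩
    intro b'
    have h1 : Fintype.card {a : A // (π (a, b)).2 = b'} = M b b' := by
      simp [hM, Fintype.card_subtype]
    have h2 : Fintype.card {a : A // σ' a b = b'} =
        Fintype.card {i : Fin (Fintype.card A) // σ i b = b'} :=
      Fintype.card_congr (eA.subtypeEquiv (fun a => Iff.rfl))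
    rw [h1, h2, hσ b b', Fintype.card_subtype]
  choose e he using key
  set g₃ : Equiv.Perm (A × B) := Equiv.prodCongrLeft (fun b => (e b).symm) with hg₃
  set g₂ : Equiv.Perm (A × B) := Equiv.prodCongrRight σ' with hg₂
  set g₁ : Equiv.Perm (A × B) := (g₃.trans g₂).symm.trans π with hg₁
  have hcomp : ∀ p, g₁ ((g₃.trans g₂) p) = π p := by
    intro p
    simp [hg₁]
  refine ⟨g₁, g₂, g₃, ?_, ?_, ?_, fun p => (hcomp p).symm⟩
  · intro q
    obtain ⟨p, rfl⟩ := (g₃.trans g₂).surjective q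
    obtain ⟨x, b⟩ := p
    rw [hcomp (x, b)]
    have h5 : ((g₃.trans g₂) (x, b)).2 = σ' ((e b).symm x) b := by
      simp [hg₃, hg₂, Equiv.prodCongrLeft_apply, Equiv.prodCongrRight_apply]
    rw [h5]
    conv_lhs => rw [show x = e b ((e b).symm x) from (Equiv.apply_symm_apply _ _).symm]
    exact he b ((e b).symm x)
  · intro p; obtain ⟨a, b⟩ := p; simp [hg₂, Equiv.prodCongrRight_apply]
  · intro p; obtain ⟨x, b⟩ := p; simp [hg₃, Equiv.prodCongrLeft_apply]

/-- For finite sets `A` and `B`, `Sym(A × B) = G_L·G_R·G_L = G_R·G_L·G_R`: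
every permutation of `A × B` is a composition of three permutations alternating
between the column group `G_L` (modifying only the left coordinate) and the row
group `G_R` (modifying only the right coordinate). -/
theorem finite_alternation_diameter_three
    (A B : Type*) [Finite A] [Finite B] (π : Equiv.Perm (A × B)) :
    (∃ g₁ g₂ g₃ : Equiv.Perm (A × B),
      (∀ p, (g₁ p).2 = p.2) ∧ (∀ p, (g₂ p).1 = p.1) ∧ (∀ p, (g₃ p).2 = p.2) ∧
      ∀ p, π p = g₁ (g₂ (g₃ p))) ∧
    (∃ h₁ h₂ h₃ : Equiv.Perm (A × B),
      (∀ p, (h₁ p).1 = p.1) ∧ (∀ p, (h₂ p).2 = p.2) ∧ (∀ p, (h₃ p).1 = p.1) ∧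
      ∀ p, π p = h₁ (h₂ (h₃ p))) := by
  constructor
  · exact oneSide A B π
  · set c : A × B ≃ B × A := Equiv.prodComm A B with hc
    obtain ⟨g₁, g₂, g₃, h1, h2, h3, h4⟩ := oneSide B A ((c.symm.trans π).trans c)
    refine ⟨(c.trans g₁).trans c.symm, (c.trans g₂).trans c.symm, (c.trans g₃).trans c.symm,
      ?_, ?_, ?_, ?_⟩
    · intro p; simpa [hc] using h1 (c p)
    · intro p; simpa [hc] using h2 (c p)
    · intro p; simpa [hc] using h3 (c p)
    · intro p
      have h5 := h4 (c p)
      simp only [Equiv.trans_apply, Equiv.symm_apply_apply, Equiv.apply_symm_apply] at h5 ⊢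
      rw [← h5]
      simp
end

section
/- Let α and β be sets and let r be a relation between α and β (the edge relation of a bipartite graph with left vertex set α and right vertex set β) such that for every a ∈ α the set {b ∈ β : r(a,b)} is finite, and for every b ∈ β the set {a ∈ α : r(a,b)} is finite. Assume the Hall condition on both sides: for every finite set S ⊆ α, |S| ≤ |{b ∈ β : ∃ a ∈ S, r(a,b)}|, and for every finite set T ⊆ β, |T| ≤ |{a ∈ α : ∃ b ∈ T, r(a,b)}|. Then there exists a bijection e : α → β such that r(a, e(a)) holds for every a ∈ α (a perfect matching). -/
open Set Function

private theorem sb_matching {α β : Type*} {f : α → β} {g : β → α}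
    (hf : Function.Injective f) (hg : Function.Injective g) :
    ∃ h : α → β, Bijective h ∧ ∀ a, h a = f a ∨ g (h a) = a := by
  classical
  cases' isEmpty_or_nonempty β with hβ hβ
  · have : IsEmpty α := Function.isEmpty f
    exact ⟨fun a => (this.false a).elim,
      ((Equiv.equivEmpty α).trans (Equiv.equivEmpty β).symm).bijective,
      fun a => (this.false a).elim⟩
  set F : Set α →o Set α :=
    { toFun := fun s => (g '' (f '' s)ᶜ)ᶜ
      monotone' := fun s t hst =>
        compl_subset_compl.mpr <| image_mono <| compl_subset_compl.mpr <| image_mono hst }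
  set s : Set α := F.lfp
  have hs : (g '' (f '' s)ᶜ)ᶜ = s := F.map_lfp
  have hns : g '' (f '' s)ᶜ = sᶜ := compl_injective (by simp [hs])
  set g' := invFun g
  have g'g : LeftInverse g' g := leftInverse_invFun hg
  have hg'ns : g' '' sᶜ = (f '' s)ᶜ := by rw [← hns, g'g.image_image]
  set h : α → β := s.piecewise f g'
  have hsurj : Surjective h := by rw [← range_eq_univ, range_piecewise, hg'ns, union_compl_self]
  have hinj : Injective h := by
    refine (injective_piecewise_iff _).2 ⟨hf.injOn, ?_, ?_⟩
    · intro x hx y hy hxy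
      obtain ⟨x', _, rfl⟩ : x ∈ g '' (f '' s)ᶜ := by rwa [hns]
      obtain ⟨y', _, rfl⟩ : y ∈ g '' (f '' s)ᶜ := by rwa [hns]
      rw [g'g _, g'g _] at hxy
      rw [hxy]
    · intro x hx y hy hxy
      obtain ⟨y', hy', rfl⟩ : y ∈ g '' (f '' s)ᶜ := by rwa [hns]
      rw [g'g _] at hxy
      exact hy' ⟨x, hx, hxy⟩
  refine ⟨h, ⟨hinj, hsurj⟩, fun a => ?_⟩
  by_cases ha : a ∈ s
  · exact Or.inl (Set.piecewise_eq_of_mem _ _ _ ha)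
  · right
    obtain ⟨b, _, rfl⟩ : a ∈ g '' (f '' s)ᶜ := by rwa [hns]
    show g (s.piecewise f g' (g b)) = g b
    rw [Set.piecewise_eq_of_notMem _ _ _ ha, g'g]

private theorem hall_side {α β : Type*} (r : α → β → Prop)
    (hloc : ∀ a : α, {b : β | r a b}.Finite)
    (hall : ∀ S : Finset α, (S.card : ℕ) ≤ {b : β | ∃ a ∈ S, r a b}.ncard) :
    ∃ f : α → β, Function.Injective f ∧ ∀ a, r a (f a) := by
  classical
  have := (Finset.all_card_le_biUnion_card_iff_exists_injective
    (fun a : α => (hloc a).toFinset)).mp ?_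
  · obtain ⟨f, hf, hf2⟩ := this
    exact ⟨f, hf, fun a => by simpa using hf2 a⟩
  · intro S
    refine le_trans (hall S) (le_of_eq ?_)
    rw [← Set.ncard_coe_finset]
    congr 1
    ext b
    simp

/-- Hall's theorem for locally finite bipartite graphs: if the edge relation `r`
between `α` and `β` is locally finite and both Hall conditions hold, then there is
a perfect matching, i.e. a bijection `e : α ≃ β` with `r a (e a)` for all `a`. -/
theorem hall_infinite_perfect_matching {α β : Type*} (r : α → β → Prop)
    (hlocα : ∀ a : α, {b : β | r a b}.Finite)
    (hlocβ : ∀ b : β, {a : α | r a b}.Finite)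
    (hallα : ∀ S : Finset α, (S.card : ℕ) ≤ {b : β | ∃ a ∈ S, r a b}.ncard)
    (hallβ : ∀ T : Finset β, (T.card : ℕ) ≤ {a : α | ∃ b ∈ T, r a b}.ncard) :
    ∃ e : α ≃ β, ∀ a : α, r a (e a) := by
  obtain ⟨f, hfinj, hfr⟩ := hall_side r hlocα hallα
  obtain ⟨g, hginj, hgr⟩ := hall_side (fun b a => r a b) hlocβ hallβ
  obtain ⟨h, hbij, hm⟩ := sb_matching hfinj hginj
  refine ⟨Equiv.ofBijective h hbij, fun a => ?_⟩
  rcases hm a with heq | heq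
  · simpa [heq] using hfr a
  · have := hgr (h a)
    rw [heq] at this
    simpa using this
end

section
/- Let A be an arbitrary set, let n ≥ 1, and let N : A × A → ℕ be a matrix such that for every a ∈ A the function b ↦ N(a,b) has finite support and Σ_b N(a,b) = n, and for every b ∈ A the function a ↦ N(a,b) has finite support and Σ_a N(a,b) = n. Then there exists a permutation σ of A such that N(a, σ(a)) ≥ 1 for every a ∈ A; that is, N dominates a permutation matrix entrywise. -/
open Set Function

/-- Schröder–Bernstein with graph control: from injections `f : α → β` and `g : β → α`
we get a bijection `h` such that each value `h a` is either `f a` or the `g`-preimage of `a`. -/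
theorem sb_graph {α β : Type*} {f : α → β} {g : β → α} (hf : Function.Injective f)
    (hg : Function.Injective g) : ∃ h : α ≃ β, ∀ a, h a = f a ∨ g (h a) = a := by
  classical
  cases' isEmpty_or_nonempty β with hβ hβ
  · have : IsEmpty α := Function.isEmpty f
    exact ⟨(Equiv.equivEmpty α).trans (Equiv.equivEmpty β).symm, fun a => (this.false a).elim⟩
  set F : Set α →o Set α :=
    { toFun := fun s => (g '' (f '' s)ᶜ)ᶜ
      monotone' := fun s t hst =>
        compl_subset_compl.mpr <| image_mono <| compl_subset_compl.mpr <| image_mono hst }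
  set s : Set α := F.lfp
  have hs : (g '' (f '' s)ᶜ)ᶜ = s := F.map_lfp
  have hns : g '' (f '' s)ᶜ = sᶜ := compl_injective (by simp [hs])
  set g' := invFun g
  have g'g : LeftInverse g' g := leftInverse_invFun hg
  have hg'ns : g' '' sᶜ = (f '' s)ᶜ := by rw [← hns, g'g.image_image]
  set h : α → β := s.piecewise f g'
  have hsurj : Surjective h := by rw [← range_eq_univ, range_piecewise, hg'ns, union_compl_self]
  have hinj : Injective h := by
    refine (injective_piecewise_iff _).2 ⟨hf.injOn, ?_, ?_⟩
    · intro x hx y hy hxy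
      obtain ⟨x', _, rfl⟩ : x ∈ g '' (f '' s)ᶜ := by rwa [hns]
      obtain ⟨y', _, rfl⟩ : y ∈ g '' (f '' s)ᶜ := by rwa [hns]
      rw [g'g _, g'g _] at hxy
      rw [hxy]
    · intro x hx y hy hxy
      obtain ⟨y', hy', rfl⟩ : y ∈ g '' (f '' s)ᶜ := by rwa [hns]
      rw [g'g _] at hxy
      exact hy' ⟨x, hx, hxy⟩
  refine ⟨Equiv.ofBijective h ⟨hinj, hsurj⟩, fun a => ?_⟩
  by_cases ha : a ∈ s
  · left
    show s.piecewise f g' a = f a; exact Set.piecewise_eq_of_mem _ _ _ ha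
  · right
    obtain ⟨b, _, rfl⟩ : a ∈ g '' (f '' s)ᶜ := by rwa [hns]
    show g (s.piecewise f g' (g b)) = g b; rw [Set.piecewise_eq_of_notMem _ _ _ ha, g'g b]

/-- Infinite version of the matrix Hall theorem: let `N : A → A → ℕ` be a matrix
all of whose rows and columns have finite support and sum to `n ≥ 1`. Then `N`
dominates a permutation matrix entrywise. -/
theorem matrix_hall_infinite {A : Type*} (n : ℕ) (hn : 1 ≤ n) (N : A → A → ℕ)
    (hrow_fin : ∀ a : A, (Function.support fun b => N a b).Finite)
    (hrow : ∀ a : A, ∑ᶠ b, N a b = n)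
    (hcol_fin : ∀ b : A, (Function.support fun a => N a b).Finite)
    (hcol : ∀ b : A, ∑ᶠ a, N a b = n) :
    ∃ σ : Equiv.Perm A, ∀ a, 1 ≤ N a (σ a) := by
  classical
  -- Hall condition, abstractly: rows of M sum to n, columns sum to at most n.
  have key : ∀ (M : A → A → ℕ), (∀ a : A, (Function.support fun b => M a b).Finite) →
      (∀ a : A, ∑ᶠ b, M a b = n) →
      (∀ b : A, (Function.support fun a => M a b).Finite) →
      (∀ b : A, ∑ᶠ a, M a b = n) →
      ∃ f : A → A, Function.Injective f ∧ ∀ a, 1 ≤ M a (f a) := by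
    intro M hrf hr hcf hc
    set t : A → Finset A := fun a => (hrf a).toFinset with ht
    have hall : ∀ s : Finset A, s.card ≤ (s.biUnion t).card := by
      intro s
      have h1 : ∀ a, ∑ b ∈ t a, M a b = n := by
        intro a
        rw [← hr a]
        exact (finsum_eq_finset_sum_of_support_subset _
          (by simp [ht])).symm
      have h2 : n * s.card ≤ n * (s.biUnion t).card := by
        calc n * s.card = ∑ a ∈ s, ∑ b ∈ t a, M a b := by
              simp [h1, mul_comm]
          _ ≤ ∑ a ∈ s, ∑ b ∈ s.biUnion t, M a b := by
              refine Finset.sum_le_sum fun a ha => ?_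
              exact Finset.sum_le_sum_of_subset (Finset.subset_biUnion_of_mem t ha)
          _ = ∑ b ∈ s.biUnion t, ∑ a ∈ s, M a b := Finset.sum_comm
          _ ≤ ∑ b ∈ s.biUnion t, n := by
              refine Finset.sum_le_sum fun b _ => ?_
              rw [← hc b]
              have : ∑ᶠ a, M a b = ∑ a ∈ s ∪ (hcf b).toFinset, M a b :=
                finsum_eq_finset_sum_of_support_subset _
                  (by intro x hx; simp only [Finset.coe_union, Set.Finite.coe_toFinset]
                      exact Or.inr hx)
              rw [this]
              exact Finset.sum_le_sum_of_subset Finset.subset_union_left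
          _ = n * (s.biUnion t).card := by simp [mul_comm]
      exact Nat.le_of_mul_le_mul_left h2 (lt_of_lt_of_le one_pos hn)
    obtain ⟨f, hfinj, hft⟩ := (Finset.all_card_le_biUnion_card_iff_exists_injective t).mp hall
    refine ⟨f, hfinj, fun a => ?_⟩
    have := hft a
    simp only [ht, Set.Finite.mem_toFinset, Function.mem_support] at this
    omega
  obtain ⟨f, hfinj, hf⟩ := key N hrow_fin hrow hcol_fin hcol
  obtain ⟨g, hginj, hg⟩ := key (fun a b => N b a) hcol_fin hcol hrow_fin hrow
  obtain ⟨h, hh⟩ := sb_graph hfinj hginj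
  refine ⟨h, fun a => ?_⟩
  rcases hh a with h1 | h2
  · rw [h1]; exact hf a
  · have := hg (h a)
    rwa [h2] at this
end

section
/- Let A and B be arbitrary sets and let G = Sym(A × B). A permutation π of A × B belongs to the set G_R · G_L = {r ∘ l : r ∈ G_R, l ∈ G_L} if and only if for every b ∈ B the map a ↦ proj_A(π(a,b)) from A to A is bijective, where proj_A : A × B → A is the first projection. -/
/-- Characterization of `G_R · G_L`: a permutation `π` of `A × B` is a composition
`r ∘ l` with `r` in the row group and `l` in the column group if and only if for
every `b` the map `a ↦ proj_A (π (a, b))` is a bijection of `A`. -/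
theorem mem_GR_GL_iff {A B : Type*} (π : Equiv.Perm (A × B)) :
    (∃ r l : Equiv.Perm (A × B),
      (∀ p, (r p).1 = p.1) ∧ (∀ p, (l p).2 = p.2) ∧ ∀ p, π p = r (l p)) ↔
    ∀ b : B, Function.Bijective fun a : A => (π (a, b)).1 := by
  constructor
  · rintro ⟨r, l, hr, hl, hπ⟩ b
    have key : ∀ a : A, (π (a, b)).1 = (l (a, b)).1 := fun a => by
      rw [hπ (a, b), hr]
    constructor
    · intro a a' h
      simp only [key] at h
      have h2 : l (a, b) = l (a', b) := by
        apply Prod.ext h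
        rw [hl (a, b), hl (a', b)]
      have := l.injective h2
      exact (Prod.mk.injEq _ _ _ _).mp this |>.1
    · intro c
      have hb : (l.symm (c, b)).2 = b := by
        have := hl (l.symm (c, b))
        rw [l.apply_symm_apply] at this
        exact this.symm
      refine ⟨(l.symm (c, b)).1, ?_⟩
      have heq : ((l.symm (c, b)).1, b) = l.symm (c, b) := Prod.ext rfl hb.symm
      show (π ((l.symm (c, b)).1, b)).1 = c
      rw [key, heq, l.apply_symm_apply]
  · intro h
    have hinj : Function.Injective (fun p : A × B => ((π p).1, p.2)) := by
      rintro ⟨a, b⟩ ⟨a', b'⟩ hp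
      simp only [Prod.mk.injEq] at hp
      obtain ⟨h1, h2⟩ := hp
      subst h2
      exact Prod.ext ((h b).1 h1) rfl
    have hsurj : Function.Surjective (fun p : A × B => ((π p).1, p.2)) := by
      rintro ⟨c, b⟩
      obtain ⟨a, ha⟩ := (h b).2 c
      exact ⟨(a, b), by simp [ha]⟩
    let l : Equiv.Perm (A × B) := Equiv.ofBijective _ ⟨hinj, hsurj⟩
    refine ⟨l.symm.trans π, l, ?_, ?_, ?_⟩
    · intro p
      show (π (l.symm p)).1 = p.1
      have : l (l.symm p) = p := l.apply_symm_apply p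
      have h1 : ((π (l.symm p)).1, (l.symm p).2) = p := this
      exact (Prod.ext_iff.mp h1).1
    · intro p
      rfl
    · intro p
      show π p = π (l.symm (l p))
      rw [l.symm_apply_apply]
end

section
/- Let k ≥ 1, let A_1, …, A_k be finite sets, let X = A_1 × A_2 × ⋯ × A_k, and for each i let G_i ≤ Sym(X) be the subgroup of permutations that modify only the i-th coordinate. Then Sym(X) = G_k · G_{k−1} ⋯ G_2 · G_1 · G_2 ⋯ G_{k−1} · G_k; that is, every permutation π of X can be written as π = a_k ∘ a_{k−1} ∘ ⋯ ∘ a_2 ∘ a_1 ∘ b_2 ∘ ⋯ ∘ b_{k−1} ∘ b_k, where a_i ∈ G_i for 1 ≤ i ≤ k and b_i ∈ G_i for 2 ≤ i ≤ k. -/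
lemma exists_coloring {α A : Type*} [DecidableEq α] [DecidableEq A] [Fintype A]
    (n : ℕ) (S : Finset α) (f g : α → A)
    (hf : ∀ a, (S.filter fun x => f x = a).card = n)
    (hg : ∀ a, (S.filter fun x => g x = a).card = n) :
    ∃ c : α → ℕ, (∀ x ∈ S, c x < n) ∧
      (∀ x ∈ S, ∀ y ∈ S, f x = f y → c x = c y → x = y) ∧
      (∀ x ∈ S, ∀ y ∈ S, g x = g y → c x = c y → x = y) := by
  induction n generalizing S with
  | zero =>
    have hS : S = ∅ := by
      by_contra h
      obtain ⟨x, hx⟩ := Finset.nonempty_iff_ne_empty.mpr h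
      have := hf (f x)
      have hxm : x ∈ S.filter fun y => f y = f x := by simp [hx]
      have := Finset.card_pos.mpr ⟨x, hxm⟩
      omega
    subst hS
    exact ⟨fun _ => 0, by simp, by simp, by simp⟩
  | succ n ih =>
    -- Hall condition
    have hall : ∀ T : Finset A,
        T.card ≤ (T.biUnion fun a => (S.filter fun x => f x = a).image g).card := by
      intro T
      set N := T.biUnion fun a => (S.filter fun x => f x = a).image g with hN
      have h1 : (S.filter fun x => f x ∈ T).card = (n+1) * T.card := by
        have : (S.filter fun x => f x ∈ T) = T.biUnion fun a => S.filter fun x => f x = a := by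
          ext x; simp only [Finset.mem_filter, Finset.mem_biUnion]
          constructor
          · rintro ⟨hx, ht⟩; exact ⟨f x, ht, hx, rfl⟩
          · rintro ⟨a, ha, hx, rfl⟩; exact ⟨hx, ha⟩
        rw [this, Finset.card_biUnion]
        · simp [hf, mul_comm]
        · intro a _ b _ hab
          simp only [Finset.disjoint_left, Finset.mem_filter]
          rintro x ⟨_, rfl⟩ ⟨_, hxb⟩
          exact hab hxb
      have h2 : (S.filter fun x => f x ∈ T) ⊆ S.filter fun x => g x ∈ N := by
        intro x hx
        rw [Finset.mem_filter] at hx ⊢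
        refine ⟨hx.1, ?_⟩
        rw [hN]
        exact Finset.mem_biUnion.mpr ⟨f x, hx.2, Finset.mem_image.mpr ⟨x, by simp [hx.1], rfl⟩⟩
      have h3 : (S.filter fun x => g x ∈ N).card = (n+1) * N.card := by
        have : (S.filter fun x => g x ∈ N) = N.biUnion fun a => S.filter fun x => g x = a := by
          ext x; simp only [Finset.mem_filter, Finset.mem_biUnion]
          constructor
          · rintro ⟨hx, ht⟩; exact ⟨g x, ht, hx, rfl⟩
          · rintro ⟨a, ha, hx, rfl⟩; exact ⟨hx, ha⟩
        rw [this, Finset.card_biUnion]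
        · simp [hg, mul_comm]
        · intro a _ b _ hab
          simp only [Finset.disjoint_left, Finset.mem_filter]
          rintro x ⟨_, rfl⟩ ⟨_, hxb⟩
          exact hab hxb
      have := Finset.card_le_card h2
      rw [h1, h3] at this
      exact Nat.le_of_mul_le_mul_left this (Nat.succ_pos n)
    obtain ⟨h, hinj, hmem⟩ :=
      (Finset.all_card_le_biUnion_card_iff_exists_injective
        (fun a => (S.filter fun x => f x = a).image g)).mp hall
    have : ∀ a, ∃ x, (x ∈ S ∧ f x = a) ∧ g x = h a := by
      intro a
      obtain ⟨x, hx, hgx⟩ := Finset.mem_image.mp (hmem a)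
      exact ⟨x, Finset.mem_filter.mp hx, hgx⟩
    choose m hm hgm using this
    have hmS : ∀ a, m a ∈ S := fun a => (hm a).1
    have hfm : ∀ a, f (m a) = a := fun a => (hm a).2
    have minj : Function.Injective m := by
      intro a b hab
      rw [← hfm a, ← hfm b, hab]
    set M : Finset α := Finset.image m Finset.univ with hM
    have hmem_M : ∀ x, x ∈ M ↔ ∃ a, m a = x := by intro x; simp [hM]
    -- bijectivity of h
    have hbij : Function.Bijective h := Finite.injective_iff_bijective.mp hinj
    let eh := Equiv.ofBijective h hbij
    set S' := S \ M with hS'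
    have filter_sdiff : ∀ (p : α → Prop) [DecidablePred p],
        S'.filter p = (S.filter p) \ (M.filter p) := by
      intro p _
      ext x; simp only [hS', Finset.mem_filter, Finset.mem_sdiff]; tauto
    have hf' : ∀ a, (S'.filter fun x => f x = a).card = n := by
      intro a
      rw [filter_sdiff]
      have hMf : M.filter (fun x => f x = a) = {m a} := by
        ext x
        simp only [Finset.mem_filter, hmem_M, Finset.mem_singleton]
        constructor
        · rintro ⟨⟨b, rfl⟩, hfx⟩; rw [hfm] at hfx; rw [hfx]
        · rintro rfl; exact ⟨⟨a, rfl⟩, hfm a⟩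
      rw [hMf, Finset.card_sdiff_of_subset (by
        simp only [Finset.singleton_subset_iff, Finset.mem_filter]
        exact ⟨hmS a, hfm a⟩)]
      rw [hf a]; simp
    have hg' : ∀ a, (S'.filter fun x => g x = a).card = n := by
      intro a
      rw [filter_sdiff]
      have hMg : M.filter (fun x => g x = a) = {m (eh.symm a)} := by
        ext x
        simp only [Finset.mem_filter, hmem_M, Finset.mem_singleton]
        constructor
        · rintro ⟨⟨b, rfl⟩, hgx⟩
          rw [hgm] at hgx
          have : b = eh.symm a := by
            apply eh.injective; simp [eh, Equiv.ofBijective_apply, hgx]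
          rw [this]
        · rintro rfl
          refine ⟨⟨_, rfl⟩, ?_⟩
          rw [hgm]
          exact eh.apply_symm_apply a
      rw [hMg, Finset.card_sdiff_of_subset (by
        simp only [Finset.singleton_subset_iff, Finset.mem_filter]
        refine ⟨hmS _, ?_⟩
        rw [hgm]; exact eh.apply_symm_apply a)]
      rw [hg a]; simp
    obtain ⟨c', hlt', hcf', hcg'⟩ := ih S' hf' hg'
    refine ⟨fun x => if x ∈ M then n else c' x, ?_, ?_, ?_⟩
    · intro x hx
      by_cases hxM : x ∈ M <;> simp only [hxM, if_true, if_false, reduceIte]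
      · omega
      · have := hlt' x (by simp [hS', hx, hxM]); omega
    · intro x hx y hy hfxy hcxy
      by_cases hxM : x ∈ M <;> by_cases hyM : y ∈ M
      · obtain ⟨a, rfl⟩ := (hmem_M x).mp hxM
        obtain ⟨b, rfl⟩ := (hmem_M y).mp hyM
        rw [hfm, hfm] at hfxy
        rw [hfxy]
      · exfalso
        simp only [hxM, hyM, if_true, if_false, reduceIte] at hcxy
        have := hlt' y (by simp [hS', hy, hyM]); omega
      · exfalso
        simp only [hxM, hyM, if_true, if_false, reduceIte] at hcxy
        have := hlt' x (by simp [hS', hx, hxM]); omega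
      · simp only [hxM, hyM, if_false, reduceIte] at hcxy
        exact hcf' x (by simp [hS', hx, hxM]) y (by simp [hS', hy, hyM]) hfxy hcxy
    · intro x hx y hy hgxy hcxy
      by_cases hxM : x ∈ M <;> by_cases hyM : y ∈ M
      · obtain ⟨a, rfl⟩ := (hmem_M x).mp hxM
        obtain ⟨b, rfl⟩ := (hmem_M y).mp hyM
        rw [hgm, hgm] at hgxy
        rw [hinj hgxy]
      · exfalso
        simp only [hxM, hyM, if_true, if_false, reduceIte] at hcxy
        have := hlt' y (by simp [hS', hy, hyM]); omega
      · exfalso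
        simp only [hxM, hyM, if_true, if_false, reduceIte] at hcxy
        have := hlt' x (by simp [hS', hx, hxM]); omega
      · simp only [hxM, hyM, if_false, reduceIte] at hcxy
        exact hcg' x (by simp [hS', hx, hxM]) y (by simp [hS', hy, hyM]) hgxy hcxy

lemma perm_prod_decomp {V W : Type*} [Finite V] [Finite W] (π : Equiv.Perm (V × W)) :
    ∃ a r b : Equiv.Perm (V × W),
      (∀ x, (a x).1 = x.1) ∧ (∀ x, (b x).1 = x.1) ∧ (∀ x, (r x).2 = x.2) ∧
      π = a * r * b := by
  classical
  cases nonempty_fintype V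
  cases nonempty_fintype W
  set n := Fintype.card W with hn
  have hf : ∀ v : V, (Finset.univ.filter fun x : V × W => x.1 = v).card = n := by
    intro v
    rw [hn, ← Fintype.card_subtype]
    exact Fintype.card_congr ⟨fun s => s.1.2, fun w => ⟨(v, w), rfl⟩,
      fun s => Subtype.ext (Prod.ext s.2.symm rfl), fun w => rfl⟩
  have hg : ∀ v : V, (Finset.univ.filter fun x : V × W => (π x).1 = v).card = n := by
    intro v
    rw [← hf v]
    apply Finset.card_bij' (fun x _ => π x) (fun y _ => π.symm y)
    · intro x hx; simpa using (Finset.mem_filter.mp hx).2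
    · intro y hy; simp only [Finset.mem_filter, Finset.mem_univ, true_and]
      rw [Equiv.apply_symm_apply]; simpa using (Finset.mem_filter.mp hy).2
    · intro x _; exact π.symm_apply_apply x
    · intro y _; exact π.apply_symm_apply y
  obtain ⟨c, hlt, hcf, hcg⟩ := exists_coloring n Finset.univ
    (fun x : V × W => x.1) (fun x => (π x).1) hf hg
  let eW : W ≃ Fin n := Fintype.equivFin W
  let cW : V × W → W := fun x => eW.symm ⟨c x, hlt x (Finset.mem_univ x)⟩
  have hcW : ∀ x y : V × W, cW x = cW y → c x = c y := by
    intro x y hxy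
    have h2 := eW.symm.injective hxy
    exact congrArg Fin.val h2
  have hbinj : Function.Injective (fun x : V × W => (x.1, cW x)) := by
    intro x y hxy
    simp only [Prod.mk.injEq] at hxy
    exact hcf x (Finset.mem_univ x) y (Finset.mem_univ y) hxy.1 (hcW x y hxy.2)
  have hqinj : Function.Injective (fun x : V × W => ((π x).1, cW x)) := by
    intro x y hxy
    simp only [Prod.mk.injEq] at hxy
    exact hcg x (Finset.mem_univ x) y (Finset.mem_univ y) hxy.1 (hcW x y hxy.2)
  let B : Equiv.Perm (V × W) := Equiv.ofBijective _ (Finite.injective_iff_bijective.mp hbinj)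
  let Q : Equiv.Perm (V × W) := Equiv.ofBijective _ (Finite.injective_iff_bijective.mp hqinj)
  refine ⟨π * Q⁻¹, Q * B⁻¹, B, ?_, ?_, ?_, by group⟩
  · intro x
    obtain ⟨y, rfl⟩ := Q.surjective x
    have : (π * Q⁻¹) (Q y) = π y := by simp
    rw [this]
    show (π y).1 = (Q y).1
    rfl
  · intro x
    rfl
  · intro x
    obtain ⟨y, rfl⟩ := B.surjective x
    have : (Q * B⁻¹) (B y) = Q y := by simp
    rw [this]
    show (Q y).2 = (B y).2
    rfl

universe u

theorem aux_alternation (k : ℕ) (A : Fin (k+1) → Type u) [inst : ∀ i, Finite (A i)]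
    (π : Equiv.Perm (∀ i, A i)) :
    ∃ a b : Fin (k+1) → Equiv.Perm (∀ i, A i),
      (∀ i, ∀ x, ∀ j, j ≠ i → a i x j = x j) ∧
      (∀ i, ∀ x, ∀ j, j ≠ i → b i x j = x j) ∧
      π = ((List.ofFn a).reverse ++ (List.ofFn b).drop 1).prod := by
  induction k with
  | zero =>
    refine ⟨fun _ => π, fun _ => 1, ?_, ?_, ?_⟩
    · intro i x j hj
      exact absurd ((Fin.fin_one_eq_zero j).trans (Fin.fin_one_eq_zero i).symm) hj
    · intro i x j hj
      exact absurd ((Fin.fin_one_eq_zero j).trans (Fin.fin_one_eq_zero i).symm) hj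
    · simp [List.ofFn_succ]
  | succ k ih =>
    set V := ∀ i : Fin (k+1), A i.castSucc with hV
    set W := A (Fin.last (k+1)) with hW
    let e : (∀ i, A i) ≃ V × W :=
      { toFun := fun x => (fun i => x i.castSucc, x (Fin.last _))
        invFun := fun p => Fin.snoc p.1 p.2
        left_inv := fun x => by
          funext j
          induction j using Fin.lastCases with
          | last => simp [Fin.snoc_last]
          | cast i => simp [Fin.snoc_castSucc]
        right_inv := fun p => by
          refine Prod.ext ?_ ?_
          · funext i; simp [Fin.snoc_castSucc]
          · simp [Fin.snoc_last] }
    let pc : Equiv.Perm (V × W) → Equiv.Perm (∀ i, A i) :=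
      fun σ => (e.trans σ).trans e.symm
    have pc_apply : ∀ σ x, pc σ x = e.symm (σ (e x)) := fun _ _ => rfl
    have pc_mul : ∀ σ τ, pc (σ * τ) = pc σ * pc τ := by
      intro σ τ
      apply Equiv.ext
      intro x
      simp [pc_apply, Equiv.Perm.mul_apply]
    obtain ⟨a₂, r₂, b₂, ha₂, hb₂, hr₂, hdec⟩ := perm_prod_decomp (e.symm.trans (π.trans e))
    have hπ : π = pc a₂ * pc r₂ * pc b₂ := by
      rw [← pc_mul, ← pc_mul, ← hdec]
      apply Equiv.ext; intro x
      simp [pc_apply]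
    -- fiberwise structure of r₂
    have rinj : ∀ t : W, Function.Injective fun v : V => (r₂ (v, t)).1 := by
      intro t v v' hvv'
      have h1 : r₂ (v, t) = r₂ (v', t) := by
        apply Prod.ext hvv'
        rw [hr₂ (v, t), hr₂ (v', t)]
      have h2 := r₂.injective h1
      exact (Prod.mk.injEq _ _ _ _ ▸ h2).1
    let ρ : W → Equiv.Perm V := fun t =>
      Equiv.ofBijective _ (Finite.injective_iff_bijective.mp (rinj t))
    have hρ : ∀ t v, ρ t v = (r₂ (v, t)).1 := fun _ _ => rfl
    have hr₂eq : r₂ = Equiv.prodCongrLeft ρ := by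
      apply Equiv.ext
      rintro ⟨v, t⟩
      rw [Equiv.prodCongrLeft_apply]
      exact Prod.ext (hρ t v).symm (hr₂ (v, t))
    -- lifting monoid hom
    let L : (W → Equiv.Perm V) →* Equiv.Perm (∀ i, A i) := MonoidHom.mk'
      (fun σ => pc (Equiv.prodCongrLeft σ))
      (by
        intro σ τ
        rw [← pc_mul]
        congr 1)
    have L_apply : ∀ (σ : W → Equiv.Perm V) (x : ∀ i, A i),
        L σ x = Fin.snoc (σ (x (Fin.last _)) (fun i => x i.castSucc)) (x (Fin.last _)) :=
      fun _ _ => rfl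
    -- apply IH fiberwise
    choose aa bb haa hbb hprod using fun t : W =>
      ih (fun i => A i.castSucc) (ρ t)
    -- assemble
    let a' : Fin (k+1) → Equiv.Perm (∀ i, A i) := fun i => L fun t => aa t i
    let b' : Fin (k+1) → Equiv.Perm (∀ i, A i) := fun i => L fun t => bb t i
    let a : Fin (k+2) → Equiv.Perm (∀ i, A i) := Fin.lastCases (pc a₂) a'
    let b : Fin (k+2) → Equiv.Perm (∀ i, A i) := Fin.lastCases (pc b₂) b'
    have pc_coords : ∀ (σ : Equiv.Perm (V × W)), (∀ y, (σ y).1 = y.1) →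
        ∀ x j, j ≠ Fin.last (k+1) → pc σ x j = x j := by
      intro σ hσ x j hj
      obtain ⟨j', rfl⟩ := Fin.exists_castSucc_eq.mpr hj
      rw [pc_apply]
      show (Fin.snoc (σ (e x)).1 (σ (e x)).2 : ∀ i, A i) j'.castSucc = x j'.castSucc
      rw [Fin.snoc_castSucc, hσ (e x)]
      rfl
    have L_coords : ∀ (σ : W → Equiv.Perm V) (i : Fin (k+1)),
        (∀ t, ∀ v, ∀ j, j ≠ i → σ t v j = v j) →
        ∀ x j, j ≠ i.castSucc → L σ x j = x j := by
      intro σ i hσ x j hj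
      rw [L_apply]
      induction j using Fin.lastCases with
      | last => rw [Fin.snoc_last]
      | cast j' =>
        rw [Fin.snoc_castSucc]
        have hj' : j' ≠ i := fun h => hj (by rw [h])
        exact hσ _ _ j' hj'
    refine ⟨a, b, ?_, ?_, ?_⟩
    · intro i
      induction i using Fin.lastCases with
      | last =>
        intro x j hj
        have ha : a (Fin.last (k+1)) = pc a₂ := Fin.lastCases_last
        rw [ha]
        exact pc_coords a₂ ha₂ x j hj
      | cast i =>
        intro x j hj
        have ha : a i.castSucc = a' i := Fin.lastCases_castSucc i
        rw [ha]
        exact L_coords _ i (fun t v j hj => haa t i v j hj) x j hj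
    · intro i
      induction i using Fin.lastCases with
      | last =>
        intro x j hj
        have hb : b (Fin.last (k+1)) = pc b₂ := Fin.lastCases_last
        rw [hb]
        exact pc_coords b₂ hb₂ x j hj
      | cast i =>
        intro x j hj
        have hb : b i.castSucc = b' i := Fin.lastCases_castSucc i
        rw [hb]
        exact L_coords _ i (fun t v j hj => hbb t i v j hj) x j hj
    · -- the product identity
      have hofa : List.ofFn a = (List.ofFn a').concat (pc a₂) := by
        rw [List.ofFn_succ']
        simp only [a, Fin.lastCases_castSucc, Fin.lastCases_last]
      have hofb : List.ofFn b = (List.ofFn b').concat (pc b₂) := by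
        rw [List.ofFn_succ']
        simp only [b, Fin.lastCases_castSucc, Fin.lastCases_last]
      have hmid : pc r₂ = ((List.ofFn a').reverse ++ (List.ofFn b').drop 1).prod := by
        have h1 : pc r₂ = L ρ := by rw [hr₂eq]; rfl
        have h2 : ρ = ((List.ofFn fun i => fun t => aa t i).reverse
            ++ (List.ofFn fun i => fun t => bb t i).drop 1).prod := by
          funext t
          rw [hprod t]
          have h3 := map_list_prod (Pi.evalMonoidHom (fun _ : W => Equiv.Perm V) t)
            ((List.ofFn fun i => fun t => aa t i).reverse
              ++ (List.ofFn fun i => fun t => bb t i).drop 1)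
          simp only [Pi.evalMonoidHom_apply] at h3
          rw [show ((List.ofFn fun i => fun t => aa t i).reverse
              ++ (List.ofFn fun i => fun t => bb t i).drop 1).prod t
            = (((List.ofFn fun i => fun t => aa t i).reverse
              ++ (List.ofFn fun i => fun t => bb t i).drop 1).map
                (Pi.evalMonoidHom (fun _ : W => Equiv.Perm V) t)).prod from h3 ▸ rfl]
          simp only [List.map_append, List.map_reverse, List.map_drop, List.map_ofFn]
          rfl
        rw [h1, h2, map_list_prod]
        simp only [List.map_append, List.map_reverse, List.map_drop, List.map_ofFn]
        rfl
      rw [hπ, hofa, hofb, List.concat_eq_append, List.concat_eq_append,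
        List.reverse_append, List.drop_append_of_le_length (by simp)]
      simp only [List.reverse_singleton, List.singleton_append, List.prod_append,
        List.prod_cons, List.prod_singleton]
      rw [hmid]
      simp [List.prod_append, List.prod_nil, mul_assoc]

/-- For a product `X = A₁ × ⋯ × A_k` of finite sets, every permutation of `X` lies in
`G_k ⋯ G_2 · G_1 · G_2 ⋯ G_k`, i.e. it can be written as
`a_k ∘ ⋯ ∘ a_2 ∘ a_1 ∘ b_2 ∘ ⋯ ∘ b_k` with `a_i, b_i ∈ G_i`, where `G_i` is the
subgroup of permutations modifying only the `i`-th coordinate.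
(Here `(List.ofFn a).reverse.prod = a_k * ⋯ * a_1` and
`((List.ofFn b).drop 1).prod = b_2 * ⋯ * b_k`, with `*` denoting composition.) -/
theorem finite_product_alternation (k : ℕ) (hk : 1 ≤ k) (A : Fin k → Type*)
    [∀ i, Finite (A i)] (π : Equiv.Perm (∀ i, A i)) :
    ∃ a b : Fin k → Equiv.Perm (∀ i, A i),
      (∀ i, ∀ x, ∀ j, j ≠ i → a i x j = x j) ∧
      (∀ i, ∀ x, ∀ j, j ≠ i → b i x j = x j) ∧
      π = ((List.ofFn a).reverse ++ (List.ofFn b).drop 1).prod := by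
  obtain ⟨k', rfl⟩ : ∃ k', k = k' + 1 := ⟨k - 1, by omega⟩
  exact aux_alternation k' A π
end

section
/- Let k ≥ 1, let A_1, …, A_k be finite sets each of cardinality at least 2, let X = A_1 × ⋯ × A_k, and for each i let G_i ≤ Sym(X) be the subgroup of permutations that modify only the i-th coordinate. Then for every ℓ < 2k − 1 and every sequence i_1, …, i_ℓ of indices in {1, …, k}, not every permutation of X is of the form g_ℓ ∘ g_{ℓ−1} ∘ ⋯ ∘ g_1 with g_j ∈ G_{i_j} for each j; that is, Sym(X) ≠ G_{i_ℓ} ⋯ G_{i_1}. -/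
open Finset

private lemma key_lemma {k : ℕ} {A : Fin k → Type*} [∀ i, Finite (A i)]
    (m m' : Fin k) (hmm' : m' ≠ m) (u v : ∀ i, A i) (huv : ∀ j, u j ≠ v j)
    (π Q g R : Equiv.Perm (∀ i, A i))
    (hu : π u = v) (hv : π v = u) (hfix : ∀ x, x ≠ u → x ≠ v → π x = x)
    (hQ : ∀ x, Q x m = x m)
    (hg : ∀ x (j' : Fin k), j' ≠ m → g x j' = x j')
    (hRm : ∀ x, R x m = x m) (hRm' : ∀ x, R x m' = x m')
    (hπ : ∀ x, π x = R (g (Q x))) : False := by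
  classical
  haveI : Fintype (∀ i, A i) := Fintype.ofFinite _
  have hπm' : ∀ x, π x m' = Q x m' := fun x => by rw [hπ, hRm', hg _ _ hmm']
  set S : A m → Finset (∀ i, A i) :=
    fun a => univ.filter (fun x => x m = a ∧ π x m' = u m') with hSdef
  have hmem : ∀ a x, x ∈ S a ↔ x m = a ∧ π x m' = u m' := by
    intro a x; simp [hSdef]
  have hback : ∀ a x, x ∈ S a → Q.symm (Function.update (Q x) m a) = x := by
    intro a x hx
    rw [hmem] at hx
    rw [← hx.1, ← hQ x, Function.update_eq_self, Equiv.symm_apply_apply]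
  have hstep : ∀ a a' x, x ∈ S a → Q.symm (Function.update (Q x) m a') ∈ S a' := by
    intro a a' x hx
    rw [hmem] at hx ⊢
    constructor
    · have h1 := hQ (Q.symm (Function.update (Q x) m a'))
      rw [Equiv.apply_symm_apply] at h1
      rw [← h1, Function.update_self]
    · rw [hπm', Equiv.apply_symm_apply, Function.update_of_ne hmm', ← hπm', hx.2]
  have hcard : ∀ a a', (S a).card = (S a').card := by
    intro a a'
    refine Finset.card_bij' (fun x _ => Q.symm (Function.update (Q x) m a'))
      (fun x _ => Q.symm (Function.update (Q x) m a)) (fun x hx => hstep a a' x hx)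
      (fun x hx => hstep a' a x hx) ?_ ?_
    · intro x hx
      rw [Equiv.apply_symm_apply, Function.update_idem]
      exact hback a x hx
    · intro x hx
      rw [Equiv.apply_symm_apply, Function.update_idem]
      exact hback a' x hx
  have hne : u ≠ v := fun h => huv m (congrFun h m)
  set T : A m → Finset (∀ i, A i) :=
    fun a => univ.filter (fun x => x m = a ∧ x m' = u m') with hTdef
  have hTmem : ∀ a x, x ∈ T a ↔ x m = a ∧ x m' = u m' := by
    intro a x; simp [hTdef]
  have hS1 : S (u m) = (T (u m)).erase u := by
    ext x
    rw [hmem, Finset.mem_erase, hTmem]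
    by_cases hxu : x = u
    · subst hxu
      apply iff_of_false
      · rintro ⟨-, h2⟩; rw [hu] at h2; exact huv m' h2.symm
      · rintro ⟨h, -⟩; exact h rfl
    by_cases hxv : x = v
    · subst hxv
      apply iff_of_false
      · rintro ⟨h1, -⟩; exact huv m h1.symm
      · rintro ⟨-, h1, -⟩; exact huv m h1.symm
    · rw [hfix x hxu hxv]
      exact ⟨fun ⟨a, b⟩ => ⟨hxu, a, b⟩, fun ⟨_, a, b⟩ => ⟨a, b⟩⟩
  have hS2 : S (v m) = insert v (T (v m)) := by
    ext x
    rw [hmem, Finset.mem_insert, hTmem]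
    by_cases hxv : x = v
    · subst hxv
      apply iff_of_true
      · exact ⟨rfl, by rw [hv]⟩
      · exact Or.inl rfl
    by_cases hxu : x = u
    · subst hxu
      apply iff_of_false
      · rintro ⟨h1, -⟩; exact huv m h1
      · rintro (h | ⟨h1, -⟩); exact hne h; exact huv m h1
    · rw [hfix x hxu hxv]
      constructor
      · rintro ⟨a, b⟩; exact Or.inr ⟨a, b⟩
      · rintro (h | ⟨a, b⟩); exact absurd h hxv; exact ⟨a, b⟩
  have huT : u ∈ T (u m) := by rw [hTmem]; exact ⟨rfl, rfl⟩
  have hvT : v ∉ T (v m) := by rw [hTmem]; rintro ⟨-, h⟩; exact huv m' h.symm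
  have hTcard : (T (u m)).card = (T (v m)).card := by
    refine Finset.card_bij' (fun x _ => Function.update x m (v m))
      (fun x _ => Function.update x m (u m)) ?_ ?_ ?_ ?_
    · intro x hx
      rw [hTmem] at hx ⊢
      exact ⟨Function.update_self _ _ _, by rw [Function.update_of_ne hmm']; exact hx.2⟩
    · intro x hx
      rw [hTmem] at hx ⊢
      exact ⟨Function.update_self _ _ _, by rw [Function.update_of_ne hmm']; exact hx.2⟩
    · intro x hx
      rw [hTmem] at hx
      rw [Function.update_idem, ← hx.1, Function.update_eq_self]
    · intro x hx
      rw [hTmem] at hx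
      rw [Function.update_idem, ← hx.1, Function.update_eq_self]
  have e1 : (S (u m)).card = (T (u m)).card - 1 := by
    rw [hS1, Finset.card_erase_of_mem huT]
  have e2 : (S (v m)).card = (T (v m)).card + 1 := by
    rw [hS2, Finset.card_insert_of_notMem hvT]
  have hpos : 0 < (T (u m)).card := Finset.card_pos.mpr ⟨u, huT⟩
  have := hcard (u m) (v m)
  omega


section helpers

variable {k : ℕ} {A : Fin k → Type*}

private lemma prod_pres (c : Fin k) :
    ∀ (L : List (Equiv.Perm (∀ i, A i))), (∀ p ∈ L, ∀ x, p x c = x c) →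
      ∀ x, L.prod x c = x c := by
  intro L
  induction L with
  | nil => intro _ x; simp
  | cons p L ih =>
    intro h x
    rw [List.prod_cons, Equiv.Perm.mul_apply, h p List.mem_cons_self,
      ih (fun q hq => h q (List.mem_cons_of_mem _ hq))]

private lemma inv_pres (c : Fin k) (p : Equiv.Perm (∀ i, A i))
    (hp : ∀ x, p x c = x c) : ∀ x, p⁻¹ x c = x c := by
  intro x
  have := hp (p⁻¹ x)
  rw [← Equiv.Perm.mul_apply, mul_inv_cancel, Equiv.Perm.one_apply] at this
  exact this.symm

end helpers



/-- For a product `X = A₁ × ⋯ × A_k` of finite sets each with at least two elements,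
no composition sequence of fewer than `2k - 1` of the groups `G_i` (permutations
modifying only the `i`-th coordinate) yields all of `Sym(X)`:
for every `ℓ < 2k - 1` and every sequence `i : Fin ℓ → Fin k`, not every permutation
`π` of `X` can be written as `g_ℓ ∘ ⋯ ∘ g_1` with `g_j ∈ G_{i j}`.
(Here `(List.ofFn g).reverse.prod = g_ℓ * ⋯ * g_1`, with `*` denoting composition.) -/
theorem finite_product_alternation_lower_bound (k : ℕ) (hk : 1 ≤ k)
    (A : Fin k → Type*) [∀ i, Finite (A i)] [∀ i, Nontrivial (A i)]
    (ℓ : ℕ) (hℓ : ℓ < 2 * k - 1) (i : Fin ℓ → Fin k) :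
    ¬ ∀ π : Equiv.Perm (∀ i, A i),
        ∃ g : Fin ℓ → Equiv.Perm (∀ i, A i),
          (∀ j : Fin ℓ, ∀ x, ∀ j' : Fin k, j' ≠ i j → g j x j' = x j') ∧
          π = ((List.ofFn g).reverse).prod := by
  classical
  intro h
  -- the two points
  let u : ∀ i, A i := fun i => Classical.arbitrary _
  let v : ∀ i, A i := fun i => (exists_ne (u i)).choose
  have huv : ∀ j, u j ≠ v j := fun j => Ne.symm (exists_ne (u j)).choose_spec
  have hne : u ≠ v := fun e => huv ⟨0, hk⟩ (congrFun e _)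
  obtain ⟨g, hg, hπeq⟩ := h (Equiv.swap u v)
  have hu : Equiv.swap u v u = v := Equiv.swap_apply_left u v
  have hv : Equiv.swap u v v = u := Equiv.swap_apply_right u v
  have hfix : ∀ x, x ≠ u → x ≠ v → Equiv.swap u v x = x :=
    fun x h1 h2 => Equiv.swap_apply_of_ne_of_ne h1 h2
  -- pigeonhole: some coordinate occurs at most once
  obtain ⟨m, hm⟩ : ∃ m : Fin k, (Finset.univ.filter fun j => i j = m).card ≤ 1 := by
    by_contra hc
    push_neg at hc
    have hsum : (Finset.univ : Finset (Fin ℓ)).card =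
        ∑ m : Fin k, (Finset.univ.filter fun j => i j = m).card :=
      Finset.card_eq_sum_card_fiberwise (fun j _ => Finset.mem_univ _)
    have h2k : 2 * k ≤ ℓ := by
      calc 2 * k = ∑ _m : Fin k, 2 := by simp [mul_comm]
        _ ≤ ∑ m : Fin k, (Finset.univ.filter fun j => i j = m).card :=
            Finset.sum_le_sum fun m _ => hc m
        _ = ℓ := by rw [← hsum]; simp
    omega
  set l : List (Equiv.Perm (∀ i, A i)) := List.ofFn g with hl
  rcases Finset.eq_empty_or_nonempty (Finset.univ.filter fun j => i j = m) with he | ⟨t, ht⟩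
  · -- m never occurs
    have hnm : ∀ j, i j ≠ m := by
      intro j hj
      have : j ∈ Finset.univ.filter fun j => i j = m := by simp [hj]
      simp [he] at this
    have hpres : ∀ x, (l.reverse).prod x m = x m := by
      apply prod_pres
      intro p hp x
      rw [List.mem_reverse, hl, List.mem_ofFn] at hp
      obtain ⟨j, rfl⟩ := hp
      exact hg j x m (Ne.symm (hnm j))
    have := hpres u
    rw [← hπeq, hu] at this
    exact huv m this.symm
  · -- m occurs exactly once, at t
    rw [Finset.mem_filter] at ht
    have hfib : ∀ j, i j = m → j = t := by
      intro j hj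
      exact Finset.card_le_one.mp hm j (by simp [hj]) t (by simp [ht.2])
    have hlen : l.length = ℓ := List.length_ofFn
    have htl : t.1 < l.length := by rw [hlen]; exact t.2
    have hsplit : l = l.take t.1 ++ l[t.1] :: l.drop (t.1 + 1) := by
      conv_lhs => rw [← List.take_append_drop t.1 l]
      rw [List.drop_eq_getElem_cons htl]
    have hgt : l[t.1] = g t := by
      simp [hl, List.getElem_ofFn]
    set Q : Equiv.Perm (∀ i, A i) := ((l.take t.1).reverse).prod with hQdef
    set R : Equiv.Perm (∀ i, A i) := ((l.drop (t.1 + 1)).reverse).prod with hRdef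
    have hprodeq : (l.reverse).prod = R * (g t * Q) := by
      conv_lhs => rw [hsplit]
      rw [List.reverse_append, List.reverse_cons, List.prod_append, List.prod_append,
        List.prod_singleton, hgt, hQdef, hRdef, mul_assoc]
    have hπ : ∀ x, Equiv.swap u v x = R (g t (Q x)) := by
      intro x
      rw [hπeq, hprodeq]
      rfl
    -- membership descriptions
    have htake : ∀ p ∈ l.take t.1, ∃ j : Fin ℓ, j.1 < t.1 ∧ p = g j := by
      intro p hp
      obtain ⟨n, hn, hpn⟩ := List.mem_iff_getElem.mp hp
      rw [List.length_take, hlen] at hn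
      have hn1 : n < t.1 := lt_of_lt_of_le hn (min_le_left _ _)
      have hn2 : n < ℓ := lt_trans hn1 t.2
      refine ⟨⟨n, hn2⟩, hn1, ?_⟩
      rw [← hpn, List.getElem_take]
      simp [hl, List.getElem_ofFn]
    have hdrop : ∀ p ∈ l.drop (t.1 + 1), ∃ j : Fin ℓ, t.1 < j.1 ∧ p = g j := by
      intro p hp
      obtain ⟨n, hn, hpn⟩ := List.mem_iff_getElem.mp hp
      rw [List.length_drop, hlen] at hn
      have hn2 : t.1 + 1 + n < ℓ := by omega
      refine ⟨⟨t.1 + 1 + n, hn2⟩, show t.1 < t.1 + 1 + n by omega, ?_⟩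
      rw [← hpn, List.getElem_drop]
      simp [hl, List.getElem_ofFn]
    -- Q and R preserve coordinate m
    have hQm : ∀ x, Q x m = x m := by
      apply prod_pres
      intro p hp x
      rw [List.mem_reverse] at hp
      obtain ⟨j, hj, rfl⟩ := htake p hp
      refine hg j x m (fun hc => ?_)
      have := hfib j hc.symm
      omega
    have hRm : ∀ x, R x m = x m := by
      apply prod_pres
      intro p hp x
      rw [List.mem_reverse] at hp
      obtain ⟨j, hj, rfl⟩ := hdrop p hp
      refine hg j x m (fun hc => ?_)
      have := hfib j hc.symm
      omega
    have hgm : ∀ x (j' : Fin k), j' ≠ m → g t x j' = x j' := by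
      intro x j' hj'
      exact hg t x j' (by rw [ht.2]; exact hj')
    -- choose the short side and a coordinate m' avoided there
    rcases (by omega : t.1 + 1 ≤ k - 1 ∨ ℓ - t.1 ≤ k - 1) with hshort | hshort
    · -- prefix short: find m' ≠ m avoiding the prefix
      obtain ⟨m', hm'B⟩ : ∃ m' : Fin k,
          m' ∉ insert m ((Finset.univ.filter (fun j : Fin ℓ => j.1 < t.1)).image i) := by
        by_contra hc
        push_neg at hc
        have h1 := Finset.card_le_card
          (fun x _ => hc x : (Finset.univ : Finset (Fin k)) ⊆ _)
        have h2 : ((Finset.univ.filter (fun j : Fin ℓ => j.1 < t.1)).image i).card ≤ t.1 := by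
          refine le_trans Finset.card_image_le (le_trans
            (Finset.card_le_card (fun j hj => ?_ : _ ⊆ Finset.Iio t)) ?_)
          · rw [Finset.mem_filter] at hj
            exact Finset.mem_Iio.mpr hj.2
          · rw [Fin.card_Iio]
        have h3 := Finset.card_insert_le m
          ((Finset.univ.filter (fun j : Fin ℓ => j.1 < t.1)).image i)
        rw [Finset.card_univ, Fintype.card_fin] at h1
        omega
      rw [Finset.mem_insert, not_or] at hm'B
      have hm'm : m' ≠ m := hm'B.1
      have hm'pre : ∀ j : Fin ℓ, j.1 < t.1 → i j ≠ m' := by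
        intro j hj hc
        exact hm'B.2 (Finset.mem_image.mpr ⟨j, by simp only [Finset.mem_filter, Finset.mem_univ, true_and]; exact hj, hc⟩)
      have hQm' : ∀ x, Q x m' = x m' := by
        apply prod_pres
        intro p hp x
        rw [List.mem_reverse] at hp
        obtain ⟨j, hj, rfl⟩ := htake p hp
        exact hg j x m' (Ne.symm (hm'pre j hj))
      have hswapinv : Equiv.swap u v = Q⁻¹ * ((g t)⁻¹ * R⁻¹) := by
        calc Equiv.swap u v = (Equiv.swap u v)⁻¹ := (Equiv.swap_inv u v).symm
          _ = (R * (g t * Q))⁻¹ := by rw [hπeq, hprodeq]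
          _ = Q⁻¹ * ((g t)⁻¹ * R⁻¹) := by
              rw [mul_inv_rev, mul_inv_rev, mul_assoc]
      have hπ' : ∀ x, Equiv.swap u v x = Q⁻¹ ((g t)⁻¹ (R⁻¹ x)) := by
        intro x
        rw [hswapinv]
        rfl
      exact key_lemma m m' hm'm u v huv (Equiv.swap u v) R⁻¹ (g t)⁻¹ Q⁻¹ hu hv hfix
        (inv_pres m R hRm)
        (fun x j' hj' => inv_pres j' (g t) (fun y => hgm y j' hj') x)
        (inv_pres m Q hQm) (inv_pres m' Q hQm') hπ'
    · -- suffix short: find m' ≠ m avoiding the suffix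
      obtain ⟨m', hm'B⟩ : ∃ m' : Fin k,
          m' ∉ insert m ((Finset.univ.filter (fun j : Fin ℓ => t.1 < j.1)).image i) := by
        by_contra hc
        push_neg at hc
        have h1 := Finset.card_le_card
          (fun x _ => hc x : (Finset.univ : Finset (Fin k)) ⊆ _)
        have h2 : ((Finset.univ.filter (fun j : Fin ℓ => t.1 < j.1)).image i).card ≤
            ℓ - 1 - t.1 := by
          refine le_trans Finset.card_image_le (le_trans
            (Finset.card_le_card (fun j hj => ?_ : _ ⊆ Finset.Ioi t)) ?_)
          · rw [Finset.mem_filter] at hj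
            exact Finset.mem_Ioi.mpr hj.2
          · rw [Fin.card_Ioi]
        have h3 := Finset.card_insert_le m
          ((Finset.univ.filter (fun j : Fin ℓ => t.1 < j.1)).image i)
        rw [Finset.card_univ, Fintype.card_fin] at h1
        have htk := t.2
        omega
      rw [Finset.mem_insert, not_or] at hm'B
      have hm'm : m' ≠ m := hm'B.1
      have hm'suf : ∀ j : Fin ℓ, t.1 < j.1 → i j ≠ m' := by
        intro j hj hc
        exact hm'B.2 (Finset.mem_image.mpr ⟨j, by simp only [Finset.mem_filter, Finset.mem_univ, true_and]; exact hj, hc⟩)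
      have hRm' : ∀ x, R x m' = x m' := by
        apply prod_pres
        intro p hp x
        rw [List.mem_reverse] at hp
        obtain ⟨j, hj, rfl⟩ := hdrop p hp
        exact hg j x m' (Ne.symm (hm'suf j hj))
      exact key_lemma m m' hm'm u v huv (Equiv.swap u v) Q (g t) R hu hv hfix
        hQm hgm hRm hRm' hπ
end

section
/- Let k ≥ 1, let A_1, …, A_k be finite sets each of cardinality at least 2, let X = A_1 × ⋯ × A_k, and for each i let G_i ≤ Sym(X) be the subgroup of permutations that modify only the i-th coordinate. Let i_1, …, i_ℓ be any sequence of indices in {1, …, k} in which there exist two distinct indices a ≠ b that each occur at most once in the sequence. Then not every permutation of X is of the form g_ℓ ∘ g_{ℓ−1} ∘ ⋯ ∘ g_1 with g_j ∈ G_{i_j} for each j; that is, Sym(X) ≠ G_{i_ℓ} ⋯ G_{i_1}. -/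
section Aux

variable {k : ℕ} {A : Fin k → Type*}

private lemma list_prod_fix (c : Fin k) (L : List (Equiv.Perm (∀ i, A i)))
    (h : ∀ f ∈ L, ∀ x, f x c = x c) : ∀ x, L.prod x c = x c := by
  induction L with
  | nil => intro x; simp
  | cons a t ih =>
    intro x
    rw [List.prod_cons]
    simp only [Equiv.Perm.mul_apply]
    rw [h a List.mem_cons_self _, ih (fun f hf => h f (List.mem_cons_of_mem _ hf)) x]

private lemma key [DecidableEq (∀ i, A i)] [∀ i, Finite (A i)] (p q : Fin k) (π₁ π₂ : Equiv.Perm (∀ i, A i))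
    (h1 : ∀ x, π₁ x q = x q) (h2 : ∀ x, π₂ x p = x p)
    (x0 x1 : ∀ i, A i) (hxp : x0 p ≠ x1 p) (hxq : x0 q ≠ x1 q) :
    π₂ * π₁ ≠ Equiv.swap x0 x1 := by
  classical
  intro heq
  set S2 : Set (∀ i, A i) := {x | x q = x0 q ∧ x p = x1 p} with hS2
  have hcard : {x | x q = x0 q ∧ (π₂ * π₁) x p = x1 p}.ncard = S2.ncard := by
    have h3 : {x | x q = x0 q ∧ (π₂ * π₁) x p = x1 p} = ⇑π₁.symm '' S2 := by
      rw [Equiv.image_eq_preimage_symm]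
      ext x
      simp only [Set.mem_setOf_eq, Set.mem_preimage, Equiv.symm_symm, hS2,
        Equiv.Perm.mul_apply]
      rw [h2, h1]
    rw [h3, Set.ncard_image_of_injective _ π₁.symm.injective]
  have hins : {x | x q = x0 q ∧ (π₂ * π₁) x p = x1 p} = insert x0 S2 := by
    rw [heq]
    ext x
    simp only [Set.mem_setOf_eq, Set.mem_insert_iff, hS2]
    constructor
    · rintro ⟨hq', hp'⟩
      by_cases hx0 : x = x0
      · exact Or.inl hx0
      · have hx1 : x ≠ x1 := fun h => hxq ((h ▸ hq').symm)
        rw [Equiv.swap_apply_of_ne_of_ne hx0 hx1] at hp'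
        exact Or.inr ⟨hq', hp'⟩
    · rintro (rfl | ⟨hq', hp'⟩)
      · exact ⟨rfl, by rw [Equiv.swap_apply_left]⟩
      · have hx0 : x ≠ x0 := fun h => hxp (h ▸ hp')
        have hx1 : x ≠ x1 := fun h => hxq ((h ▸ hq').symm)
        rw [Equiv.swap_apply_of_ne_of_ne hx0 hx1]
        exact ⟨hq', hp'⟩
  have hnm : x0 ∉ S2 := fun h => hxp h.2
  rw [hins, Set.ncard_insert_of_notMem hnm (Set.toFinite _)] at hcard
  omega

private lemma aux {ℓ : ℕ} (A : Fin k → Type*) [∀ i, Finite (A i)] [∀ i, Nontrivial (A i)]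
    (i : Fin ℓ → Fin k) (p q : Fin k) (hpq : p ≠ q)
    (s : ℕ) (hs1 : ∀ j : Fin ℓ, (j : ℕ) < s → i j ≠ q)
    (hs2 : ∀ j : Fin ℓ, s ≤ (j : ℕ) → i j ≠ p) :
    ¬ ∀ π : Equiv.Perm (∀ i, A i),
        ∃ g : Fin ℓ → Equiv.Perm (∀ i, A i),
          (∀ j : Fin ℓ, ∀ x, ∀ j' : Fin k, j' ≠ i j → g j x j' = x j') ∧
          π = ((List.ofFn g).reverse).prod := by
  classical
  intro H
  have hne : ∀ m, Nonempty (A m) := fun m => inferInstance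
  let x0 : ∀ m, A m := fun m => Classical.arbitrary _
  obtain ⟨a1, ha1⟩ := exists_ne (x0 p)
  obtain ⟨b1, hb1⟩ := exists_ne (x0 q)
  let x1 : ∀ m, A m := Function.update (Function.update x0 p a1) q b1
  have hx1p : x1 p = a1 := by
    simp only [x1, Function.update]
    rw [dif_neg hpq]
    simp
  have hx1q : x1 q = b1 := by simp [x1]
  obtain ⟨g, hg, hprod⟩ := H (Equiv.swap x0 x1)
  have h1 : ∀ x, ((List.ofFn g).take s).reverse.prod x q = x q := by
    apply list_prod_fix
    intro f hf
    rw [List.mem_reverse] at hf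
    obtain ⟨m, hm, hfm⟩ := List.mem_iff_getElem.mp hf
    have hm2 : m < min s ℓ := by simpa using hm
    have hm' : m < ℓ := lt_of_lt_of_le hm2 (min_le_right _ _)
    have hms : m < s := lt_of_lt_of_le hm2 (min_le_left _ _)
    have hfg : f = g ⟨m, hm'⟩ := by rw [← hfm]; simp
    subst hfg
    intro x
    exact hg _ x q (Ne.symm (hs1 ⟨m, hm'⟩ hms))
  have h2 : ∀ x, ((List.ofFn g).drop s).reverse.prod x p = x p := by
    apply list_prod_fix
    intro f hf
    rw [List.mem_reverse] at hf
    obtain ⟨m, hm, hfm⟩ := List.mem_iff_getElem.mp hf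
    have hm2 : m < ℓ - s := by simpa using hm
    have hm' : s + m < ℓ := by omega
    have hfg : f = g ⟨s + m, hm'⟩ := by
      rw [← hfm, ← List.getElem_drop' (xs := List.ofFn g) (i := s) (j := m) (by simp; omega)]
      simp
    subst hfg
    intro x
    exact hg _ x p (Ne.symm (hs2 ⟨s + m, hm'⟩ (by simp)))
  have hdecomp : (List.ofFn g).reverse.prod =
      ((List.ofFn g).drop s).reverse.prod * ((List.ofFn g).take s).reverse.prod := by
    conv_lhs => rw [← List.take_append_drop s (List.ofFn g)]
    rw [List.reverse_append, List.prod_append]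
  refine key p q ((List.ofFn g).take s).reverse.prod ((List.ofFn g).drop s).reverse.prod
    h1 h2 x0 x1 (by rw [hx1p]; exact Ne.symm ha1) (by rw [hx1q]; exact Ne.symm hb1) ?_
  rw [← hdecomp, ← hprod]

end Aux

/-- For a product `X = A₁ × ⋯ × A_k` of finite sets each with at least two elements,
if `i₁, …, i_ℓ` is a sequence of indices in which two distinct indices `p ≠ q` each
occur at most once, then not every permutation `π` of `X` can be written as
`g_ℓ ∘ ⋯ ∘ g_1` with `g_j ∈ G_{i_j}` (where `G_i` is the subgroup of permutations
modifying only the `i`-th coordinate).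
(Here `(List.ofFn g).reverse.prod = g_ℓ * ⋯ * g_1`, with `*` denoting composition.) -/
theorem finite_product_alternation_two_rare_indices (k : ℕ) (hk : 1 ≤ k)
    (A : Fin k → Type*) [∀ i, Finite (A i)] [∀ i, Nontrivial (A i)]
    (ℓ : ℕ) (i : Fin ℓ → Fin k) (p q : Fin k) (hpq : p ≠ q)
    (hp : (Finset.univ.filter fun j : Fin ℓ => i j = p).card ≤ 1)
    (hq : (Finset.univ.filter fun j : Fin ℓ => i j = q).card ≤ 1) :
    ¬ ∀ π : Equiv.Perm (∀ i, A i),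
        ∃ g : Fin ℓ → Equiv.Perm (∀ i, A i),
          (∀ j : Fin ℓ, ∀ x, ∀ j' : Fin k, j' ≠ i j → g j x j' = x j') ∧
          π = ((List.ofFn g).reverse).prod := by
  have uniqP : ∀ j j' : Fin ℓ, i j = p → i j' = p → j = j' := by
    intro j j' h h'
    exact Finset.card_le_one.mp hp j (by simp [h]) j' (by simp [h'])
  have uniqQ : ∀ j j' : Fin ℓ, i j = q → i j' = q → j = j' := by
    intro j j' h h'
    exact Finset.card_le_one.mp hq j (by simp [h]) j' (by simp [h'])
  by_cases hP : ∃ jp : Fin ℓ, i jp = p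
  · by_cases hQ : ∃ jq : Fin ℓ, i jq = q
    · obtain ⟨jp, hjp⟩ := hP
      obtain ⟨jq, hjq⟩ := hQ
      have hnejj : (jp : ℕ) ≠ (jq : ℕ) := by
        intro h
        exact hpq (by rw [← hjp, ← hjq]; congr 1; exact Fin.ext h)
      rcases lt_or_gt_of_ne hnejj with hlt | hgt
      · refine aux A i p q hpq ((jp : ℕ) + 1) ?_ ?_
        · intro j hj hc
          have := uniqQ j jq hc hjq
          subst this
          omega
        · intro j hj hc
          have := uniqP j jp hc hjp
          subst this
          omega
      · refine aux A i q p hpq.symm ((jq : ℕ) + 1) ?_ ?_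
        · intro j hj hc
          have := uniqP j jp hc hjp
          subst this
          omega
        · intro j hj hc
          have := uniqQ j jq hc hjq
          subst this
          omega
    · push_neg at hQ
      exact aux A i q p hpq.symm 0 (by omega) (fun j _ => hQ j)
  · push_neg at hP
    exact aux A i p q hpq 0 (by omega) (fun j _ => hP j)
end

section
/- Let k ≥ 1, let A_1, …, A_k be arbitrary sets, let X = A_1 × ⋯ × A_k, and let Sym_0(X) be the group of permutations of X with finite support (those π with {x : π(x) ≠ x} finite). For each i let G_i ≤ Sym_0(X) be the subgroup of finite-support permutations that modify only the i-th coordinate. Then Sym_0(X) = G_k · G_{k−1} ⋯ G_2 · G_1 · G_2 ⋯ G_{k−1} · G_k; that is, every finite-support permutation π of X can be written as π = a_k ∘ ⋯ ∘ a_2 ∘ a_1 ∘ b_2 ∘ ⋯ ∘ b_k with a_i ∈ G_i for 1 ≤ i ≤ k and b_i ∈ G_i for 2 ≤ i ≤ k. -/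
open Finset

lemma koenig {α V : Type*} [DecidableEq α] [DecidableEq V] :
    ∀ (r : ℕ) (E : Finset α) (f g : α → V),
    (∀ v, (E.filter fun e => f e = v).card = (E.filter fun e => g e = v).card) →
    (∀ v, (E.filter fun e => f e = v).card = 0 ∨ (E.filter fun e => f e = v).card = r) →
    ∃ col : α → ℕ, (∀ e ∈ E, col e < r) ∧
      (∀ e ∈ E, ∀ e' ∈ E, f e = f e' → col e = col e' → e = e') ∧
      (∀ e ∈ E, ∀ e' ∈ E, g e = g e' → col e = col e' → e = e') := by
  intro r
  induction r with
  | zero =>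
    intro E f g hfg hcard
    have hE : E = ∅ := by
      by_contra h
      obtain ⟨e, he⟩ := Finset.nonempty_iff_ne_empty.mpr h
      have h1 : e ∈ E.filter fun e' => f e' = f e := by simp [he]
      have h2 := hcard (f e)
      simp only [or_self] at h2
      rw [Finset.card_eq_zero] at h2
      rw [h2] at h1
      exact absurd h1 (Finset.notMem_empty e)
    subst hE
    exact ⟨fun _ => 0, by simp, by simp, by simp⟩
  | succ r ih =>
    intro E f g hfg hcard
    rcases eq_or_ne E ∅ with rfl | hEne
    · exact ⟨fun _ => 0, by simp, by simp, by simp⟩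
    -- fibers of f over the image have card r+1
    set V0 : Finset V := E.image f with hV0
    have hcf : ∀ v ∈ V0, (E.filter fun e => f e = v).card = r + 1 := by
      intro v hv
      rcases hcard v with h | h
      · exfalso
        obtain ⟨e, he, rfl⟩ := Finset.mem_image.mp hv
        have : e ∈ E.filter fun e' => f e' = f e := by simp [he]
        rw [Finset.card_eq_zero] at h
        rw [h] at this
        exact absurd this (Finset.notMem_empty e)
      · exact h
    have key : ∀ (h : α → V) (v : V), v ∈ E.image h ↔ (E.filter fun e => h e = v).card ≠ 0 := by
      intro h v
      rw [Ne, Finset.card_eq_zero, Finset.filter_eq_empty_iff]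
      push_neg
      simp [Finset.mem_image]
    have himg : E.image g = V0 := by
      ext v
      rw [key g, ← hfg, ← key f]
    -- Hall's condition
    set t : {v // v ∈ V0} → Finset V := fun v => (E.filter fun e => f e = v.val).image g with ht
    have hall : ∀ s : Finset {v // v ∈ V0}, s.card ≤ (s.biUnion t).card := by
      intro s
      set B := s.biUnion t with hB
      set Es := E.filter (fun e => f e ∈ s.image Subtype.val) with hEs
      have hcount1 : Es.card = (r + 1) * s.card := by
        rw [Finset.card_eq_sum_card_fiberwise (f := f) (s := Es) (t := s.image Subtype.val)
          (fun e he => (Finset.mem_filter.mp he).2)]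
        have : ∀ v ∈ s.image Subtype.val, (Es.filter fun e => f e = v).card = r + 1 := by
          intro v hv
          have hv0 : v ∈ V0 := by
            obtain ⟨w, _, rfl⟩ := Finset.mem_image.mp hv
            exact w.2
          rw [← hcf v hv0]
          congr 1
          ext e
          simp only [hEs, Finset.mem_filter, and_assoc]
          constructor
          · rintro ⟨h1, _, h3⟩; exact ⟨h1, h3⟩
          · rintro ⟨h1, h3⟩; exact ⟨h1, h3 ▸ hv, h3⟩
        rw [Finset.sum_congr rfl this, Finset.sum_const, smul_eq_mul,
          Finset.card_image_of_injective _ Subtype.val_injective, mul_comm]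
      have hsub : Es ⊆ E.filter (fun e => g e ∈ B) := by
        intro e he
        obtain ⟨he1, he2⟩ := Finset.mem_filter.mp he
        obtain ⟨w, hw, hwe⟩ := Finset.mem_image.mp he2
        refine Finset.mem_filter.mpr ⟨he1, Finset.mem_biUnion.mpr ⟨w, hw, ?_⟩⟩
        exact Finset.mem_image.mpr ⟨e, Finset.mem_filter.mpr ⟨he1, hwe.symm⟩, rfl⟩
      have hcount2 : (E.filter (fun e => g e ∈ B)).card ≤ B.card * (r + 1) := by
        rw [Finset.card_eq_sum_card_fiberwise (f := g) (s := E.filter (fun e => g e ∈ B)) (t := B)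
          (fun e he => (Finset.mem_filter.mp he).2)]
        calc ∑ w ∈ B, ((E.filter (fun e => g e ∈ B)).filter fun e => g e = w).card
            ≤ ∑ w ∈ B, (r + 1) := by
              refine Finset.sum_le_sum fun w _ => ?_
              calc ((E.filter (fun e => g e ∈ B)).filter fun e => g e = w).card
                  ≤ (E.filter fun e => g e = w).card := by
                    apply Finset.card_le_card
                    intro e he
                    simp only [Finset.mem_filter] at he ⊢
                    exact ⟨he.1.1, he.2⟩
                _ ≤ r + 1 := by
                    rw [← hfg w]
                    rcases hcard w with h | h <;> omega
          _ = B.card * (r + 1) := by rw [Finset.sum_const, smul_eq_mul]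
      have := (Finset.card_le_card hsub).trans hcount2
      rw [hcount1] at this
      have := le_trans (Nat.mul_le_mul_left (r+1) (le_refl s.card)) this
      nlinarith [this]
    obtain ⟨m, hminj, hmem⟩ := (Finset.all_card_le_biUnion_card_iff_exists_injective t).mp hall
    -- pick an edge for each vertex of V0
    have hed : ∀ v : {v // v ∈ V0}, ∃ e, e ∈ E ∧ f e = v.val ∧ g e = m v := by
      intro v
      obtain ⟨e, he, hge⟩ := Finset.mem_image.mp (hmem v)
      obtain ⟨he1, he2⟩ := Finset.mem_filter.mp he
      exact ⟨e, he1, he2, hge⟩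
    choose ed hed1 hed2 hed3 using hed
    have hedinj : Function.Injective ed := by
      intro v w h
      apply Subtype.ext
      rw [← hed2 v, ← hed2 w, h]
    -- m maps into V0, hence is a bijection onto V0
    have hmV0 : ∀ v, m v ∈ V0 := by
      intro v
      rw [← himg]
      exact Finset.mem_image.mpr ⟨ed v, hed1 v, hed3 v⟩
    have hmsurj : ∀ v ∈ V0, ∃ w, m w = v := by
      have : Function.Surjective (fun v : {v // v ∈ V0} => (⟨m v, hmV0 v⟩ : {v // v ∈ V0})) := by
        apply Finite.injective_iff_surjective.mp
        intro v w h
        exact hminj (congrArg Subtype.val h)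
      intro v hv
      obtain ⟨w, hw⟩ := this ⟨v, hv⟩
      exact ⟨w, congrArg Subtype.val hw⟩
    set M : Finset α := V0.attach.image ed with hM
    have hMsub : M ⊆ E := by
      intro e he
      obtain ⟨v, _, rfl⟩ := Finset.mem_image.mp he
      exact hed1 v
    -- each f-fiber and g-fiber of M on V0 has exactly one element
    have hMf : ∀ (v) (hv : v ∈ V0), M.filter (fun e => f e = v) = {ed ⟨v, hv⟩} := by
      intro v hv
      ext e
      simp only [Finset.mem_filter, hM, Finset.mem_image, Finset.mem_attach, true_and,
        Finset.mem_singleton]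
      constructor
      · rintro ⟨⟨w, rfl⟩, hfe⟩
        congr 1
        apply Subtype.ext
        rw [← hed2 w]; exact hfe
      · rintro rfl
        exact ⟨⟨_, rfl⟩, hed2 _⟩
    have hMf0 : ∀ v, v ∉ V0 → M.filter (fun e => f e = v) = ∅ := by
      intro v hv
      rw [Finset.filter_eq_empty_iff]
      rintro e he
      obtain ⟨w, _, rfl⟩ := Finset.mem_image.mp he
      rw [hed2 w]
      rintro rfl
      exact hv w.2
    have hMg : ∀ v ∈ V0, (M.filter (fun e => g e = v)).card = 1 := by
      intro v hv
      obtain ⟨w, rfl⟩ := hmsurj v hv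
      rw [Finset.card_eq_one]
      refine ⟨ed w, ?_⟩
      ext e
      simp only [Finset.mem_filter, hM, Finset.mem_image, Finset.mem_attach, true_and,
        Finset.mem_singleton]
      constructor
      · rintro ⟨⟨u, rfl⟩, hge⟩
        congr 1
        apply hminj
        rw [← hed3 u]; exact hge
      · rintro rfl
        exact ⟨⟨_, rfl⟩, hed3 _⟩
    have hMg0 : ∀ v, v ∉ V0 → M.filter (fun e => g e = v) = ∅ := by
      intro v hv
      rw [Finset.filter_eq_empty_iff]
      rintro e he
      obtain ⟨w, _, rfl⟩ := Finset.mem_image.mp he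
      rw [hed3 w]
      rintro rfl
      exact hv (hmV0 w)
    -- the remaining edges
    set E' : Finset α := E \ M with hE'
    have hfilt : ∀ (h : α → V) (v : V),
        (E'.filter fun e => h e = v) = (E.filter fun e => h e = v) \ (M.filter fun e => h e = v) := by
      intro h v
      ext e
      simp only [hE', Finset.mem_filter, Finset.mem_sdiff]
      tauto
    have hfiltcard : ∀ (h : α → V) (v : V),
        (E'.filter fun e => h e = v).card
          = (E.filter fun e => h e = v).card - (M.filter fun e => h e = v).card := by
      intro h v
      rw [hfilt h v, Finset.card_sdiff_of_subset]
      exact Finset.filter_subset_filter _ hMsub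
    have hfg' : ∀ v, (E'.filter fun e => f e = v).card = (E'.filter fun e => g e = v).card := by
      intro v
      rw [hfiltcard, hfiltcard, hfg v]
      by_cases hv : v ∈ V0
      · rw [hMg v hv, hMf v hv, Finset.card_singleton]
      · rw [hMg0 v hv, hMf0 v hv]
    have hcard' : ∀ v, (E'.filter fun e => f e = v).card = 0 ∨ (E'.filter fun e => f e = v).card = r := by
      intro v
      rw [hfiltcard]
      by_cases hv : v ∈ V0
      · rw [hMf v hv, Finset.card_singleton, hcf v hv]
        right; omega
      · left
        rcases hcard v with h | h
        · omega
        · exfalso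
          apply hv
          have : (E.filter fun e => f e = v).Nonempty := by
            rw [← Finset.card_pos, h]; omega
          obtain ⟨e, he⟩ := this
          obtain ⟨he1, he2⟩ := Finset.mem_filter.mp he
          exact Finset.mem_image.mpr ⟨e, he1, he2⟩
    obtain ⟨col', hcol'1, hcol'2, hcol'3⟩ := ih E' f g hfg' hcard'
    refine ⟨fun e => if e ∈ M then r else col' e, ?_, ?_, ?_⟩
    · intro e he
      by_cases hM' : e ∈ M
      · simp [hM']
      · have : e ∈ E' := Finset.mem_sdiff.mpr ⟨he, hM'⟩
        simp only [hM', if_false]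
        exact lt_trans (hcol'1 e this) (Nat.lt_succ_self r)
    · intro e he e' he' hfe hcol
      by_cases h1 : e ∈ M <;> by_cases h2 : e' ∈ M <;>
        simp only [h1, h2, if_true, if_false] at hcol
      · obtain ⟨v, _, rfl⟩ := Finset.mem_image.mp h1
        obtain ⟨w, _, rfl⟩ := Finset.mem_image.mp h2
        congr 1
        apply Subtype.ext
        rw [← hed2 v, ← hed2 w, hfe]
      · exact absurd hcol.symm (Nat.ne_of_lt (hcol'1 e' (Finset.mem_sdiff.mpr ⟨he', h2⟩)))
      · exact absurd hcol (Nat.ne_of_lt (hcol'1 e (Finset.mem_sdiff.mpr ⟨he, h1⟩)))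
      · exact hcol'2 e (Finset.mem_sdiff.mpr ⟨he, h1⟩) e' (Finset.mem_sdiff.mpr ⟨he', h2⟩) hfe hcol
    · intro e he e' he' hge hcol
      by_cases h1 : e ∈ M <;> by_cases h2 : e' ∈ M <;>
        simp only [h1, h2, if_true, if_false] at hcol
      · obtain ⟨v, _, rfl⟩ := Finset.mem_image.mp h1
        obtain ⟨w, _, rfl⟩ := Finset.mem_image.mp h2
        congr 1
        apply hminj
        rw [← hed3 v, ← hed3 w, hge]
      · exact absurd hcol.symm (Nat.ne_of_lt (hcol'1 e' (Finset.mem_sdiff.mpr ⟨he', h2⟩)))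
      · exact absurd hcol (Nat.ne_of_lt (hcol'1 e (Finset.mem_sdiff.mpr ⟨he, h1⟩)))
      · exact hcol'3 e (Finset.mem_sdiff.mpr ⟨he, h1⟩) e' (Finset.mem_sdiff.mpr ⟨he', h2⟩) hge hcol

lemma supp_mul_subset {β : Type*} (σ ρ : Equiv.Perm β) :
    {x | (σ * ρ) x ≠ x} ⊆ {x | σ x ≠ x} ∪ {x | ρ x ≠ x} := by
  intro x hx
  by_cases h : ρ x = x
  · left
    simpa [Equiv.Perm.mul_apply, h] using hx
  · right; exact h

lemma supp_inv {β : Type*} (σ : Equiv.Perm β) :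
    {x | σ⁻¹ x ≠ x} = {x | σ x ≠ x} := by
  ext x
  simp only [Set.mem_setOf_eq, ne_eq]
  rw [not_iff_not]
  constructor
  · intro h
    conv_lhs => rw [← h]
    simp
  · intro h
    conv_lhs => rw [← h]
    simp

lemma grid_decomp {Y Z : Type*} (π : Equiv.Perm (Y × Z)) (hπ : {x | π x ≠ x}.Finite) :
    ∃ c τ d : Equiv.Perm (Y × Z),
      {x | c x ≠ x}.Finite ∧ {x | τ x ≠ x}.Finite ∧ {x | d x ≠ x}.Finite ∧
      (∀ p, (c p).1 = p.1) ∧ (∀ p, (d p).1 = p.1) ∧ (∀ p, (τ p).2 = p.2) ∧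
      π = c * τ * d := by
  classical
  set S : Finset (Y × Z) := hπ.toFinset with hS
  have hSmem : ∀ x, x ∈ S ↔ π x ≠ x := by
    intro x; simp [hS]
  set Y0 : Finset Y := S.image Prod.fst with hY0
  set Z0 : Finset Z := S.image Prod.snd with hZ0
  set G : Finset (Y × Z) := Y0 ×ˢ Z0 with hG
  have hSG : S ⊆ G := by
    intro x hx
    rw [hG, Finset.mem_product]
    exact ⟨Finset.mem_image.mpr ⟨x, hx, rfl⟩, Finset.mem_image.mpr ⟨x, hx, rfl⟩⟩
  have hfix : ∀ x, x ∉ G → π x = x := by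
    intro x hx
    by_contra h
    exact hx (hSG ((hSmem x).mpr h))
  have hπS : ∀ x, π x ∈ S ↔ x ∈ S := by
    intro x
    rw [hSmem, hSmem]
    constructor
    · intro h hc; rw [hc] at h; exact h hc
    · intro h hc
      exact h (π.injective hc)
  have hπG : ∀ x ∈ G, π x ∈ G := by
    intro x hx
    by_cases h : π x = x
    · rwa [h]
    · exact hSG ((hπS x).mpr ((hSmem x).mpr h))
  have hπG' : ∀ x ∈ G, π⁻¹ x ∈ G := by
    intro x hx
    by_cases h : π⁻¹ x = x
    · rwa [h]
    · have : π⁻¹ x ∈ S := by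
        rw [← hπS]
        simp only [Equiv.Perm.coe_inv, Equiv.apply_symm_apply]
        rw [hSmem]
        intro hc
        exact h (by conv_lhs => rw [← hc]; · simp)
      exact hSG this
  set r : ℕ := Z0.card with hr
  -- fiber counts
  have hcf : ∀ v : Y, (G.filter fun e => e.1 = v).card = if v ∈ Y0 then r else 0 := by
    intro v
    have : G.filter (fun e => e.1 = v) = (Y0.filter (fun y => y = v)) ×ˢ Z0 := by
      ext ⟨a, b⟩
      simp only [Finset.mem_filter, hG, Finset.mem_product]
      tauto
    rw [this, Finset.card_product]
    by_cases hv : v ∈ Y0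
    · have : Y0.filter (fun y => y = v) = {v} := by
        ext y; simp only [Finset.mem_filter, Finset.mem_singleton]
        constructor
        · exact fun h => h.2
        · rintro rfl; exact ⟨hv, rfl⟩
      rw [this]
      simp [hr, hv]
    · have : Y0.filter (fun y => y = v) = ∅ := by
        rw [Finset.filter_eq_empty_iff]
        rintro y hy rfl
        exact hv hy
      rw [this]
      simp [hv]
  have hcg : ∀ v : Y, (G.filter fun e => (π e).1 = v).card = (G.filter fun e => e.1 = v).card := by
    intro v
    apply Finset.card_bij (fun e _ => π e)
    · intro e he
      obtain ⟨he1, he2⟩ := Finset.mem_filter.mp he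
      exact Finset.mem_filter.mpr ⟨hπG e he1, he2⟩
    · intro e _ e' _ h
      exact π.injective h
    · intro e' he'
      obtain ⟨he1, he2⟩ := Finset.mem_filter.mp he'
      refine ⟨π⁻¹ e', Finset.mem_filter.mpr ⟨hπG' e' he1, ?_⟩, by simp⟩
      simp [he2]
  obtain ⟨col, hcol1, hcol2, hcol3⟩ := koenig r G Prod.fst (fun e => (π e).1)
    (fun v => (hcg v).symm) (fun v => by rw [hcf v]; split <;> simp)
  -- a bijection from colors to Z0
  have hZ0ne : ∀ p : Y × Z, p ∈ G → Z0.Nonempty := by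
    intro p hp
    rw [hG, Finset.mem_product] at hp
    exact ⟨p.2, hp.2⟩
  set ζ : Fin r → Z := fun i => Z0.equivFin.symm i
  have hζmem : ∀ i, ζ i ∈ Z0 := fun i => (Z0.equivFin.symm i).2
  have hζinj : Function.Injective ζ := by
    intro i j h
    have := Z0.equivFin.symm.injective (Subtype.ext h)
    exact this
  set χ : ∀ p : Y × Z, p ∈ G → Z := fun p hp => ζ ⟨col p, hcol1 p hp⟩ with hχ
  have hχmem : ∀ p hp, χ p hp ∈ Z0 := fun p hp => hζmem _
  have hχcol : ∀ p hp q hq, χ p hp = χ q hq → col p = col q := by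
    intro p hp q hq h
    have := hζinj h
    exact congrArg Fin.val this
  -- the two auxiliary functions
  set d0 : Y × Z → Y × Z := fun p => if hp : p ∈ G then (p.1, χ p hp) else p with hd0
  set M0 : Y × Z → Y × Z := fun p => if hp : p ∈ G then ((π p).1, χ p hp) else p with hM0
  have hd0app : ∀ p (hp : p ∈ G), d0 p = (p.1, χ p hp) := fun p hp => dif_pos hp
  have hM0app : ∀ p (hp : p ∈ G), M0 p = ((π p).1, χ p hp) := fun p hp => dif_pos hp
  have hd0fix : ∀ p, p ∉ G → d0 p = p := fun p hp => dif_neg hp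
  have hM0fix : ∀ p, p ∉ G → M0 p = p := fun p hp => dif_neg hp
  have hd0G : ∀ p (hp : p ∈ G), d0 p ∈ G := by
    intro p hp
    have hp' := hp
    rw [hG, Finset.mem_product] at hp'
    rw [hd0app p hp, hG, Finset.mem_product]
    exact ⟨hp'.1, hχmem p hp⟩
  have hM0G : ∀ p (hp : p ∈ G), M0 p ∈ G := by
    intro p hp
    have h2 := hπG p hp
    rw [hG, Finset.mem_product] at h2
    rw [hM0app p hp, hG, Finset.mem_product]
    exact ⟨h2.1, hχmem p hp⟩
  have hd0inj : Function.Injective d0 := by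
    intro p q h
    by_cases hp : p ∈ G <;> by_cases hq : q ∈ G
    · rw [hd0app p hp, hd0app q hq, Prod.mk.injEq] at h
      exact hcol2 p hp q hq h.1 (hχcol p hp q hq h.2)
    · exact absurd (h ▸ hd0G p hp) (by rwa [hd0fix q hq])
    · exact absurd (h ▸ hd0G q hq) (by rw [← h, hd0fix p hp] at *; rwa [← h])
    · rwa [hd0fix p hp, hd0fix q hq] at h
  have hM0inj : Function.Injective M0 := by
    intro p q h
    by_cases hp : p ∈ G <;> by_cases hq : q ∈ G
    · rw [hM0app p hp, hM0app q hq, Prod.mk.injEq] at h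
      exact hcol3 p hp q hq h.1 (hχcol p hp q hq h.2)
    · exact absurd (h ▸ hM0G p hp) (by rwa [hM0fix q hq])
    · exact absurd (h ▸ hM0G q hq) (by rw [← h, hM0fix p hp] at *; rwa [← h])
    · rwa [hM0fix p hp, hM0fix q hq] at h
  have hbij : ∀ u : Y × Z → Y × Z, Function.Injective u → (∀ p (hp : p ∈ G), u p ∈ G) →
      (∀ p, p ∉ G → u p = p) → Function.Bijective u := by
    intro u huinj huG hufix
    refine ⟨huinj, ?_⟩
    intro q
    by_cases hq : q ∈ G
    · have hsurj : Function.Surjective (fun p : {p // p ∈ G} => (⟨u p, huG p p.2⟩ : {p // p ∈ G})) := by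
        apply Finite.injective_iff_surjective.mp
        intro a b h
        exact Subtype.ext (huinj (congrArg Subtype.val h))
      obtain ⟨p, hp⟩ := hsurj ⟨q, hq⟩
      exact ⟨p, congrArg Subtype.val hp⟩
    · exact ⟨q, hufix q hq⟩
  set D : Equiv.Perm (Y × Z) := Equiv.ofBijective d0 (hbij d0 hd0inj hd0G hd0fix) with hD
  set Mp : Equiv.Perm (Y × Z) := Equiv.ofBijective M0 (hbij M0 hM0inj hM0G hM0fix) with hMp
  have hDapp : ∀ p, D p = d0 p := fun p => rfl
  have hMapp : ∀ p, Mp p = M0 p := fun p => rfl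
  have hsuppD : {x | D x ≠ x}.Finite := by
    apply Set.Finite.subset G.finite_toSet
    intro x hx
    by_contra h
    exact hx ((hDapp x).trans (hd0fix x h))
  have hsuppM : {x | Mp x ≠ x}.Finite := by
    apply Set.Finite.subset G.finite_toSet
    intro x hx
    by_contra h
    exact hx ((hMapp x).trans (hM0fix x h))
  refine ⟨π * Mp⁻¹, Mp * D⁻¹, D, ?_, ?_, hsuppD, ?_, ?_, ?_, ?_⟩
  · apply (hπ.union hsuppM).subset
    intro x hx
    rcases supp_mul_subset π Mp⁻¹ hx with h | h
    · exact Or.inl h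
    · right
      rwa [supp_inv] at h
  · apply (hsuppM.union hsuppD).subset
    intro x hx
    rcases supp_mul_subset Mp D⁻¹ hx with h | h
    · exact Or.inl h
    · right
      rwa [supp_inv] at h
  · -- c preserves first coordinate
    intro p
    have key2 : ∀ q, (M0 q).1 = (π q).1 := by
      intro q
      by_cases hq : q ∈ G
      · rw [hM0app q hq]
      · rw [hM0fix q hq, hfix q hq]
    have : (π (Mp⁻¹ p)).1 = (Mp (Mp⁻¹ p)).1 := by
      rw [hMapp, key2]
    simp only [Equiv.Perm.mul_apply]
    rw [this]
    simp
  · -- d preserves first coordinate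
    intro p
    rw [hDapp]
    by_cases hp : p ∈ G
    · rw [hd0app p hp]
    · rw [hd0fix p hp]
  · -- τ preserves second coordinate
    intro p
    have key : ∀ q, (M0 q).2 = (d0 q).2 := by
      intro q
      by_cases hq : q ∈ G
      · rw [hM0app q hq, hd0app q hq]
      · rw [hM0fix q hq, hd0fix q hq]
    have : (Mp (D⁻¹ p)).2 = (D (D⁻¹ p)).2 := by
      rw [hMapp, hDapp, key]
    simp only [Equiv.Perm.mul_apply]
    rw [this]
    simp
  · -- the factorization
    group
universe u

def finSnocEquiv {n : ℕ} {B : Fin (n + 1) → Type u} :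
    (∀ i, B i) ≃ (∀ j : Fin n, B j.castSucc) × B (Fin.last n) where
  toFun x := (Fin.init x, x (Fin.last n))
  invFun p := Fin.snoc p.1 p.2
  left_inv x := by simp [Fin.snoc_init_self]
  right_inv p := by simp [Fin.init_snoc, Fin.snoc_last]

def liftHom {n : ℕ} {B : Fin (n + 1) → Type u} :
    (∀ _ : B (Fin.last n), Equiv.Perm (∀ j : Fin n, B j.castSucc)) →* Equiv.Perm (∀ i, B i) where
  toFun F :=
    { toFun := fun x => Fin.snoc (F (x (Fin.last n)) (Fin.init x)) (x (Fin.last n))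
      invFun := fun x => Fin.snoc ((F (x (Fin.last n)))⁻¹ (Fin.init x)) (x (Fin.last n))
      left_inv := fun x => by
        simp [Fin.init_snoc, Fin.snoc_last, Fin.snoc_init_self]
      right_inv := fun x => by
        simp [Fin.init_snoc, Fin.snoc_last, Fin.snoc_init_self] }
  map_one' := by
    ext x
    simp [Fin.snoc_init_self]
  map_mul' F G := by
    ext x i
    simp [Fin.init_snoc, Fin.snoc_last]

lemma liftHom_apply {n : ℕ} {B : Fin (n + 1) → Type u}
    (F : ∀ _ : B (Fin.last n), Equiv.Perm (∀ j : Fin n, B j.castSucc)) (x : ∀ i, B i) :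
    liftHom F x = Fin.snoc (F (x (Fin.last n)) (Fin.init x)) (x (Fin.last n)) := rfl


/-- For a product `X = A₁ × ⋯ × A_k` of arbitrary sets, every finite-support
permutation of `X` can be written as `a_k ∘ ⋯ ∘ a_2 ∘ a_1 ∘ b_2 ∘ ⋯ ∘ b_k` where
`a_i, b_i` are finite-support permutations modifying only the `i`-th coordinate.
(Here `(List.ofFn a).reverse.prod = a_k * ⋯ * a_1` and
`((List.ofFn b).drop 1).prod = b_2 * ⋯ * b_k`, with `*` denoting composition.) -/
theorem finite_support_product_alternation (k : ℕ) (hk : 1 ≤ k) (A : Fin k → Type*)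
    (π : Equiv.Perm (∀ i, A i)) (hπ : {x | π x ≠ x}.Finite) :
    ∃ a b : Fin k → Equiv.Perm (∀ i, A i),
      (∀ i, {x | a i x ≠ x}.Finite) ∧
      (∀ i, {x | b i x ≠ x}.Finite) ∧
      (∀ i, ∀ x, ∀ j, j ≠ i → a i x j = x j) ∧
      (∀ i, ∀ x, ∀ j, j ≠ i → b i x j = x j) ∧
      π = ((List.ofFn a).reverse ++ (List.ofFn b).drop 1).prod := by
  induction k, hk using Nat.le_induction with
  | base =>
    refine ⟨fun _ => π, fun _ => 1, fun _ => hπ, fun _ => by simp, ?_, ?_, ?_⟩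
    · intro i x j hj
      exact absurd (Subsingleton.elim j i) hj
    · intro i x j hj
      exact absurd (Subsingleton.elim j i) hj
    · simp [List.ofFn_succ]
  | succ n hn IH =>
    classical
    -- notation
    set e := (finSnocEquiv (n := n) (B := A)) with he
    set π' := e.permCongr π with hπ'def
    have happ : ∀ σ' : Equiv.Perm ((∀ j : Fin n, A j.castSucc) × A (Fin.last n)),
        ∀ x, (e.permCongr.symm σ') x = e.symm (σ' (e x)) := by
      intro σ' x
      simp [Equiv.permCongr_symm, Equiv.permCongr_apply]
    have hmul : ∀ σ ρ : Equiv.Perm ((∀ j : Fin n, A j.castSucc) × A (Fin.last n)),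
        e.permCongr.symm (σ * ρ) = e.permCongr.symm σ * e.permCongr.symm ρ := by
      intro σ ρ
      ext x
      simp only [happ, Equiv.Perm.mul_apply, Equiv.apply_symm_apply]
    have hfin : ∀ σ' : Equiv.Perm ((∀ j : Fin n, A j.castSucc) × A (Fin.last n)),
        {p | σ' p ≠ p}.Finite → {x | (e.permCongr.symm σ') x ≠ x}.Finite := by
      intro σ' hσ'
      have : {x | (e.permCongr.symm σ') x ≠ x} = (fun x => e x) ⁻¹' {p | σ' p ≠ p} := by
        ext x
        simp only [Set.mem_setOf_eq, Set.mem_preimage, happ]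
        constructor
        · intro h hc
          exact h (by rw [hc]; exact e.symm_apply_apply x)
        · intro h hc
          apply h
          have := congrArg e hc
          rwa [e.apply_symm_apply] at this
      rw [this]
      exact hσ'.preimage (e.injective.injOn)
    have hπ'fin : {p | π' p ≠ p}.Finite := by
      have : {p | π' p ≠ p} = (fun p => e.symm p) ⁻¹' {x | π x ≠ x} := by
        ext p
        simp only [Set.mem_setOf_eq, Set.mem_preimage, hπ'def, Equiv.permCongr_apply]
        constructor
        · intro h hc
          exact h (by rw [hc]; exact e.apply_symm_apply p)
        · intro h hc
          apply h
          have := congrArg e.symm hc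
          rwa [e.symm_apply_apply] at this
      rw [this]
      exact hπ.preimage (e.symm.injective.injOn)
    obtain ⟨c', τ', d', hc'f, hτ'f, hd'f, hc'1, hd'1, hτ'2, hfac⟩ := grid_decomp π' hπ'fin
    have hτ'2inv : ∀ p, (τ'⁻¹ p).2 = p.2 := by
      intro p
      have h := hτ'2 (τ'⁻¹ p)
      rw [Equiv.Perm.coe_inv, Equiv.apply_symm_apply] at h
      exact h.symm
    -- fiberwise permutations of the first n coordinates
    set τz : ∀ _ : A (Fin.last n), Equiv.Perm (∀ j : Fin n, A j.castSucc) := fun z =>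
      { toFun := fun y => (τ' (y, z)).1
        invFun := fun y => (τ'⁻¹ (y, z)).1
        left_inv := fun y => by
          have h1 : ((τ' (y, z)).1, z) = τ' (y, z) := Prod.ext rfl (hτ'2 (y, z)).symm
          simp only [h1, Equiv.Perm.coe_inv, Equiv.symm_apply_apply]
        right_inv := fun y => by
          have h1 : ((τ'⁻¹ (y, z)).1, z) = τ'⁻¹ (y, z) := Prod.ext rfl (hτ'2inv (y, z)).symm
          simp only [h1]; simp only [Equiv.Perm.coe_inv, Equiv.apply_symm_apply] } with hτz
    have hτzapp : ∀ z y, τ' (y, z) = (τz z y, z) :=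
      fun z y => Prod.ext rfl (hτ'2 (y, z))
    have hτzfin : ∀ z, {y | τz z y ≠ y}.Finite := by
      intro z
      have : {y | τz z y ≠ y} ⊆ (fun y => (y, z)) ⁻¹' {p | τ' p ≠ p} := by
        intro y hy
        simp only [Set.mem_preimage, Set.mem_setOf_eq]
        intro hc
        apply hy
        have := congrArg Prod.fst hc
        exact this
      exact (hτ'f.preimage (fun y₁ _ y₂ _ h => congrArg Prod.fst h)).subset this
    have hZstar : {z | τz z ≠ 1}.Finite := by
      apply (hτ'f.image Prod.snd).subset
      intro z hz
      simp only [Set.mem_setOf_eq] at hz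
      have : ∃ y, τz z y ≠ y := by
        by_contra hc
        push_neg at hc
        exact hz (Equiv.ext hc)
      obtain ⟨y, hy⟩ := this
      refine ⟨(y, z), ?_, rfl⟩
      simp only [Set.mem_setOf_eq]
      intro hc
      exact hy (congrArg Prod.fst hc)
    -- decompose each fiber using the induction hypothesis
    have hdec : ∀ z, ∃ ab : (Fin n → Equiv.Perm (∀ j : Fin n, A j.castSucc)) ×
        (Fin n → Equiv.Perm (∀ j : Fin n, A j.castSucc)),
        (∀ i, {y | ab.1 i y ≠ y}.Finite) ∧ (∀ i, {y | ab.2 i y ≠ y}.Finite) ∧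
        (∀ i y j, j ≠ i → ab.1 i y j = y j) ∧ (∀ i y j, j ≠ i → ab.2 i y j = y j) ∧
        τz z = ((List.ofFn ab.1).reverse ++ (List.ofFn ab.2).drop 1).prod ∧
        (τz z = 1 → ab = (fun _ => 1, fun _ => 1)) := by
      intro z
      by_cases h : τz z = 1
      · refine ⟨(fun _ => 1, fun _ => 1), fun _ => by simp, fun _ => by simp,
          fun _ _ _ _ => rfl, fun _ _ _ _ => rfl, ?_, fun _ => rfl⟩
        rw [h]
        symm
        apply List.prod_eq_one
        intro x hx
        rcases List.mem_append.mp hx with h' | h'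
        · rw [List.mem_reverse] at h'
          obtain ⟨i, hi⟩ := List.mem_ofFn.mp h'
          exact hi.symm
        · obtain ⟨i, hi⟩ := List.mem_ofFn.mp (List.mem_of_mem_drop h')
          exact hi.symm
      · obtain ⟨a', b', h1, h2, h3, h4, h5⟩ := IH (fun j => A j.castSucc) (τz z) (hτzfin z)
        exact ⟨(a', b'), h1, h2, h3, h4, h5, fun hc => absurd hc h⟩
    choose ab hab1 hab2 hab3 hab4 hab5 hab6 using hdec
    set FA : Fin n → ∀ _ : A (Fin.last n), Equiv.Perm (∀ j : Fin n, A j.castSucc) :=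
      fun i z => (ab z).1 i with hFA
    set FB : Fin n → ∀ _ : A (Fin.last n), Equiv.Perm (∀ j : Fin n, A j.castSucc) :=
      fun i z => (ab z).2 i with hFB
    set cP := e.permCongr.symm c' with hcP
    set dP := e.permCongr.symm d' with hdP
    -- lift finiteness
    have hliftfin : ∀ (F : ∀ _ : A (Fin.last n), Equiv.Perm (∀ j : Fin n, A j.castSucc)),
        (∀ z, {y | F z y ≠ y}.Finite) → (∀ z, τz z = 1 → F z = 1) →
        {x | liftHom F x ≠ x}.Finite := by
      intro F hFfin hFtriv
      apply Set.Finite.subset (Set.Finite.biUnion hZstar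
        (fun z _ => ((hFfin z).image (fun y => Fin.snoc y z))))
      intro x hx
      simp only [Set.mem_setOf_eq] at hx
      have h1 : F (x (Fin.last n)) (Fin.init x) ≠ Fin.init x := by
        intro hc
        apply hx
        rw [liftHom_apply, hc, Fin.snoc_init_self]
      have h2 : τz (x (Fin.last n)) ≠ 1 := by
        intro hc
        rw [hFtriv _ hc] at h1
        exact h1 rfl
      exact Set.mem_biUnion h2 ⟨Fin.init x, h1, Fin.snoc_init_self x⟩
    -- lift coordinate conditions
    have hliftcoord : ∀ (F : ∀ _ : A (Fin.last n), Equiv.Perm (∀ j : Fin n, A j.castSucc))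
        (i : Fin n), (∀ z y j, j ≠ i → F z y j = y j) →
        ∀ x (j : Fin (n + 1)), j ≠ i.castSucc → liftHom F x j = x j := by
      intro F i hF x j hj
      rw [liftHom_apply]
      rcases eq_or_ne j (Fin.last n) with rfl | hjl
      · exact Fin.snoc_last _ _
      · obtain ⟨j', rfl⟩ := Fin.exists_castSucc_eq.mpr hjl
        rw [Fin.snoc_castSucc]
        have hne : j' ≠ i := fun hc => hj (by rw [hc])
        rw [hF _ _ _ hne]
        rfl
    refine ⟨Fin.snoc (fun i => liftHom (FA i)) cP, Fin.snoc (fun i => liftHom (FB i)) dP,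
      ?_, ?_, ?_, ?_, ?_⟩
    · intro i
      rcases eq_or_ne i (Fin.last n) with rfl | hi
      · rw [Fin.snoc_last]
        exact hfin c' hc'f
      · obtain ⟨i', rfl⟩ := Fin.exists_castSucc_eq.mpr hi
        rw [Fin.snoc_castSucc]
        refine hliftfin (FA i') (fun z => hab1 z i') ?_
        intro z hz
        rw [hFA]
        simp only
        rw [hab6 z hz]
    · intro i
      rcases eq_or_ne i (Fin.last n) with rfl | hi
      · rw [Fin.snoc_last]
        exact hfin d' hd'f
      · obtain ⟨i', rfl⟩ := Fin.exists_castSucc_eq.mpr hi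
        rw [Fin.snoc_castSucc]
        refine hliftfin (FB i') (fun z => hab2 z i') ?_
        intro z hz
        rw [hFB]
        simp only
        rw [hab6 z hz]
    · intro i x j hj
      rcases eq_or_ne i (Fin.last n) with rfl | hi
      · rw [Fin.snoc_last]
        -- c preserves all but last coordinate
        rw [happ]
        obtain ⟨j', rfl⟩ := Fin.exists_castSucc_eq.mpr hj
        have h1 : (c' (e x)).1 = Fin.init x := hc'1 (e x)
        show (Fin.snoc (c' (e x)).1 (c' (e x)).2 : ∀ i, A i) j'.castSucc = x j'.castSucc
        rw [Fin.snoc_castSucc, h1]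
        rfl
      · obtain ⟨i', rfl⟩ := Fin.exists_castSucc_eq.mpr hi
        rw [Fin.snoc_castSucc]
        exact hliftcoord (FA i') i' (fun z => hab3 z i') x j hj
    · intro i x j hj
      rcases eq_or_ne i (Fin.last n) with rfl | hi
      · rw [Fin.snoc_last]
        rw [happ]
        obtain ⟨j', rfl⟩ := Fin.exists_castSucc_eq.mpr hj
        have h1 : (d' (e x)).1 = Fin.init x := hd'1 (e x)
        show (Fin.snoc (d' (e x)).1 (d' (e x)).2 : ∀ i, A i) j'.castSucc = x j'.castSucc
        rw [Fin.snoc_castSucc, h1]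
        rfl
      · obtain ⟨i', rfl⟩ := Fin.exists_castSucc_eq.mpr hi
        rw [Fin.snoc_castSucc]
        exact hliftcoord (FB i') i' (fun z => hab4 z i') x j hj
    · -- the product identity
      have hofn : ∀ (g : Fin n → Equiv.Perm (∀ i, A i)) (c0 : Equiv.Perm (∀ i, A i)),
          List.ofFn (Fin.snoc g c0 : Fin (n + 1) → Equiv.Perm (∀ i, A i))
            = List.ofFn g ++ [c0] := by
        intro g c0
        rw [List.ofFn_succ']
        simp [Fin.snoc_castSucc, Fin.snoc_last, List.concat_eq_append]
      rw [hofn, hofn, List.reverse_append,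
        List.drop_append_of_le_length (by simp; omega)]
      simp only [List.reverse_singleton, List.singleton_append, List.prod_cons,
        List.prod_append]
      -- middle part equals the lift of the fiberwise product
      have hmid : (List.ofFn fun i => liftHom (FA i)).reverse.prod *
          ((List.ofFn fun i => liftHom (FB i)).drop 1).prod
          = e.permCongr.symm τ' := by
        have hA : (List.ofFn fun i => liftHom (FA i)) = (List.ofFn FA).map liftHom := by
          rw [List.map_ofFn]
          rfl
        have hB : (List.ofFn fun i => liftHom (FB i)) = (List.ofFn FB).map liftHom := by
          rw [List.map_ofFn]
          rfl
        rw [hA, hB, ← List.map_reverse, ← List.map_drop, List.prod_hom _ liftHom,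
          List.prod_hom _ liftHom, ← map_mul]
        -- now show liftHom of the pointwise product is the pullback of τ'
        refine Equiv.ext fun x => ?_
        rw [liftHom_apply, happ]
        have hP : ∀ z, ((List.ofFn FA).reverse.prod * ((List.ofFn FB).drop 1).prod) z
            = τz z := by
          intro z
          have heval := Pi.evalMonoidHom
            (fun _ : A (Fin.last n) => Equiv.Perm (∀ j : Fin n, A j.castSucc)) z
          rw [hab5 z, List.prod_append]
          have e1 : (List.ofFn FA).reverse.prod z = (List.ofFn (ab z).1).reverse.prod := by
            calc (List.ofFn FA).reverse.prod z
                = (Pi.evalMonoidHom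
                  (fun _ : A (Fin.last n) => Equiv.Perm (∀ j : Fin n, A j.castSucc)) z)
                  (List.ofFn FA).reverse.prod := rfl
              _ = (((List.ofFn FA).reverse).map (Pi.evalMonoidHom
                  (fun _ : A (Fin.last n) => Equiv.Perm (∀ j : Fin n, A j.castSucc)) z)).prod :=
                  (List.prod_hom _ _).symm
              _ = (List.ofFn (ab z).1).reverse.prod := by
                  rw [List.map_reverse, List.map_ofFn]
                  rfl
          have e2 : ((List.ofFn FB).drop 1).prod z = ((List.ofFn (ab z).2).drop 1).prod := by
            calc ((List.ofFn FB).drop 1).prod z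
                = (Pi.evalMonoidHom
                  (fun _ : A (Fin.last n) => Equiv.Perm (∀ j : Fin n, A j.castSucc)) z)
                  ((List.ofFn FB).drop 1).prod := rfl
              _ = (((List.ofFn FB).drop 1).map (Pi.evalMonoidHom
                  (fun _ : A (Fin.last n) => Equiv.Perm (∀ j : Fin n, A j.castSucc)) z)).prod :=
                  (List.prod_hom _ _).symm
              _ = ((List.ofFn (ab z).2).drop 1).prod := by
                  rw [List.map_drop, List.map_ofFn]
                  rfl
          rw [Pi.mul_apply, e1, e2]
        rw [hP]
        -- snoc (τz z (init x)) z = e.symm (τ' (e x))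
        show (Fin.snoc (τz (x (Fin.last n)) (Fin.init x)) (x (Fin.last n)) : ∀ i, A i)
          = e.symm (τ' (Fin.init x, x (Fin.last n)))
        rw [hτzapp]
        rfl
      rw [← mul_assoc, ← mul_assoc] at *
      rw [show cP * (List.ofFn fun i => liftHom (FA i)).reverse.prod *
            ((List.ofFn fun i => liftHom (FB i)).drop 1).prod * dP
          = cP * ((List.ofFn fun i => liftHom (FA i)).reverse.prod *
            ((List.ofFn fun i => liftHom (FB i)).drop 1).prod) * dP by group, hmid]
      rw [hcP, hdP, ← hmul, ← hmul, ← hfac, hπ'def]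
      exact (e.permCongr.symm_apply_apply π).symm
end

section
/- Let A and B be countable sets (finite or countably infinite). Then Sym(A × B) = G_L·G_R·G_L·G_R ∪ G_R·G_L·G_R·G_L; that is, every permutation π of A × B can be written either as π = l₁ ∘ r₁ ∘ l₂ ∘ r₂ with l₁, l₂ ∈ G_L and r₁, r₂ ∈ G_R, or as π = r₁ ∘ l₁ ∘ r₂ ∘ l₂ with r₁, r₂ ∈ G_R and l₁, l₂ ∈ G_L. -/
open Function Set

section Red
variable {A B : Type*}

/-- The conjugate permutation on `B × A`. -/
def swapPerm (π : Equiv.Perm (A × B)) : Equiv.Perm (B × A) :=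
  (Equiv.prodComm B A).trans (π.trans (Equiv.prodComm A B))

/-- From suitable `α`, `β` data, produce the `LRLR` decomposition. -/
lemma reduce_lemma (π : Equiv.Perm (A × B)) (α : A × B → A) (β : A × B → B)
    (h1 : Function.Bijective fun p : A × B => (p.1, β p))
    (h2 : Function.Bijective fun p : A × B => (α p, β p))
    (h3 : Function.Bijective fun p : A × B => (α p, (π p).2)) :
    ∃ l₁ r₁ l₂ r₂ : Equiv.Perm (A × B),
      (∀ p, (l₁ p).2 = p.2) ∧ (∀ p, (r₁ p).1 = p.1) ∧
      (∀ p, (l₂ p).2 = p.2) ∧ (∀ p, (r₂ p).1 = p.1) ∧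
      ∀ p, π p = l₁ (r₁ (l₂ (r₂ p))) := by
  let e1 := Equiv.ofBijective _ h1
  let e2 := Equiv.ofBijective _ h2
  let e3 := Equiv.ofBijective _ h3
  refine ⟨e3.symm.trans π, e2.symm.trans e3, e1.symm.trans e2, e1, ?_, ?_, ?_, ?_, ?_⟩
  · intro q
    have h : e3 (e3.symm q) = q := e3.apply_symm_apply q
    have : (π (e3.symm q)).2 = q.2 := by
      conv_rhs => rw [← h]
      rfl
    exact this
  · intro q
    have h : e2 (e2.symm q) = q := e2.apply_symm_apply q
    have : (α (e2.symm q)) = q.1 := by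
      conv_rhs => rw [← h]
      rfl
    exact this
  · intro q
    have h : e1 (e1.symm q) = q := e1.apply_symm_apply q
    have : (β (e1.symm q)) = q.2 := by
      conv_rhs => rw [← h]
      rfl
    exact this
  · intro p; rfl
  · intro p
    simp [Equiv.trans_apply, Equiv.symm_apply_apply]

/-- conjugation by the swap turns an `LRLR` decomposition of the swapped permutation
into an `RLRL` decomposition. -/
lemma right_of_swap (π : Equiv.Perm (A × B))
    (h : ∃ l₁ r₁ l₂ r₂ : Equiv.Perm (B × A),
      (∀ q, (l₁ q).2 = q.2) ∧ (∀ q, (r₁ q).1 = q.1) ∧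
      (∀ q, (l₂ q).2 = q.2) ∧ (∀ q, (r₂ q).1 = q.1) ∧
      ∀ q, swapPerm π q = l₁ (r₁ (l₂ (r₂ q)))) :
    (∃ r₁ l₁ r₂ l₂ : Equiv.Perm (A × B),
      (∀ p, (r₁ p).1 = p.1) ∧ (∀ p, (l₁ p).2 = p.2) ∧
      (∀ p, (r₂ p).1 = p.1) ∧ (∀ p, (l₂ p).2 = p.2) ∧
      ∀ p, π p = r₁ (l₁ (r₂ (l₂ p)))) := by
  obtain ⟨l₁, r₁, l₂, r₂, h1, h2, h3, h4, h5⟩ := h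
  let c : Equiv.Perm (B × A) → Equiv.Perm (A × B) := fun g =>
    (Equiv.prodComm A B).trans (g.trans (Equiv.prodComm B A))
  have hc : ∀ g p, c g p = (g (p.2, p.1)).swap := by
    intro g p; rfl
  refine ⟨c l₁, c r₁, c l₂, c r₂, ?_, ?_, ?_, ?_, ?_⟩
  · intro p; rw [hc]; simpa using h1 (p.2, p.1)
  · intro p; rw [hc]; simpa using h2 (p.2, p.1)
  · intro p; rw [hc]; simpa using h3 (p.2, p.1)
  · intro p; rw [hc]; simpa using h4 (p.2, p.1)
  · intro p
    have h := h5 (p.2, p.1)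
    simp only [swapPerm, Equiv.trans_apply, Equiv.prodComm_apply, Prod.swap_prod_mk] at h
    rw [hc, hc, hc, hc]
    simp only [Prod.fst_swap, Prod.snd_swap, Prod.mk.eta]
    rw [← h]
    simp

end Red

/-- The key condition: outside any finite set of columns and any finite, proper set of
target rows there are infinitely many points. -/
def SaloCond {A B : Type*} (π : Equiv.Perm (A × B)) : Prop :=
  ∀ Sc : Set A, ∀ Sr : Set B, Sc.Finite → Sr.Finite → Sr ≠ Set.univ →
    {p : A × B | p.1 ∉ Sc ∧ (π p).2 ∉ Sr}.Infinite

/-- State of the back-and-forth construction: a finite partial assignment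
`p ↦ (x, y)` such that the maps `p ↦ (p.1, y)`, `p ↦ (x, y)`, `p ↦ (x, (π p).2)`
are all injective on it. -/
structure GState (A B : Type*) (π : Equiv.Perm (A × B)) where
  S : Set ((A × B) × A × B)
  fin : S.Finite
  inj0 : ∀ e ∈ S, ∀ e' ∈ S, e.1 = e'.1 → e = e'
  inj1 : ∀ e ∈ S, ∀ e' ∈ S, e.1.1 = e'.1.1 → e.2.2 = e'.2.2 → e = e'
  inj2 : ∀ e ∈ S, ∀ e' ∈ S, e.2 = e'.2 → e = e'
  inj3 : ∀ e ∈ S, ∀ e' ∈ S, e.2.1 = e'.2.1 → (π e.1).2 = (π e'.1).2 → e = e'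

namespace GState

variable {A B : Type*} {π : Equiv.Perm (A × B)}

lemma extend (s : GState A B π) (p : A × B) (x : A) (y : B)
    (h0 : ∀ e ∈ s.S, e.1 ≠ p)
    (h1 : ∀ e ∈ s.S, e.1.1 = p.1 → e.2.2 ≠ y)
    (h2 : ∀ e ∈ s.S, e.2 ≠ (x, y))
    (h3 : ∀ e ∈ s.S, e.2.1 = x → (π e.1).2 ≠ (π p).2) :
    ∃ s' : GState A B π, s'.S = insert (p, (x, y)) s.S := by
  refine ⟨⟨insert (p, (x, y)) s.S, s.fin.insert _, ?_, ?_, ?_, ?_⟩, rfl⟩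
  · rintro e (rfl | he) e' (rfl | he') h
    · rfl
    · exact absurd h.symm (h0 e' he')
    · exact absurd h (h0 e he)
    · exact s.inj0 e he e' he' h
  · rintro e (rfl | he) e' (rfl | he') ha hb
    · rfl
    · exact absurd hb.symm (h1 e' he' ha.symm)
    · exact absurd hb (h1 e he ha)
    · exact s.inj1 e he e' he' ha hb
  · rintro e (rfl | he) e' (rfl | he') h
    · rfl
    · exact absurd h.symm (h2 e' he')
    · exact absurd h (h2 e he)
    · exact s.inj2 e he e' he' h
  · rintro e (rfl | he) e' (rfl | he') ha hb
    · rfl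
    · exact absurd hb.symm (h3 e' he' ha.symm)
    · exact absurd hb (h3 e he ha)
    · exact s.inj3 e he e' he' ha hb

lemma fresh_x [Infinite A] (s : GState A B π) :
    ∃ x : A, ∀ e ∈ s.S, e.2.1 ≠ x := by
  obtain ⟨x, hx⟩ := ((s.fin.image fun e => e.2.1).infinite_compl).nonempty
  exact ⟨x, fun e he h => hx ⟨e, he, h⟩⟩

lemma free_y (s : GState A B π) (p : A × B) (hp : ∀ e ∈ s.S, e.1 ≠ p) :
    ∃ y : B, ∀ e ∈ s.S, e.1.1 = p.1 → e.2.2 ≠ y := by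
  by_contra hcon
  push_neg at hcon
  choose g hg hga hgy using hcon
  rcases finite_or_infinite B with hB | hB
  case inr =>
    haveI := hB
    have hsub : (Set.univ : Set B) ⊆ (fun e => e.2.2) '' s.S :=
      fun y _ => ⟨g y, hg y, hgy y⟩
    exact Set.infinite_univ ((s.fin.image _).subset hsub)
  case inl =>
    haveI := hB
    have hinj : Injective (fun y : B => (g y).1.2) := by
      intro y y' hyy
      have hk : (g y).1 = (g y').1 := Prod.ext (by rw [hga, hga]) hyy
      have := s.inj0 _ (hg y) _ (hg y') hk
      rw [← hgy y, this, hgy y']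
    obtain ⟨y, hy⟩ := Finite.injective_iff_surjective.mp hinj p.2
    exact hp _ (hg y) (Prod.ext (hga y) hy)

lemma undecided_in_col (s : GState A B π) (a : A) (y : B)
    (hun : ∀ e ∈ s.S, ¬(e.1.1 = a ∧ e.2.2 = y)) :
    ∃ p : A × B, p.1 = a ∧ ∀ e ∈ s.S, e.1 ≠ p := by
  by_contra hcon
  push_neg at hcon
  have h' : ∀ b : B, ∃ e ∈ s.S, e.1 = (a, b) := by
    intro b
    obtain ⟨e, he, hee⟩ := hcon (a, b) rfl
    exact ⟨e, he, hee⟩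
  choose g hg hge using h'
  rcases finite_or_infinite B with hB | hB
  case inr =>
    haveI := hB
    have hsub : (Set.univ : Set B) ⊆ (fun e => e.1.2) '' s.S :=
      fun b _ => ⟨g b, hg b, by show (g b).1.2 = b; rw [hge b]⟩
    exact Set.infinite_univ ((s.fin.image _).subset hsub)
  case inl =>
    haveI := hB
    have hinj : Injective (fun b : B => (g b).2.2) := by
      intro b b' hbb
      have := s.inj1 _ (hg b) _ (hg b')
        (by rw [hge b, hge b']) hbb
      have h2 : (g b).1.2 = (g b').1.2 := congrArg (fun e => e.1.2) this
      rwa [hge b, hge b'] at h2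
    obtain ⟨b, hb⟩ := Finite.injective_iff_surjective.mp hinj y
    exact hun _ (hg b) ⟨by rw [hge b], hb⟩

lemma trset_ne_univ (s : GState A B π) (x : A) (y : B)
    (hun : ∀ e ∈ s.S, e.2 ≠ (x, y)) :
    {b : B | ∃ e ∈ s.S, e.2.1 = x ∧ (π e.1).2 = b} ≠ Set.univ := by
  intro hequ
  have h : ∀ b : B, ∃ e ∈ s.S, e.2.1 = x ∧ (π e.1).2 = b := by
    intro b
    have : b ∈ {b : B | ∃ e ∈ s.S, e.2.1 = x ∧ (π e.1).2 = b} := hequ ▸ Set.mem_univ b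
    exact this
  choose g hg hgx hgb using h
  rcases finite_or_infinite B with hB | hB
  case inr =>
    haveI := hB
    have hsub : (Set.univ : Set B) ⊆ (fun e => (π e.1).2) '' s.S :=
      fun b _ => ⟨g b, hg b, hgb b⟩
    exact Set.infinite_univ ((s.fin.image _).subset hsub)
  case inl =>
    haveI := hB
    have hinj : Injective (fun b : B => (g b).2.2) := by
      intro b b' hbb
      have h2 : (g b).2 = (g b').2 := Prod.ext (by rw [hgx, hgx]) hbb
      have := s.inj2 _ (hg b) _ (hg b') h2
      rw [← hgb b, this, hgb b']
    obtain ⟨b, hb⟩ := Finite.injective_iff_surjective.mp hinj y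
    exact hun _ (hg b) (Prod.ext (hgx b) hb)

lemma free_y_for_x (s : GState A B π) (x : A) (b : B)
    (hun : ∀ e ∈ s.S, ¬(e.2.1 = x ∧ (π e.1).2 = b)) :
    ∃ y : B, ∀ e ∈ s.S, e.2 ≠ (x, y) := by
  by_contra hcon
  push_neg at hcon
  have h' : ∀ y : B, ∃ e ∈ s.S, e.2 = (x, y) := by
    intro y
    obtain ⟨e, he, hee⟩ := hcon y
    exact ⟨e, he, hee⟩
  choose g hg hge using h'
  rcases finite_or_infinite B with hB | hB
  case inr =>
    haveI := hB
    have hsub : (Set.univ : Set B) ⊆ (fun e => e.2.2) '' s.S :=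
      fun y _ => ⟨g y, hg y, by show (g y).2.2 = y; rw [hge y]⟩
    exact Set.infinite_univ ((s.fin.image _).subset hsub)
  case inl =>
    haveI := hB
    have hinj : Injective (fun y : B => (π (g y).1).2) := by
      intro y y' hyy
      have := s.inj3 _ (hg y) _ (hg y')
        (by rw [hge y, hge y']) hyy
      have h2 : (g y).2.2 = (g y').2.2 := congrArg (fun e => e.2.2) this
      rwa [hge y, hge y'] at h2
    obtain ⟨y, hy⟩ := Finite.injective_iff_surjective.mp hinj b
    exact hun _ (hg y) ⟨by rw [hge y], hy⟩

end GState

lemma trfiber_infinite {A B : Type*} [Infinite A] (π : Equiv.Perm (A × B)) (b : B) :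
    {p : A × B | (π p).2 = b}.Infinite := by
  refine Set.infinite_of_injective_forall_mem (f := fun a : A => π.symm (a, b)) ?_ ?_
  · intro a a' h
    have := congrArg π h
    simp only [Equiv.apply_symm_apply] at this
    exact (Prod.mk.injEq _ _ _ _).mp this |>.1
  · intro a
    simp [Set.mem_setOf_eq]

lemma cols_finite {A B : Type*} [Finite B] {F : Set A} (hF : F.Finite) :
    {p : A × B | p.1 ∈ F}.Finite := by
  have hsub : {p : A × B | p.1 ∈ F} ⊆ F ×ˢ (Set.univ : Set B) :=
    fun p hp => ⟨hp, trivial⟩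
  exact (hF.prod Set.finite_univ).subset hsub

abbrev QT (A B : Type*) := (A × B) ⊕ ((A × B) ⊕ ((A × B) ⊕ (A × B)))

def DoneQ {A B : Type*} (π : Equiv.Perm (A × B)) :
    QT A B → Set ((A × B) × A × B) → Prop
  | Sum.inl pr => fun T => ∃ e ∈ T, e.1 = pr
  | Sum.inr (Sum.inl pr) => fun T => ∃ e ∈ T, e.1.1 = pr.1 ∧ e.2.2 = pr.2
  | Sum.inr (Sum.inr (Sum.inl pr)) => fun T => ∃ e ∈ T, e.2 = pr
  | Sum.inr (Sum.inr (Sum.inr pr)) => fun T => ∃ e ∈ T, e.2.1 = pr.1 ∧ (π e.1).2 = pr.2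

lemma DoneQ.mono {A B : Type*} {π : Equiv.Perm (A × B)} {q : QT A B}
    {T T' : Set ((A × B) × A × B)} (h : DoneQ π q T) (hsub : T ⊆ T') :
    DoneQ π q T' := by
  rcases q with pr | pr | pr | pr <;>
    · obtain ⟨e, he, hh⟩ := h
      exact ⟨e, hsub he, hh⟩

lemma step_lemma {A B : Type*} [Infinite A] {π : Equiv.Perm (A × B)}
    (hC : SaloCond π) (s : GState A B π) (q : QT A B) :
    ∃ s' : GState A B π, s.S ⊆ s'.S ∧ DoneQ π q s'.S := by
  rcases q with pr | pr | pr | pr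
  · -- point demand
    by_cases hd : ∃ e ∈ s.S, e.1 = pr
    · exact ⟨s, subset_rfl, hd⟩
    have hun : ∀ e ∈ s.S, e.1 ≠ pr := fun e he hh => hd ⟨e, he, hh⟩
    obtain ⟨y, hy⟩ := s.free_y pr hun
    obtain ⟨x, hx⟩ := s.fresh_x
    obtain ⟨s', hs'⟩ := s.extend pr x y hun hy
      (fun e he h => absurd (congrArg Prod.fst h) (hx e he))
      (fun e he hex => absurd hex (hx e he))
    refine ⟨s', by rw [hs']; exact Set.subset_insert _ _, ?_⟩
    exact ⟨(pr, (x, y)), by rw [hs']; exact Set.mem_insert _ _, rfl⟩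
  · -- F1 demand (a, y) = pr
    by_cases hd : ∃ e ∈ s.S, e.1.1 = pr.1 ∧ e.2.2 = pr.2
    · exact ⟨s, subset_rfl, hd⟩
    have hun : ∀ e ∈ s.S, ¬(e.1.1 = pr.1 ∧ e.2.2 = pr.2) := fun e he hh => hd ⟨e, he, hh⟩
    obtain ⟨p, hpa, hpk⟩ := s.undecided_in_col pr.1 pr.2 hun
    obtain ⟨x, hx⟩ := s.fresh_x
    obtain ⟨s', hs'⟩ := s.extend p x pr.2 hpk
      (fun e he hea hey => hun e he ⟨by rw [hea, hpa], hey⟩)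
      (fun e he h => absurd (congrArg Prod.fst h) (hx e he))
      (fun e he hex => absurd hex (hx e he))
    refine ⟨s', by rw [hs']; exact Set.subset_insert _ _, ?_⟩
    exact ⟨(p, (x, pr.2)), by rw [hs']; exact Set.mem_insert _ _, hpa, rfl⟩
  · -- F2 demand (x, y) = pr
    by_cases hd : ∃ e ∈ s.S, e.2 = pr
    · exact ⟨s, subset_rfl, hd⟩
    have hun : ∀ e ∈ s.S, e.2 ≠ pr := fun e he hh => hd ⟨e, he, hh⟩
    have hScfin : {a : A | ∃ e ∈ s.S, e.1.1 = a ∧ e.2.2 = pr.2}.Finite := by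
      refine (s.fin.image fun e => e.1.1).subset ?_
      rintro a ⟨e, he, h1, _⟩
      exact ⟨e, he, h1⟩
    have hSrfin : {b : B | ∃ e ∈ s.S, e.2.1 = pr.1 ∧ (π e.1).2 = b}.Finite := by
      refine (s.fin.image fun e => (π e.1).2).subset ?_
      rintro b ⟨e, he, _, h2⟩
      exact ⟨e, he, h2⟩
    have hSrne := s.trset_ne_univ pr.1 pr.2
      (fun e he h => hun e he (h.trans Prod.mk.eta))
    have hInf := hC _ _ hScfin hSrfin hSrne
    obtain ⟨p, hp⟩ := (hInf.diff (s.fin.image fun e => e.1)).nonempty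
    have hpc : p.1 ∉ {a : A | ∃ e ∈ s.S, e.1.1 = a ∧ e.2.2 = pr.2} := hp.1.1
    have hpr : (π p).2 ∉ {b : B | ∃ e ∈ s.S, e.2.1 = pr.1 ∧ (π e.1).2 = b} := hp.1.2
    have hpk : ∀ e ∈ s.S, e.1 ≠ p := fun e he h => hp.2 ⟨e, he, h⟩
    obtain ⟨s', hs'⟩ := s.extend p pr.1 pr.2 hpk
      (fun e he hea hey => hpc ⟨e, he, hea, hey⟩)
      (fun e he h => hun e he (h.trans Prod.mk.eta))
      (fun e he hex htr => hpr ⟨e, he, hex, htr⟩)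
    refine ⟨s', by rw [hs']; exact Set.subset_insert _ _, ?_⟩
    exact ⟨(p, (pr.1, pr.2)), by rw [hs']; exact Set.mem_insert _ _, Prod.mk.eta⟩
  · -- F3 demand (x, b) = pr
    by_cases hd : ∃ e ∈ s.S, e.2.1 = pr.1 ∧ (π e.1).2 = pr.2
    · exact ⟨s, subset_rfl, hd⟩
    have hun : ∀ e ∈ s.S, ¬(e.2.1 = pr.1 ∧ (π e.1).2 = pr.2) := fun e he hh => hd ⟨e, he, hh⟩
    rcases finite_or_infinite B with hB | hB
    · haveI := hB
      have hcolsfin : {p : A × B | p.1 ∈ (fun e : (A × B) × A × B => e.1.1) '' s.S}.Finite :=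
        cols_finite (s.fin.image _)
      obtain ⟨p, hp⟩ := ((trfiber_infinite π pr.2).diff hcolsfin).nonempty
      have hptr : (π p).2 = pr.2 := hp.1
      have hpun : ∀ e ∈ s.S, e.1.1 ≠ p.1 := fun e he h => hp.2 ⟨e, he, h⟩
      have hpk : ∀ e ∈ s.S, e.1 ≠ p := fun e he h => hpun e he (congrArg Prod.fst h)
      obtain ⟨y, hy⟩ := s.free_y_for_x pr.1 pr.2 hun
      obtain ⟨s', hs'⟩ := s.extend p pr.1 y hpk
        (fun e he hea => absurd hea (hpun e he))
        hy
        (fun e he hex htr => hun e he ⟨hex, htr.trans hptr⟩)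
      refine ⟨s', by rw [hs']; exact Set.subset_insert _ _, ?_⟩
      exact ⟨(p, (pr.1, y)), by rw [hs']; exact Set.mem_insert _ _, rfl, hptr⟩
    · haveI := hB
      obtain ⟨p, hp⟩ := ((trfiber_infinite π pr.2).diff (s.fin.image fun e => e.1)).nonempty
      have hptr : (π p).2 = pr.2 := hp.1
      have hpk : ∀ e ∈ s.S, e.1 ≠ p := fun e he h => hp.2 ⟨e, he, h⟩
      obtain ⟨y, hyn⟩ := ((s.fin.image fun e => e.2.2).infinite_compl).nonempty
      have hy2 : ∀ e ∈ s.S, e.2.2 ≠ y := fun e he h => hyn ⟨e, he, h⟩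
      obtain ⟨s', hs'⟩ := s.extend p pr.1 y hpk
        (fun e he _ => hy2 e he)
        (fun e he h => hy2 e he (congrArg Prod.snd h))
        (fun e he hex htr => hun e he ⟨hex, htr.trans hptr⟩)
      refine ⟨s', by rw [hs']; exact Set.subset_insert _ _, ?_⟩
      exact ⟨(p, (pr.1, y)), by rw [hs']; exact Set.mem_insert _ _, rfl, hptr⟩

lemma exists_albe {A B : Type*} [Countable A] [Countable B] [Infinite A] [Nonempty B]
    (π : Equiv.Perm (A × B)) (hC : SaloCond π) :
    ∃ (α : A × B → A) (β : A × B → B),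
      Function.Bijective (fun p : A × B => (p.1, β p)) ∧
      Function.Bijective (fun p : A × B => (α p, β p)) ∧
      Function.Bijective (fun p : A × B => (α p, (π p).2)) := by
  classical
  obtain ⟨enum, henum⟩ := exists_surjective_nat (QT A B)
  let s0 : GState A B π := ⟨∅, Set.finite_empty,
    by simp, by simp, by simp, by simp⟩
  let F : ℕ → GState A B π := fun n =>
    Nat.rec s0 (fun n s => Classical.choose (step_lemma hC s (enum n))) n
  have hFsucc : ∀ n, (F n).S ⊆ (F (n+1)).S ∧ DoneQ π (enum n) (F (n+1)).S :=
    fun n => Classical.choose_spec (step_lemma hC (F n) (enum n))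
  have hmono : ∀ m n, m ≤ n → (F m).S ⊆ (F n).S := by
    intro m n h
    induction h with
    | refl => exact subset_rfl
    | step h ih => exact ih.trans (hFsucc _).1
  set U := ⋃ n, (F n).S with hU
  have hmem : ∀ {e}, e ∈ U → ∃ n, e ∈ (F n).S := fun he => Set.mem_iUnion.mp he
  have hpair : ∀ {e e'}, e ∈ U → e' ∈ U → ∃ n, e ∈ (F n).S ∧ e' ∈ (F n).S := by
    intro e e' he he'
    obtain ⟨n, hn⟩ := hmem he
    obtain ⟨m, hm⟩ := hmem he'
    exact ⟨max n m, hmono n _ (le_max_left _ _) hn, hmono m _ (le_max_right _ _) hm⟩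
  have hdone : ∀ q, DoneQ π q U := by
    intro q
    obtain ⟨n, hn⟩ := henum q
    have h := (hFsucc n).2
    rw [hn] at h
    exact h.mono (Set.subset_iUnion (fun n => (F n).S) (n+1))
  have htot : ∀ p : A × B, ∃ e, e ∈ U ∧ e.1 = p := fun p => hdone (Sum.inl p)
  choose E hEU hEk using htot
  have hcanon : ∀ e ∈ U, E e.1 = e := by
    intro e he
    obtain ⟨n, h1, h2⟩ := hpair (hEU e.1) he
    exact (F n).inj0 _ h1 _ h2 (hEk e.1)
  refine ⟨fun p => (E p).2.1, fun p => (E p).2.2, ⟨?_, ?_⟩, ⟨?_, ?_⟩, ⟨?_, ?_⟩⟩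
  · intro p p' h
    have h' : (p.1, (E p).2.2) = (p'.1, (E p').2.2) := h
    have h1 : p.1 = p'.1 := (Prod.ext_iff.mp h').1
    have h2 : (E p).2.2 = (E p').2.2 := (Prod.ext_iff.mp h').2
    obtain ⟨n, hn, hn'⟩ := hpair (hEU p) (hEU p')
    have hee : E p = E p' := (F n).inj1 _ hn _ hn' (by rw [hEk p, hEk p', h1]) h2
    rw [← hEk p, hee, hEk p']
  · rintro ⟨a, y⟩
    obtain ⟨e, he, h1, h2⟩ := hdone (Sum.inr (Sum.inl (a, y)))
    refine ⟨e.1, ?_⟩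
    show (e.1.1, (E e.1).2.2) = (a, y)
    rw [hcanon e he, h1, h2]
  · intro p p' h
    have h' : ((E p).2.1, (E p).2.2) = ((E p').2.1, (E p').2.2) := h
    have h1 : (E p).2.1 = (E p').2.1 := (Prod.ext_iff.mp h').1
    have h2 : (E p).2.2 = (E p').2.2 := (Prod.ext_iff.mp h').2
    obtain ⟨n, hn, hn'⟩ := hpair (hEU p) (hEU p')
    have hee : E p = E p' := (F n).inj2 _ hn _ hn' (Prod.ext h1 h2)
    rw [← hEk p, hee, hEk p']
  · rintro ⟨x, y⟩
    obtain ⟨e, he, h1⟩ := hdone (Sum.inr (Sum.inr (Sum.inl (x, y))))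
    refine ⟨e.1, ?_⟩
    show ((E e.1).2.1, (E e.1).2.2) = (x, y)
    rw [hcanon e he]
    exact Prod.mk.eta.trans h1
  · intro p p' h
    have h' : ((E p).2.1, (π p).2) = ((E p').2.1, (π p').2) := h
    have h1 : (E p).2.1 = (E p').2.1 := (Prod.ext_iff.mp h').1
    have h2 : (π p).2 = (π p').2 := (Prod.ext_iff.mp h').2
    obtain ⟨n, hn, hn'⟩ := hpair (hEU p) (hEU p')
    have hee : E p = E p' := (F n).inj3 _ hn _ hn' h1 (by rw [hEk p, hEk p', h2])
    rw [← hEk p, hee, hEk p']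
  · rintro ⟨x, b⟩
    obtain ⟨e, he, h1, h2⟩ := hdone (Sum.inr (Sum.inr (Sum.inr (x, b))))
    refine ⟨e.1, ?_⟩
    show ((E e.1).2.1, (π e.1).2) = (x, b)
    rw [hcanon e he, h1, h2]

universe up

lemma hall_color {B : Type*} [Fintype B] [DecidableEq B] :
    ∀ (k : ℕ) (P : Type up) [Fintype P] (s t : P → B),
      (∀ b, (Finset.univ.filter fun p => s p = b).card = k) →
      (∀ b, (Finset.univ.filter fun p => t p = b).card = k) →
      ∃ c : P → Fin k, Function.Bijective (fun p => (c p, s p)) ∧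
        Function.Bijective (fun p => (c p, t p)) := by
  intro k
  induction k with
  | zero =>
    intro P _ s t hs ht
    have hPe : IsEmpty P := by
      by_contra h
      rw [not_isEmpty_iff] at h
      obtain ⟨p⟩ := h
      have h1 : p ∈ Finset.univ.filter (fun q => s q = s p) := by simp
      have h2 := hs (s p)
      rw [Finset.card_eq_zero] at h2
      rw [h2] at h1
      exact absurd h1 (Finset.notMem_empty p)
    exact ⟨fun p => isEmptyElim p, ⟨fun p => isEmptyElim p, fun y => y.1.elim0⟩,
      ⟨fun p => isEmptyElim p, fun y => y.1.elim0⟩⟩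
  | succ k ih =>
    intro P _ s t hs ht
    classical
    have hall : ∀ s' : Finset B, s'.card ≤
        (s'.biUnion fun b => (Finset.univ.filter fun p => s p = b).image t).card := by
      intro s'
      have hdisj : ∀ x ∈ s', ∀ y ∈ s', x ≠ y →
          Disjoint (Finset.univ.filter fun p => s p = x)
            (Finset.univ.filter fun p => s p = y) := by
        intro x _ y _ hxy
        refine Finset.disjoint_left.mpr ?_
        intro p hp hq
        simp only [Finset.mem_filter] at hp hq
        exact hxy (hp.2 ▸ hq.2 ▸ rfl)
      have hcard1 : (s'.biUnion fun b => Finset.univ.filter fun p => s p = b).card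
          = (k+1) * s'.card := by
        rw [Finset.card_biUnion hdisj, Finset.sum_congr rfl (fun b _ => hs b),
          Finset.sum_const, smul_eq_mul, mul_comm]
      have hsub : (s'.biUnion fun b => Finset.univ.filter fun p => s p = b) ⊆
          ((s'.biUnion fun b => (Finset.univ.filter fun p => s p = b).image t).biUnion
            fun b' => Finset.univ.filter fun p => t p = b') := by
        intro p hp
        simp only [Finset.mem_biUnion, Finset.mem_filter, Finset.mem_image,
          Finset.mem_univ, true_and] at hp ⊢
        obtain ⟨b, hb, hpb⟩ := hp
        exact ⟨t p, ⟨b, hb, ⟨p, hpb, rfl⟩⟩, rfl⟩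
      have hcard2 : ((s'.biUnion fun b =>
            (Finset.univ.filter fun p => s p = b).image t).biUnion
          fun b' => Finset.univ.filter fun p => t p = b').card ≤
          (k+1) * (s'.biUnion fun b => (Finset.univ.filter fun p => s p = b).image t).card := by
        refine le_trans Finset.card_biUnion_le ?_
        rw [Finset.sum_congr rfl (fun b _ => ht b), Finset.sum_const, smul_eq_mul]
        exact le_of_eq (mul_comm _ _)
      have hfin := (hcard1 ▸ Finset.card_le_card hsub).trans hcard2
      exact Nat.le_of_mul_le_mul_left hfin (Nat.succ_pos k)
    obtain ⟨f, hfinj, hfmem⟩ := (Finset.all_card_le_biUnion_card_iff_exists_injective _).mp hall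
    have hfbij : Function.Bijective f := Finite.injective_iff_bijective.mp hfinj
    have hMex : ∀ b, ∃ p, s p = b ∧ t p = f b := by
      intro b
      have h := hfmem b
      simp only [Finset.mem_image, Finset.mem_filter, Finset.mem_univ, true_and] at h
      obtain ⟨p, hp1, hp2⟩ := h
      exact ⟨p, hp1, hp2⟩
    choose M hMs hMt using hMex
    have hMinj : Function.Injective M := fun b b' h => by rw [← hMs b, h, hMs b']
    let ef := Equiv.ofBijective f hfbij
    have hs' : ∀ b, (Finset.univ.filter
        fun p : {p : P // p ∉ Set.range M} => s p.1 = b).card = k := by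
      intro b
      have himg : (Finset.univ.filter
            fun p : {p : P // p ∉ Set.range M} => s p.1 = b).image Subtype.val
          = (Finset.univ.filter fun p : P => s p = b).erase (M b) := by
        ext p
        simp only [Finset.mem_image, Finset.mem_filter, Finset.mem_univ, true_and,
          Finset.mem_erase]
        constructor
        · rintro ⟨⟨q, hq⟩, hsq, rfl⟩
          exact ⟨fun h => hq ⟨b, h.symm⟩, hsq⟩
        · rintro ⟨hne, hsp⟩
          refine ⟨⟨p, ?_⟩, hsp, rfl⟩
          rintro ⟨b', rfl⟩
          have hb : b' = b := by rw [← hMs b', hsp]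
          exact hne (by rw [hb])
      have hcard := congrArg Finset.card himg
      rw [Finset.card_image_of_injective _ Subtype.val_injective] at hcard
      rw [hcard, Finset.card_erase_of_mem (by simp [hMs b]), hs b]
      omega
    have ht' : ∀ b, (Finset.univ.filter
        fun p : {p : P // p ∉ Set.range M} => t p.1 = b).card = k := by
      intro b
      have himg : (Finset.univ.filter
            fun p : {p : P // p ∉ Set.range M} => t p.1 = b).image Subtype.val
          = (Finset.univ.filter fun p : P => t p = b).erase (M (ef.symm b)) := by
        ext p
        simp only [Finset.mem_image, Finset.mem_filter, Finset.mem_univ, true_and,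
          Finset.mem_erase]
        constructor
        · rintro ⟨⟨q, hq⟩, htq, rfl⟩
          exact ⟨fun h => hq ⟨ef.symm b, h.symm⟩, htq⟩
        · rintro ⟨hne, htp⟩
          refine ⟨⟨p, ?_⟩, htp, rfl⟩
          rintro ⟨b', rfl⟩
          have hb' : f b' = b := by rw [← hMt b', htp]
          have hbb : b' = ef.symm b := by
            rw [← hb']
            exact (ef.symm_apply_apply b').symm
          exact hne (by rw [hbb])
      have hcard := congrArg Finset.card himg
      rw [Finset.card_image_of_injective _ Subtype.val_injective] at hcard
      have hmem : M (ef.symm b) ∈ Finset.univ.filter fun p : P => t p = b := by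
        simp only [Finset.mem_filter, Finset.mem_univ, true_and]
        rw [hMt]
        exact ef.apply_symm_apply b
      rw [hcard, Finset.card_erase_of_mem hmem, ht b]
      omega
    obtain ⟨c', hc1, hc2⟩ := ih {p : P // p ∉ Set.range M} (fun p => s p.1) (fun p => t p.1) hs' ht'
    refine ⟨fun p => if h : p ∈ Set.range M then Fin.last k else (c' ⟨p, h⟩).castSucc, ?_, ?_⟩
    · constructor
      · intro p q h
        have h' : ((if hp : p ∈ Set.range M then Fin.last k else (c' ⟨p, hp⟩).castSucc), s p)
            = ((if hq : q ∈ Set.range M then Fin.last k else (c' ⟨q, hq⟩).castSucc), s q) := h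
        injection h' with h1 h2
        by_cases hp : p ∈ Set.range M <;> by_cases hq : q ∈ Set.range M
        · obtain ⟨b, rfl⟩ := hp
          obtain ⟨b', rfl⟩ := hq
          rw [hMs, hMs] at h2
          rw [h2]
        · rw [dif_pos hp, dif_neg hq] at h1
          exact absurd h1 (Fin.castSucc_lt_last _).ne'
        · rw [dif_neg hp, dif_pos hq] at h1
          exact absurd h1 (Fin.castSucc_lt_last _).ne
        · rw [dif_neg hp, dif_neg hq] at h1
          have hcs : c' ⟨p, hp⟩ = c' ⟨q, hq⟩ := Fin.castSucc_injective _ h1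
          have heq := hc1.1 (a₁ := ⟨p, hp⟩) (a₂ := ⟨q, hq⟩)
            (by show (c' ⟨p, hp⟩, s p) = (c' ⟨q, hq⟩, s q); rw [hcs, h2])
          exact congrArg Subtype.val heq
      · rintro ⟨i, b⟩
        by_cases hi : i = Fin.last k
        · refine ⟨M b, ?_⟩
          show (dite _ _ _, s (M b)) = (i, b)
          rw [dif_pos (Set.mem_range_self b), hMs, hi]
        · obtain ⟨p', hp'⟩ := hc1.2 (i.castPred hi, b)
          have hp'' : (c' p', s p'.1) = (i.castPred hi, b) := hp'
          refine ⟨p'.1, ?_⟩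
          show (dite _ _ _, s p'.1) = (i, b)
          rw [dif_neg p'.2]
          have h1 : c' ⟨p'.1, p'.2⟩ = i.castPred hi := (Prod.ext_iff.mp hp'').1
          injection hp'' with hA hB
          rw [h1, Fin.castSucc_castPred, hB]
    · constructor
      · intro p q h
        have h' : ((if hp : p ∈ Set.range M then Fin.last k else (c' ⟨p, hp⟩).castSucc), t p)
            = ((if hq : q ∈ Set.range M then Fin.last k else (c' ⟨q, hq⟩).castSucc), t q) := h
        injection h' with h1 h2
        by_cases hp : p ∈ Set.range M <;> by_cases hq : q ∈ Set.range M
        · obtain ⟨b, rfl⟩ := hp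
          obtain ⟨b', rfl⟩ := hq
          rw [hMt, hMt] at h2
          rw [hfinj h2]
        · rw [dif_pos hp, dif_neg hq] at h1
          exact absurd h1 (Fin.castSucc_lt_last _).ne'
        · rw [dif_neg hp, dif_pos hq] at h1
          exact absurd h1 (Fin.castSucc_lt_last _).ne
        · rw [dif_neg hp, dif_neg hq] at h1
          have hcs : c' ⟨p, hp⟩ = c' ⟨q, hq⟩ := Fin.castSucc_injective _ h1
          have heq := hc2.1 (a₁ := ⟨p, hp⟩) (a₂ := ⟨q, hq⟩)
            (by show (c' ⟨p, hp⟩, t p) = (c' ⟨q, hq⟩, t q); rw [hcs, h2])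
          exact congrArg Subtype.val heq
      · rintro ⟨i, b⟩
        by_cases hi : i = Fin.last k
        · refine ⟨M (ef.symm b), ?_⟩
          show (dite _ _ _, t (M (ef.symm b))) = (i, b)
          rw [dif_pos (Set.mem_range_self _), hMt, hi]
          have : f (ef.symm b) = b := ef.apply_symm_apply b
          rw [this]
        · obtain ⟨p', hp'⟩ := hc2.2 (i.castPred hi, b)
          have hp'' : (c' p', t p'.1) = (i.castPred hi, b) := hp'
          refine ⟨p'.1, ?_⟩
          show (dite _ _ _, t p'.1) = (i, b)
          rw [dif_neg p'.2]
          have h1 : c' ⟨p'.1, p'.2⟩ = i.castPred hi := (Prod.ext_iff.mp hp'').1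
          injection hp'' with hA hB
          rw [h1, Fin.castSucc_castPred, hB]

lemma finite_case {A B : Type*} [Finite A] [Finite B] (π : Equiv.Perm (A × B)) :
    ∃ (α : A × B → A) (β : A × B → B),
      Function.Bijective (fun p : A × B => (p.1, β p)) ∧
      Function.Bijective (fun p : A × B => (α p, β p)) ∧
      Function.Bijective (fun p : A × B => (α p, (π p).2)) := by
  classical
  cases nonempty_fintype A
  cases nonempty_fintype B
  set k := Fintype.card A with hk
  have hs : ∀ b, (Finset.univ.filter fun p : A × B => p.2 = b).card = k := by
    intro b
    have heq : Finset.univ.filter (fun p : A × B => p.2 = b) =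
        Finset.univ.map ⟨fun a => (a, b), fun a a' h => (Prod.ext_iff.mp h).1⟩ := by
      ext ⟨a, b'⟩
      simp [Prod.ext_iff, eq_comm]
      exact ⟨fun h => ⟨a, rfl, h.symm⟩, fun ⟨_, _, h⟩ => h.symm⟩
    rw [heq, Finset.card_map, Finset.card_univ]
  have ht : ∀ b, (Finset.univ.filter fun p : A × B => (π p).2 = b).card = k := by
    intro b
    have himg : Finset.univ.filter (fun p : A × B => (π p).2 = b) =
        (Finset.univ.filter fun p : A × B => p.2 = b).map π.symm.toEmbedding := by
      ext p
      simp only [Finset.mem_filter, Finset.mem_univ, true_and, Finset.mem_map,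
        Equiv.coe_toEmbedding]
      constructor
      · intro h
        exact ⟨π p, h, π.symm_apply_apply p⟩
      · rintro ⟨q, hq, rfl⟩
        simpa using hq
    rw [himg, Finset.card_map, hs b]
  obtain ⟨c, hc1, hc2⟩ := hall_color k (A × B) (fun p => p.2) (fun p => (π p).2) hs ht
  let eA : Fin k ≃ A := (Fintype.equivFin A).symm
  refine ⟨fun p => eA (c p), fun p => p.2, ?_, ?_, ?_⟩
  · have heq : (fun p : A × B => (p.1, p.2)) = id := funext fun p => Prod.mk.eta
    rw [heq]
    exact Function.bijective_id
  · have heq : (fun p : A × B => (eA (c p), p.2)) =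
        (Equiv.prodCongr eA (Equiv.refl B)) ∘ (fun p => (c p, p.2)) := rfl
    rw [heq]
    exact (Equiv.bijective _).comp hc1
  · have heq : (fun p : A × B => (eA (c p), (π p).2)) =
        (Equiv.prodCongr eA (Equiv.refl B)) ∘ (fun p => (c p, (π p).2)) := rfl
    rw [heq]
    exact (Equiv.bijective _).comp hc2

lemma cond_of_finB {A B : Type*} [Infinite A] [Finite B] (π : Equiv.Perm (A × B)) :
    SaloCond π := by
  intro Sc Sr hSc hSr hne
  obtain ⟨b, hb⟩ : ∃ b, b ∉ Sr := by
    by_contra h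
    push_neg at h
    exact hne (Set.eq_univ_of_forall h)
  have h1 := trfiber_infinite π b
  have h2 : {p : A × B | p.1 ∈ Sc}.Finite := cols_finite hSc
  refine (h1.diff h2).mono ?_
  rintro p ⟨hp1, hp2⟩
  exact ⟨fun h => hp2 h, by rw [show (π p).2 = b from hp1]; exact hb⟩

lemma cond_or {A B : Type*} [Infinite A] [Infinite B] (π : Equiv.Perm (A × B)) :
    SaloCond π ∨ SaloCond (swapPerm π) := by
  by_contra hcon
  push_neg at hcon
  obtain ⟨h1, h2⟩ := hcon
  unfold SaloCond at h1 h2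
  push_neg at h1 h2
  obtain ⟨Sc, Sr, hScf, hSrf, _, hK1⟩ := h1
  obtain ⟨Tr, Tc, hTrf, hTcf, _, hK2⟩ := h2
  have hK1f : {p : A × B | p.1 ∉ Sc ∧ (π p).2 ∉ Sr}.Finite := hK1
  have hK2f : {q : B × A | q.1 ∉ Tr ∧ ((swapPerm π) q).2 ∉ Tc}.Finite := hK2
  obtain ⟨a, ha⟩ := hScf.infinite_compl.nonempty
  have ha' : a ∉ Sc := ha
  have hb1 : {b : B | (a, b) ∈ {p : A × B | p.1 ∉ Sc ∧ (π p).2 ∉ Sr}}.Finite :=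
    (hK1f.image Prod.snd).subset (fun b hb => ⟨(a, b), hb, rfl⟩)
  have hb2 : {b : B | (b, a) ∈ {q : B × A | q.1 ∉ Tr ∧ ((swapPerm π) q).2 ∉ Tc}}.Finite :=
    (hK2f.image Prod.fst).subset (fun b hb => ⟨(b, a), hb, rfl⟩)
  set Bad := ({b : B | (a, b) ∈ {p : A × B | p.1 ∉ Sc ∧ (π p).2 ∉ Sr}} ∪
    ({b : B | (b, a) ∈ {q : B × A | q.1 ∉ Tr ∧ ((swapPerm π) q).2 ∉ Tc}} ∪ Tr)) with hBad
  have hBadf : Bad.Finite := hb1.union (hb2.union hTrf)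
  have hswap : ∀ b : B, ((swapPerm π) (b, a)).2 = (π (a, b)).1 := fun b => rfl
  have himg : ∀ b ∈ Badᶜ, π (a, b) ∈ Tc ×ˢ Sr := by
    intro b hb
    rw [Set.mem_compl_iff, hBad] at hb
    simp only [Set.mem_union, not_or] at hb
    obtain ⟨hnb1, hnb2, hnTr⟩ := hb
    have hc1 : (π (a, b)).2 ∈ Sr := by
      by_contra h
      exact hnb1 ⟨ha', h⟩
    have hc2 : (π (a, b)).1 ∈ Tc := by
      by_contra h
      refine hnb2 ⟨hnTr, ?_⟩
      rw [hswap b]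
      exact h
    exact ⟨hc2, hc1⟩
  have hinjOn : Set.InjOn (fun b : B => π (a, b)) Badᶜ := by
    intro b _ b' _ h
    have heq := π.injective h
    exact (Prod.ext_iff.mp heq).2
  have hinf : (Tc ×ˢ Sr : Set (A × B)).Infinite := by
    refine Set.Infinite.mono ?_ ((hBadf.infinite_compl).image hinjOn)
    rintro _ ⟨b, hb, rfl⟩
    exact himg b hb
  exact hinf (hTcf.prod hSrf)

/-- For countable sets `A` and `B`, `Sym(A × B) = G_L·G_R·G_L·G_R ∪ G_R·G_L·G_R·G_L`:
every permutation of `A × B` is a composition of four permutations alternating between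
the column group `G_L` and the row group `G_R`, in one of the two orders. -/
theorem countable_alternation_diameter_four
    (A B : Type*) [Countable A] [Countable B] (π : Equiv.Perm (A × B)) :
    (∃ l₁ r₁ l₂ r₂ : Equiv.Perm (A × B),
      (∀ p, (l₁ p).2 = p.2) ∧ (∀ p, (r₁ p).1 = p.1) ∧
      (∀ p, (l₂ p).2 = p.2) ∧ (∀ p, (r₂ p).1 = p.1) ∧
      ∀ p, π p = l₁ (r₁ (l₂ (r₂ p)))) ∨
    (∃ r₁ l₁ r₂ l₂ : Equiv.Perm (A × B),
      (∀ p, (r₁ p).1 = p.1) ∧ (∀ p, (l₁ p).2 = p.2) ∧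
      (∀ p, (r₂ p).1 = p.1) ∧ (∀ p, (l₂ p).2 = p.2) ∧
      ∀ p, π p = r₁ (l₁ (r₂ (l₂ p)))) := by
  classical
  rcases isEmpty_or_nonempty (A × B) with hE | hNE
  · left
    exact ⟨1, 1, 1, 1, fun p => rfl, fun p => rfl, fun p => rfl, fun p => rfl,
      fun p => (hE.false p).elim⟩
  · have hA : Nonempty A := ⟨hNE.some.1⟩
    have hB : Nonempty B := ⟨hNE.some.2⟩
    rcases finite_or_infinite A with hfA | hiA
    · rcases finite_or_infinite B with hfB | hiB
      · left
        obtain ⟨α, β, h1, h2, h3⟩ := finite_case π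
        exact reduce_lemma π α β h1 h2 h3
      · right
        obtain ⟨α, β, h1, h2, h3⟩ := exists_albe (swapPerm π) (cond_of_finB (swapPerm π))
        exact right_of_swap π (reduce_lemma (swapPerm π) α β h1 h2 h3)
    · rcases finite_or_infinite B with hfB | hiB
      · left
        obtain ⟨α, β, h1, h2, h3⟩ := exists_albe π (cond_of_finB π)
        exact reduce_lemma π α β h1 h2 h3
      · rcases cond_or π with hc | hc
        · left
          obtain ⟨α, β, h1, h2, h3⟩ := exists_albe π hc
          exact reduce_lemma π α β h1 h2 h3
        · right
          obtain ⟨α, β, h1, h2, h3⟩ := exists_albe (swapPerm π) hc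
          exact right_of_swap π (reduce_lemma (swapPerm π) α β h1 h2 h3)
end

section
/- Let A and B be countably infinite sets. Then Sym(A × B) ≠ G_L·G_R·G_L·G_R and Sym(A × B) ≠ G_R·G_L·G_R·G_L; that is, there exists a permutation of A × B that cannot be written as l₁ ∘ r₁ ∘ l₂ ∘ r₂ with l₁, l₂ ∈ G_L, r₁, r₂ ∈ G_R, and there exists a permutation of A × B that cannot be written as r₁ ∘ l₁ ∘ r₂ ∘ l₂ with r₁, r₂ ∈ G_R, l₁, l₂ ∈ G_L. -/
/-- The basic function on the grid: it sends the complement of column `0`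
bijectively onto row `0`, and column `0` bijectively onto the other rows. -/
private def fgrid : ℕ × ℕ → ℕ × ℕ
  | (0, n) => ((Nat.unpair n).2, (Nat.unpair n).1 + 1)
  | (a+1, b) => (Nat.pair a b, 0)

private def ggrid : ℕ × ℕ → ℕ × ℕ
  | (x, 0) => ((Nat.unpair x).1 + 1, (Nat.unpair x).2)
  | (x, j+1) => (0, Nat.pair j x)

private def pigrid : Equiv.Perm (ℕ × ℕ) where
  toFun := fgrid
  invFun := ggrid
  left_inv := by
    rintro ⟨a | a, b⟩
    · simp [fgrid, ggrid]
    · simp [fgrid, ggrid]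
  right_inv := by
    rintro ⟨x, j | j⟩
    · simp [fgrid, ggrid]
    · simp [fgrid, ggrid]

private lemma pigrid_key (p : ℕ × ℕ) : p.1 = 0 ∨ (pigrid p).2 = 0 := by
  rcases p with ⟨a | a, b⟩
  · left; rfl
  · right; rfl

/-- The core impossibility: `pigrid` cannot be written as `l₁ ∘ r₁ ∘ l₂ ∘ r₂`. -/
private lemma core :
    ¬ ∃ l₁ r₁ l₂ r₂ : Equiv.Perm (ℕ × ℕ),
      (∀ p, (l₁ p).2 = p.2) ∧ (∀ p, (r₁ p).1 = p.1) ∧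
      (∀ p, (l₂ p).2 = p.2) ∧ (∀ p, (r₂ p).1 = p.1) ∧
      ∀ p, pigrid p = l₁ (r₁ (l₂ (r₂ p))) := by
  classical
  rintro ⟨l₁, r₁, l₂, r₂, hl₁, hr₁, hl₂, hr₂, hfac⟩
  have hl₁s : ∀ x, (l₁.symm x).2 = x.2 := fun x => by
    have h := hl₁ (l₁.symm x); rw [Equiv.apply_symm_apply] at h; exact h.symm
  have hr₁s : ∀ x, (r₁.symm x).1 = x.1 := fun x => by
    have h := hr₁ (r₁.symm x); rw [Equiv.apply_symm_apply] at h; exact h.symm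
  set θ : Equiv.Perm (ℕ × ℕ) := r₂.trans l₂ with hθdef
  have hθ : ∀ p, θ p = l₂ (r₂ p) := fun p => rfl
  have hθinv : ∀ p, θ p = r₁.symm (l₁.symm (pigrid p)) := by
    intro p
    rw [hfac p, Equiv.symm_apply_apply, Equiv.symm_apply_apply, hθ]
  have hu : ∀ p, (θ p).1 = (l₁.symm (pigrid p)).1 := fun p => by
    rw [hθinv p, hr₁s]
  have hv : ∀ p, (θ p).2 = (r₂ p).2 := fun p => by rw [hθ, hl₂]
  -- second coordinate of θ is injective on column 0
  have hV : ∀ p q : ℕ × ℕ, p.1 = 0 → q.1 = 0 → (θ p).2 = (θ q).2 → p = q := by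
    intro p q hp hq h
    have h2 : r₂ p = r₂ q := by
      apply Prod.ext
      · rw [hr₂, hr₂, hp, hq]
      · rw [← hv p, ← hv q, h]
    exact r₂.injective h2
  -- first coordinate of θ is injective on the preimage of row 0
  have hU : ∀ p q : ℕ × ℕ, (pigrid p).2 = 0 → (pigrid q).2 = 0 →
      (θ p).1 = (θ q).1 → p = q := by
    intro p q hp hq h
    have h2 : l₁.symm (pigrid p) = l₁.symm (pigrid q) := by
      apply Prod.ext
      · rw [← hu p, ← hu q, h]
      · rw [hl₁s, hl₁s, hp, hq]
    exact pigrid.injective (l₁.symm.injective h2)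
  -- counting: the θ-preimages of the 3×3 box inject into a 6-element type
  set c : Fin 3 × Fin 3 → ℕ × ℕ := fun x => θ.symm ((x.1 : ℕ), (x.2 : ℕ)) with hc
  have hθc : ∀ x : Fin 3 × Fin 3, θ (c x) = ((x.1 : ℕ), (x.2 : ℕ)) := fun x =>
    θ.apply_symm_apply _
  have hcinj : Function.Injective c := by
    intro x y h
    have h' := congrArg θ h
    rw [hθc, hθc] at h'
    have h1 : (x.1 : ℕ) = (y.1 : ℕ) := congrArg Prod.fst h'
    have h2 : (x.2 : ℕ) = (y.2 : ℕ) := congrArg Prod.snd h'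
    exact Prod.ext (Fin.val_injective h1) (Fin.val_injective h2)
  set F : Fin 3 × Fin 3 → Fin 3 ⊕ Fin 3 :=
    fun x => if (c x).1 = 0 then Sum.inl x.2 else Sum.inr x.1 with hF
  have hFinj : Function.Injective F := by
    intro x y h
    simp only [hF] at h
    by_cases hx : (c x).1 = 0 <;> by_cases hy : (c y).1 = 0 <;>
      simp only [hx, hy, if_true, if_false, if_pos, if_neg, not_false_iff] at h
    · -- both in column 0
      have h2 : x.2 = y.2 := by simpa using h
      have hcxy : c x = c y := by
        apply hV _ _ hx hy
        rw [hθc, hθc]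
        exact congrArg Fin.val h2
      exact hcinj hcxy
    · exact absurd h (by simp)
    · exact absurd h (by simp)
    · -- both in preimage of row 0
      have h1 : x.1 = y.1 := by simpa using h
      have hpx : (pigrid (c x)).2 = 0 := (pigrid_key (c x)).resolve_left hx
      have hpy : (pigrid (c y)).2 = 0 := (pigrid_key (c y)).resolve_left hy
      have hcxy : c x = c y := by
        apply hU _ _ hpx hpy
        rw [hθc, hθc]
        exact congrArg Fin.val h1
      exact hcinj hcxy
  have hcard := Fintype.card_le_of_injective F hFinj
  simp [Fintype.card_prod, Fintype.card_sum] at hcard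

/-- For countably infinite sets `A` and `B`, neither `G_L·G_R·G_L·G_R` nor
`G_R·G_L·G_R·G_L` is all of `Sym(A × B)`. -/
theorem countable_infinite_not_four_one_order
    (A B : Type*) [Countable A] [Infinite A] [Countable B] [Infinite B] :
    (∃ π : Equiv.Perm (A × B),
      ¬ ∃ l₁ r₁ l₂ r₂ : Equiv.Perm (A × B),
        (∀ p, (l₁ p).2 = p.2) ∧ (∀ p, (r₁ p).1 = p.1) ∧
        (∀ p, (l₂ p).2 = p.2) ∧ (∀ p, (r₂ p).1 = p.1) ∧
        ∀ p, π p = l₁ (r₁ (l₂ (r₂ p)))) ∧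
    (∃ π : Equiv.Perm (A × B),
      ¬ ∃ r₁ l₁ r₂ l₂ : Equiv.Perm (A × B),
        (∀ p, (r₁ p).1 = p.1) ∧ (∀ p, (l₁ p).2 = p.2) ∧
        (∀ p, (r₂ p).1 = p.1) ∧ (∀ p, (l₂ p).2 = p.2) ∧
        ∀ p, π p = r₁ (l₁ (r₂ (l₂ p)))) := by
  have hA : Nonempty (A ≃ ℕ) := by
    haveI := Encodable.ofCountable A
    haveI := Denumerable.ofEncodableOfInfinite A
    exact ⟨Denumerable.eqv A⟩
  have hB : Nonempty (B ≃ ℕ) := by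
    haveI := Encodable.ofCountable B
    haveI := Denumerable.ofEncodableOfInfinite B
    exact ⟨Denumerable.eqv B⟩
  obtain ⟨eA⟩ := hA
  obtain ⟨eB⟩ := hB
  constructor
  · -- order l₁ r₁ l₂ r₂
    set E : A × B ≃ ℕ × ℕ := eA.prodCongr eB with hE
    have hE1 : ∀ p : A × B, (E p).1 = eA p.1 := fun p => rfl
    have hE2 : ∀ p : A × B, (E p).2 = eB p.2 := fun p => rfl
    have hEs1 : ∀ q : ℕ × ℕ, (E.symm q).1 = eA.symm q.1 := fun q => rfl
    have hEs2 : ∀ q : ℕ × ℕ, (E.symm q).2 = eB.symm q.2 := fun q => rfl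
    refine ⟨(E.trans pigrid).trans E.symm, ?_⟩
    rintro ⟨l₁, r₁, l₂, r₂, hl₁, hr₁, hl₂, hr₂, hfac⟩
    apply core
    refine ⟨(E.symm.trans l₁).trans E, (E.symm.trans r₁).trans E,
            (E.symm.trans l₂).trans E, (E.symm.trans r₂).trans E, ?_, ?_, ?_, ?_, ?_⟩
    · intro q
      show (E (l₁ (E.symm q))).2 = q.2
      rw [hE2, hl₁, hEs2, Equiv.apply_symm_apply]
    · intro q
      show (E (r₁ (E.symm q))).1 = q.1
      rw [hE1, hr₁, hEs1, Equiv.apply_symm_apply]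
    · intro q
      show (E (l₂ (E.symm q))).2 = q.2
      rw [hE2, hl₂, hEs2, Equiv.apply_symm_apply]
    · intro q
      show (E (r₂ (E.symm q))).1 = q.1
      rw [hE1, hr₂, hEs1, Equiv.apply_symm_apply]
    · intro q
      have h := hfac (E.symm q)
      simp only [Equiv.trans_apply, Equiv.apply_symm_apply] at h
      simp only [Equiv.trans_apply, Equiv.symm_apply_apply]
      rw [← h]
      simp
  · -- order r₁ l₁ r₂ l₂ : conjugate with the swap of coordinates
    set E : A × B ≃ ℕ × ℕ := (eA.prodCongr eB).trans (Equiv.prodComm ℕ ℕ) with hE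
    have hE1 : ∀ p : A × B, (E p).1 = eB p.2 := fun p => rfl
    have hE2 : ∀ p : A × B, (E p).2 = eA p.1 := fun p => rfl
    have hEs1 : ∀ q : ℕ × ℕ, (E.symm q).1 = eA.symm q.2 := fun q => rfl
    have hEs2 : ∀ q : ℕ × ℕ, (E.symm q).2 = eB.symm q.1 := fun q => rfl
    refine ⟨(E.trans pigrid).trans E.symm, ?_⟩
    rintro ⟨r₁, l₁, r₂, l₂, hr₁, hl₁, hr₂, hl₂, hfac⟩
    apply core
    refine ⟨(E.symm.trans r₁).trans E, (E.symm.trans l₁).trans E,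
            (E.symm.trans r₂).trans E, (E.symm.trans l₂).trans E, ?_, ?_, ?_, ?_, ?_⟩
    · intro q
      show (E (r₁ (E.symm q))).2 = q.2
      rw [hE2, hr₁, hEs1, Equiv.apply_symm_apply]
    · intro q
      show (E (l₁ (E.symm q))).1 = q.1
      rw [hE1, hl₁, hEs2, Equiv.apply_symm_apply]
    · intro q
      show (E (r₂ (E.symm q))).2 = q.2
      rw [hE2, hr₂, hEs1, Equiv.apply_symm_apply]
    · intro q
      show (E (l₂ (E.symm q))).1 = q.1
      rw [hE1, hl₂, hEs2, Equiv.apply_symm_apply]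
    · intro q
      have h := hfac (E.symm q)
      simp only [Equiv.trans_apply, Equiv.apply_symm_apply] at h
      simp only [Equiv.trans_apply, Equiv.symm_apply_apply]
      rw [← h]
      simp
end

section
/- Let A be a set with at least two elements and let B be an infinite set. Then Sym(A × B) ≠ G_R·G_L·G_R; that is, there exists a permutation of A × B that cannot be written as r₁ ∘ l ∘ r₂ with r₁, r₂ ∈ G_R and l ∈ G_L. -/
/-- If `A` has at least two elements and `B` is infinite, then
`Sym(A × B) ≠ G_R·G_L·G_R`: some permutation of `A × B` is not a composition
`r₁ ∘ l ∘ r₂` with `r₁, r₂` in the row group and `l` in the column group. -/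
theorem not_RLR_of_infinite (A B : Type*) [Nontrivial A] [Infinite B] :
    ∃ π : Equiv.Perm (A × B),
      ¬ ∃ r₁ l r₂ : Equiv.Perm (A × B),
        (∀ p, (r₁ p).1 = p.1) ∧ (∀ p, (l p).2 = p.2) ∧ (∀ p, (r₂ p).1 = p.1) ∧
        ∀ p, π p = r₁ (l (r₂ p)) := by
  classical
  obtain ⟨a₀, a₁, hne⟩ := exists_pair_ne A
  set e := Infinite.natEmbedding B with he
  have einj : Function.Injective e := e.injective
  set einv : B → ℕ := Function.invFun e with heinv
  have hinv : ∀ n, einv (e n) = n := fun n => Function.leftInverse_invFun einj n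
  set p : A × B → Prop := fun x => (x.1 = a₀ ∨ x.1 = a₁) ∧ ∃ n : ℕ, e n = x.2 with hp
  set F : ℤ → Subtype p := fun n =>
    if h : 0 ≤ n then ⟨(a₁, e n.toNat), Or.inr rfl, n.toNat, rfl⟩
    else ⟨(a₀, e (-(n + 1)).toNat), Or.inl rfl, (-(n + 1)).toNat, rfl⟩ with hF
  set G : Subtype p → ℤ := fun x =>
    if x.val.1 = a₁ then (einv x.val.2 : ℤ) else -(einv x.val.2) - 1 with hG
  have hGF : Function.LeftInverse G F := by
    intro n
    by_cases h : 0 ≤ n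
    · rw [hF]
      simp only
      rw [dif_pos h, hG]
      simp only
      simp only [if_true]
      rw [hinv]
      omega
    · rw [hF]
      simp only
      rw [dif_neg h, hG]
      simp only
      rw [if_neg hne, hinv]
      omega
  have hFsurj : Function.Surjective F := by
    rintro ⟨⟨a, b⟩, ha, n, hn⟩
    rcases ha with ha | ha
    · refine ⟨-(n : ℤ) - 1, ?_⟩
      rw [hF]
      simp only
      have hneg : ¬ (0 : ℤ) ≤ -(n : ℤ) - 1 := by omega
      rw [dif_neg hneg]
      apply Subtype.ext
      apply Prod.ext
      · exact ha.symm
      · show e (-(-(n : ℤ) - 1 + 1)).toNat = b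
        have h' : (-(-(n : ℤ) - 1 + 1)).toNat = n := by omega
        rw [h']; exact hn
    · refine ⟨(n : ℤ), ?_⟩
      rw [hF]
      simp only
      rw [dif_pos (Int.ofNat_nonneg n)]
      apply Subtype.ext
      apply Prod.ext
      · exact ha.symm
      · show e ((n : ℤ)).toNat = b
        rw [Int.toNat_natCast]; exact hn
  let g : ℤ ≃ Subtype p := Equiv.ofBijective F ⟨hGF.injective, hFsurj⟩
  have hgapp : ∀ n, g n = F n := fun n => rfl
  refine ⟨(Equiv.addRight (1 : ℤ)).extendDomain g, ?_⟩
  rintro ⟨r₁, l, r₂, h₁, h₂, h₃, hπ⟩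
  set π := (Equiv.addRight (1 : ℤ)).extendDomain g with hπdef
  -- key fact 1 : π (a₀, e 0) = (a₁, e 0)
  have hp0 : p (a₀, e 0) := ⟨Or.inl rfl, 0, rfl⟩
  have key1 : π (a₀, e 0) = (a₁, e 0) := by
    have hext := Equiv.Perm.extendDomain_apply_subtype (Equiv.addRight (1 : ℤ)) g hp0
    rw [hπdef, hext]
    have hsymm : g.symm ⟨(a₀, e 0), hp0⟩ = -1 := by
      rw [Equiv.symm_apply_eq, hgapp, hF]
      simp only
      rw [dif_neg (by norm_num : ¬ (0:ℤ) ≤ -1)]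
      apply Subtype.ext
      apply Prod.ext
      · rfl
      · show e (-(-1 + 1 : ℤ)).toNat = e 0
        norm_num
    rw [hsymm]
    have : (Equiv.addRight (1 : ℤ)) (-1) = 0 := by
      simp [Equiv.addRight]
    rw [this, hgapp, hF]
    simp only
    rw [dif_pos le_rfl]
    rfl
  -- key fact 2 : π keeps row a₁ inside row a₁
  have key2 : ∀ x : B, (π (a₁, x)).1 = a₁ := by
    intro x
    by_cases hx : p (a₁, x)
    · have hext := Equiv.Perm.extendDomain_apply_subtype (Equiv.addRight (1 : ℤ)) g hx
      rw [hπdef, hext]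
      obtain ⟨-, n, hn⟩ := id hx
      have hsymm : g.symm ⟨(a₁, x), hx⟩ = (n : ℤ) := by
        rw [Equiv.symm_apply_eq, hgapp, hF]
        simp only
        rw [dif_pos (Int.ofNat_nonneg n)]
        apply Subtype.ext
        apply Prod.ext
        · rfl
        · show (a₁, x).2 = e ((n : ℤ)).toNat
          rw [Int.toNat_natCast]; exact hn.symm
      rw [hsymm]
      have h1 : (Equiv.addRight (1 : ℤ)) (n : ℤ) = (n : ℤ) + 1 := rfl
      rw [h1, hgapp, hF]
      simp only
      rw [dif_pos (by positivity : (0:ℤ) ≤ (n : ℤ) + 1)]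
    · rw [hπdef, Equiv.Perm.extendDomain_apply_not_subtype _ g hx]
  -- derive the contradiction
  have h₃' : ∀ q, (r₂.symm q).1 = q.1 := by
    intro q
    have h := h₃ (r₂.symm q)
    rw [Equiv.apply_symm_apply] at h
    exact h.symm
  set c := (r₂ (a₀, e 0)).2 with hc
  have hr0 : r₂ (a₀, e 0) = (a₀, c) := Prod.ext (h₃ _) rfl
  set x := (r₂.symm (a₁, c)).2 with hx
  have hr1 : r₂ (a₁, x) = (a₁, c) := by
    have h : r₂.symm (a₁, c) = (a₁, x) := Prod.ext (h₃' _) rfl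
    rw [← h, Equiv.apply_symm_apply]
  have hl : l (a₀, c) ≠ l (a₁, c) := fun h => hne (congrArg Prod.fst (l.injective h))
  have hlfst : (l (a₀, c)).1 ≠ (l (a₁, c)).1 := by
    intro h
    exact hl (Prod.ext h ((h₂ (a₀, c)).trans (h₂ (a₁, c)).symm))
  have e1 : (π (a₀, e 0)).1 = (l (a₀, c)).1 := by rw [hπ, hr0, h₁]
  have e2 : (π (a₁, x)).1 = (l (a₁, c)).1 := by rw [hπ, hr1, h₁]
  rw [key1] at e1
  rw [key2 x] at e2
  exact hlfst (e1 ▸ e2 ▸ rfl)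
end

section
/- Let A be an arbitrary set and let B be a finite set. Then Sym(A × B) = G_R·G_L·G_R; that is, every permutation π of A × B can be written as π = r₁ ∘ l ∘ r₂ with r₁, r₂ ∈ G_R and l ∈ G_L. -/
open Function

private lemma RLR_matching_exists {A B : Type*} [Fintype B] [Nonempty B]
    (π : Equiv.Perm (A × B)) :
    ∃ f : A → A, Function.Injective f ∧ ∀ a, ∃ b, (π (a, b)).1 = f a := by
  classical
  set t : A → Finset A := fun a => Finset.image (fun b => (π (a, b)).1) Finset.univ with ht
  have hall : ∀ s : Finset A, s.card ≤ (s.biUnion t).card := by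
    intro s
    have hcard : (s ×ˢ (Finset.univ : Finset B)).card ≤
        ((s.biUnion t) ×ˢ (Finset.univ : Finset B)).card := by
      apply Finset.card_le_card_of_injOn (fun p => π p)
      · rintro ⟨a, b⟩ hp
        simp only [Finset.mem_coe, Finset.mem_product, Finset.mem_univ, and_true] at hp ⊢
        exact Finset.mem_biUnion.mpr ⟨a, hp, Finset.mem_image.mpr ⟨b, Finset.mem_univ b, rfl⟩⟩
      · exact fun x _ y _ h => π.injective h
    simp only [Finset.card_product] at hcard
    have hB : 0 < Fintype.card B := Fintype.card_pos
    exact Nat.le_of_mul_le_mul_right (by simpa [Finset.card_univ, mul_comm] using hcard) hB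
  obtain ⟨f, hinj, hmem⟩ := (Finset.all_card_le_biUnion_card_iff_exists_injective t).mp hall
  refine ⟨f, hinj, fun a => ?_⟩
  have := hmem a
  simp only [ht, Finset.mem_image, Finset.mem_univ, true_and] at this
  exact this


private lemma RLR_csb {A : Type*} (f g : A → A) (hf : Function.Injective f)
    (hg : Function.Injective g) (r : A → A → Prop)
    (h1 : ∀ a, r a (f a)) (h2 : ∀ a, r (g a) a) :
    ∃ h : A ≃ A, ∀ a, r a (h a) := by
  classical
  cases isEmpty_or_nonempty A with
  | inl hA => exact ⟨Equiv.refl A, fun a => (hA.false a).elim⟩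
  | inr hA => ?_
  set C : Set A := ⋃ n : ℕ, (g ∘ f)^[n] '' (Set.range g)ᶜ with hC
  have hgfC : ∀ a ∈ C, g (f a) ∈ C := by
    intro a ha
    obtain ⟨n, x, hx, rfl⟩ : ∃ n x, x ∈ (Set.range g)ᶜ ∧ (g ∘ f)^[n] x = a := by
      obtain ⟨n, hn⟩ := Set.mem_iUnion.mp ha
      obtain ⟨x, hx, hxeq⟩ := hn
      exact ⟨n, x, hx, hxeq⟩
    refine Set.mem_iUnion.mpr ⟨n + 1, x, hx, ?_⟩
    rw [Function.iterate_succ_apply']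
    rfl
  have hCc : ∀ a, a ∉ C → a ∈ Set.range g := by
    intro a ha
    by_contra h
    exact ha (Set.mem_iUnion.mpr ⟨0, by simpa using h⟩)
  set F : A → A := fun a => if a ∈ C then f a else Function.invFun g a with hF
  have hgF : ∀ a, a ∉ C → g (F a) = a := by
    intro a ha
    simp only [hF, if_neg ha]
    exact Function.invFun_eq (hCc a ha)
  have hFC : ∀ a ∈ C, F a = f a := fun a ha => by simp [hF, ha]
  have hinj : Function.Injective F := by
    intro a b hab
    by_cases ha : a ∈ C <;> by_cases hb : b ∈ C
    · exact hf (by rwa [hFC a ha, hFC b hb] at hab)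
    · exfalso; apply hb
      have : g (f a) = b := by rw [← hFC a ha, hab, hgF b hb]
      exact this ▸ hgfC a ha
    · exfalso; apply ha
      have : g (f b) = a := by rw [← hFC b hb, ← hab, hgF a ha]
      exact this ▸ hgfC b hb
    · have := congrArg g hab
      rwa [hgF a ha, hgF b hb] at this
  have hsurj : Function.Surjective F := by
    intro y
    by_cases hy : g y ∈ C
    · obtain ⟨n, x, hx, hxy⟩ : ∃ n x, x ∈ (Set.range g)ᶜ ∧ (g ∘ f)^[n] x = g y := by
        obtain ⟨n, hn⟩ := Set.mem_iUnion.mp hy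
        obtain ⟨x, hx, hxeq⟩ := hn
        exact ⟨n, x, hx, hxeq⟩
      cases n with
      | zero =>
        simp only [Function.iterate_zero, id_eq] at hxy
        exact absurd ⟨y, hxy.symm⟩ hx
      | succ n =>
        rw [Function.iterate_succ_apply'] at hxy
        set z := (g ∘ f)^[n] x with hz
        have hzC : z ∈ C := Set.mem_iUnion.mpr ⟨n, x, hx, rfl⟩
        have : f z = y := hg hxy
        exact ⟨z, by rw [hFC z hzC, this]⟩
    · refine ⟨g y, ?_⟩
      have := hgF (g y) hy
      exact hg this
  refine ⟨Equiv.ofBijective F ⟨hinj, hsurj⟩, fun a => ?_⟩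
  show r a (F a)
  by_cases ha : a ∈ C
  · rw [hFC a ha]; exact h1 a
  · have := hgF a ha
    have h2' := h2 (F a)
    rwa [this] at h2'

private def RLR_iota {A B : Type*} (b₀ : B) :
    A × {b : B // b ≠ b₀} ≃ {x : A × B // x.2 ≠ b₀} where
  toFun p := ⟨(p.1, p.2.1), p.2.2⟩
  invFun x := (x.1.1, ⟨x.1.2, x.2⟩)
  left_inv _ := rfl
  right_inv _ := rfl

private lemma RLR_key {A : Type*} : ∀ (n : ℕ) (B : Type*) [Fintype B],
    Fintype.card B = n →
    ∀ π : Equiv.Perm (A × B), ∃ r₁ l r₂ : Equiv.Perm (A × B),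
      (∀ p, (r₁ p).1 = p.1) ∧ (∀ p, (l p).2 = p.2) ∧ (∀ p, (r₂ p).1 = p.1) ∧
      ∀ p, π p = r₁ (l (r₂ p)) := by
  intro n
  induction n with
  | zero =>
    intro B _ hB π
    haveI : IsEmpty B := Fintype.card_eq_zero_iff.mp hB
    exact ⟨1, 1, 1, fun p => (this.false p.2).elim, fun p => (this.false p.2).elim,
      fun p => (this.false p.2).elim, fun p => (this.false p.2).elim⟩
  | succ n ih =>
    intro B _ hB π
    classical
    haveI hNe : Nonempty B := Fintype.card_pos_iff.mp (by omega)
    obtain ⟨f, hfinj, hf⟩ := RLR_matching_exists π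
    obtain ⟨g, hginj, hg⟩ := RLR_matching_exists π.symm
    have hg' : ∀ a, ∃ b, (π (g a, b)).1 = a := by
      intro a
      obtain ⟨b, hb⟩ := hg a
      refine ⟨(π.symm (a, b)).2, ?_⟩
      have hx : π.symm (a, b) = (g a, (π.symm (a, b)).2) := Prod.ext hb rfl
      rw [← hx, Equiv.apply_symm_apply]
    obtain ⟨h, hh⟩ := RLR_csb f g hfinj hginj (fun a a' => ∃ b, (π (a, b)).1 = a') hf hg'
    set m : A → B := fun a => (hh a).choose with hm
    have hmspec : ∀ a, (π (a, m a)).1 = h a := fun a => (hh a).choose_spec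
    obtain ⟨b₀⟩ := hNe
    set τ : Equiv.Perm (A × B) := Equiv.prodCongrRight (fun a => Equiv.swap b₀ (m a)) with hτ
    set lam : Equiv.Perm (A × B) := Equiv.prodCongr h (Equiv.refl B) with hlam
    have hlam_apply : ∀ x : A × B, lam x = (h x.1, x.2) := fun x => by
      obtain ⟨a, b⟩ := x; simp [hlam]
    have hτb₀ : ∀ a, τ (a, b₀) = (a, m a) := fun a => by
      simp [hτ]
    set s : A → B := fun a => (lam.symm (π (τ (a, b₀)))).2 with hs
    set r₀ : Equiv.Perm (A × B) := Equiv.prodCongrRight (fun a => Equiv.swap (s a) b₀) with hr₀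
    set π₃ : Equiv.Perm (A × B) := (τ.trans π).trans (lam.symm.trans r₀) with hπ₃
    have hπ₃_apply : ∀ x, π₃ x = r₀ (lam.symm (π (τ x))) := fun x => rfl
    have hπ₃b₀ : ∀ a, π₃ (a, b₀) = (a, b₀) := by
      intro a
      rw [hπ₃_apply, hτb₀]
      have h1 : lam.symm (π (a, m a)) = (a, s a) := by
        have hfst : (lam.symm (π (a, m a))).1 = a := by
          have : lam (lam.symm (π (a, m a))) = π (a, m a) := lam.apply_symm_apply _
          rw [hlam_apply] at this
          have := congrArg Prod.fst this
          simp only at this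
          rw [hmspec] at this
          exact h.injective this
        have hsnd : (lam.symm (π (a, m a))).2 = s a := by
          show _ = (lam.symm (π (τ (a, b₀)))).2
          rw [hτb₀]
        exact Prod.ext hfst hsnd
      rw [h1, hr₀]
      simp
    have hpred : ∀ x : A × B, x.2 ≠ b₀ ↔ (π₃ x).2 ≠ b₀ := by
      intro x
      constructor
      · intro hx hc
        have h1 : π₃ x = ((π₃ x).1, b₀) := Prod.ext rfl hc
        have h2 : π₃ ((π₃ x).1, b₀) = ((π₃ x).1, b₀) := hπ₃b₀ _
        have := π₃.injective (h1.trans h2.symm)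
        exact hx (congrArg Prod.snd this)
      · intro hx hc
        apply hx
        have h1 : x = (x.1, b₀) := Prod.ext rfl hc
        rw [h1, hπ₃b₀]
    set B' := {b : B // b ≠ b₀} with hB'
    have hcardB' : Fintype.card B' = n := by
      have h1 : Fintype.card {b : B // b = b₀} = 1 := Fintype.card_subtype_eq b₀
      have := Fintype.card_subtype_compl (fun b : B => b = b₀)
      rw [hB, h1] at this
      simpa [hB'] using this
    set ι : A × B' ≃ {x : A × B // x.2 ≠ b₀} := RLR_iota b₀ with hι
    set π₃' : Equiv.Perm (A × B') := ι.trans ((π₃.subtypePerm (fun x => (hpred x).symm)).trans ι.symm) with hπ₃'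
    obtain ⟨r₁', l', r₂', h1', h2', h3', heq'⟩ := ih B' hcardB' π₃'
    set R₁ : Equiv.Perm (A × B) := r₁'.extendDomain ι with hR₁
    set L : Equiv.Perm (A × B) := l'.extendDomain ι with hL
    set R₂ : Equiv.Perm (A × B) := r₂'.extendDomain ι with hR₂
    -- first-coordinate preservation of extensions
    have hextfst : ∀ (e : Equiv.Perm (A × B')), (∀ p, (e p).1 = p.1) →
        ∀ x : A × B, (e.extendDomain ι x).1 = x.1 := by
      intro e he x
      by_cases hx : x.2 ≠ b₀
      · rw [e.extendDomain_apply_subtype ι hx]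
        exact he (ι.symm ⟨x, hx⟩)
      · rw [e.extendDomain_apply_not_subtype ι hx]
    have hextsnd : ∀ (e : Equiv.Perm (A × B')), (∀ p, (e p).2 = p.2) →
        ∀ x : A × B, (e.extendDomain ι x).2 = x.2 := by
      intro e he x
      by_cases hx : x.2 ≠ b₀
      · rw [e.extendDomain_apply_subtype ι hx]
        exact congrArg Subtype.val (he (ι.symm ⟨x, hx⟩))
      · rw [e.extendDomain_apply_not_subtype ι hx]
    have hR₁fst : ∀ x : A × B, (R₁ x).1 = x.1 := hextfst r₁' h1'
    have hLsnd : ∀ x : A × B, (L x).2 = x.2 := hextsnd l' h2'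
    have hR₂fst : ∀ x : A × B, (R₂ x).1 = x.1 := hextfst r₂' h3'
    -- the decomposition of π₃
    have hcomm : ∀ (e : Equiv.Perm (A × B')) (y : A × B'),
        e.extendDomain ι ((ι y : {x : A × B // x.2 ≠ b₀}) : A × B) = (ι (e y) : A × B) :=
      fun e y => Equiv.Perm.extendDomain_apply_image e ι y
    have hdecomp : ∀ x : A × B, π₃ x = R₁ (L (R₂ x)) := by
      intro x
      by_cases hx : x.2 ≠ b₀
      · have hxe : x = ((ι (ι.symm ⟨x, hx⟩) : {x : A × B // x.2 ≠ b₀}) : A × B) := by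
          rw [Equiv.apply_symm_apply]
        set y := ι.symm ⟨x, hx⟩ with hy
        calc π₃ x = ((ι (π₃' y) : {x : A × B // x.2 ≠ b₀}) : A × B) := by
              rw [hπ₃']
              simp only [Equiv.trans_apply, Equiv.apply_symm_apply]
              rw [hy, Equiv.apply_symm_apply, Equiv.Perm.subtypePerm_apply]
          _ = ((ι (r₁' (l' (r₂' y))) : {x : A × B // x.2 ≠ b₀}) : A × B) := by rw [heq' y]
          _ = R₁ (L (R₂ x)) := by
              conv_rhs => rw [hxe]
              rw [hR₂, hcomm r₂' y, hL, hcomm l' (r₂' y), hR₁, hcomm r₁' (l' (r₂' y))]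
      · push_neg at hx
        have hxx : x = (x.1, b₀) := Prod.ext rfl hx
        rw [hR₂, r₂'.extendDomain_apply_not_subtype ι (by simp [hx]),
          hL, l'.extendDomain_apply_not_subtype ι (by simp [hx]),
          hR₁, r₁'.extendDomain_apply_not_subtype ι (by simp [hx])]
        rw [hxx, hπ₃b₀]
    -- reassemble
    have hinvfst : ∀ (σ : Equiv.Perm (A × B)), (∀ p, (σ p).1 = p.1) →
        ∀ p, (σ⁻¹ p).1 = p.1 := by
      intro σ hσ p
      have := hσ (σ⁻¹ p)
      rw [(show ∀ (e : Equiv.Perm (A × B)) (x : A × B), e (e⁻¹ x) = x from fun e x => e.apply_symm_apply x)] at this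
      exact this.symm
    have hτfst : ∀ p : A × B, (τ p).1 = p.1 := fun p => by
      obtain ⟨a, b⟩ := p; simp [hτ]
    have hr₀fst : ∀ p : A × B, (r₀ p).1 = p.1 := fun p => by
      obtain ⟨a, b⟩ := p; simp [hr₀]
    have hπdecomp : ∀ p : A × B, π p = lam (r₀⁻¹ (π₃ (τ⁻¹ p))) := by
      intro p
      rw [hπ₃_apply, (show ∀ (e : Equiv.Perm (A × B)) (x : A × B), e (e⁻¹ x) = x from fun e x => e.apply_symm_apply x), (show ∀ (e : Equiv.Perm (A × B)) (x : A × B), e⁻¹ (e x) = x from fun e x => e.symm_apply_apply x),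
        Equiv.apply_symm_apply]
    refine ⟨(lam * r₀⁻¹ * R₁) * lam⁻¹, lam * L, R₂ * τ⁻¹, ?_, ?_, ?_, ?_⟩
    · intro p
      simp only [Equiv.Perm.mul_apply]
      rw [hlam_apply]
      show h ((r₀⁻¹ (R₁ (lam⁻¹ p))).1) = p.1
      rw [hinvfst r₀ hr₀fst, hR₁fst]
      have := hlam_apply (lam⁻¹ p)
      rw [(show ∀ (e : Equiv.Perm (A × B)) (x : A × B), e (e⁻¹ x) = x from fun e x => e.apply_symm_apply x)] at this
      exact (congrArg Prod.fst this).symm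
    · intro p
      simp only [Equiv.Perm.mul_apply]
      rw [hlam_apply]
      exact hLsnd p
    · intro p
      simp only [Equiv.Perm.mul_apply]
      rw [hR₂fst]
      exact hinvfst τ hτfst p
    · intro p
      simp only [Equiv.Perm.mul_apply]
      rw [(show ∀ (e : Equiv.Perm (A × B)) (x : A × B), e⁻¹ (e x) = x from fun e x => e.symm_apply_apply x), hπdecomp p, hdecomp]

/-- If `B` is finite (and `A` arbitrary), then `Sym(A × B) = G_R·G_L·G_R`:
every permutation of `A × B` is a composition `r₁ ∘ l ∘ r₂` with `r₁, r₂` in the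
row group and `l` in the column group. -/
theorem RLR_of_finite_right (A B : Type*) [Finite B] (π : Equiv.Perm (A × B)) :
    ∃ r₁ l r₂ : Equiv.Perm (A × B),
      (∀ p, (r₁ p).1 = p.1) ∧ (∀ p, (l p).2 = p.2) ∧ (∀ p, (r₂ p).1 = p.1) ∧
      ∀ p, π p = r₁ (l (r₂ p)) := by
  haveI : Fintype B := Fintype.ofFinite B
  exact RLR_key (Fintype.card B) B rfl π
end

section
/- Let K be a field and let V and W be finite-dimensional vector spaces over K. Let G = GL(V × W) be the group of K-linear automorphisms of V × W, let G_L ≤ G be the subgroup of linear automorphisms g with g(v,w) = (v', w) for some v' (for all (v,w)), and let G_R ≤ G be the subgroup of linear automorphisms g with g(v,w) = (v, w') for some w'. Then G = G_L·G_R·G_L and G = G_R·G_L·G_R; that is, every K-linear automorphism of V × W can be written as g₁ ∘ g₂ ∘ g₃ with g₁, g₃ ∈ G_L, g₂ ∈ G_R, and also as h₁ ∘ h₂ ∘ h₃ with h₁, h₃ ∈ G_R, h₂ ∈ G_L. -/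
open LinearMap Module

section Aux

variable {K V W : Type*} [Field K] [AddCommGroup V] [Module K V]
  [AddCommGroup W] [Module K W]

/-- Shear fixing the second coordinate. -/
def eL (B : W →ₗ[K] V) : (V × W) ≃ₗ[K] (V × W) :=
  LinearEquiv.ofLinear
    (LinearMap.prod (fst K V W + B ∘ₗ snd K V W) (snd K V W))
    (LinearMap.prod (fst K V W - B ∘ₗ snd K V W) (snd K V W))
    (by apply LinearMap.ext; intro p; simp)
    (by apply LinearMap.ext; intro p; simp)

@[simp] lemma eL_apply (B : W →ₗ[K] V) (p : V × W) : eL B p = (p.1 + B p.2, p.2) := rfl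

/-- Triangular map fixing the first coordinate, with invertible diagonal block. -/
def eR (c : V →ₗ[K] W) (d : W ≃ₗ[K] W) : (V × W) ≃ₗ[K] (V × W) :=
  LinearEquiv.ofLinear
    (LinearMap.prod (fst K V W) (c ∘ₗ fst K V W + d.toLinearMap ∘ₗ snd K V W))
    (LinearMap.prod (fst K V W) (d.symm.toLinearMap ∘ₗ (snd K V W - c ∘ₗ fst K V W)))
    (by apply LinearMap.ext; intro p; simp)
    (by apply LinearMap.ext; intro p; simp)

@[simp] lemma eR_apply (c : V →ₗ[K] W) (d : W ≃ₗ[K] W) (p : V × W) :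
    eR c d p = (p.1, c p.1 + d p.2) := rfl

lemma key_s14 [FiniteDimensional K W] (c : V →ₗ[K] W) (d : W →ₗ[K] W)
    (h : range c ⊔ range d = ⊤) :
    ∃ B : W →ₗ[K] V, Function.Bijective (c ∘ₗ B + d) := by
  classical
  obtain ⟨S₀, hS₀⟩ := Submodule.exists_isCompl ((range c ⊓ range d).comap (range c).subtype)
  set S : Submodule K W := S₀.map (range c).subtype with hS
  have hSle : S ≤ range c := by
    rw [hS]; exact (Submodule.map_subtype_le _ _)
  have hSd : IsCompl S (range d) := by
    constructor
    · rw [disjoint_iff, eq_bot_iff]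
      rintro x ⟨hxS, hxd⟩
      have hxc : x ∈ range c := hSle hxS
      obtain ⟨y, hyS₀, rfl⟩ := hxS
      have hy : y ∈ (range c ⊓ range d).comap (range c).subtype := by
        simp only [Submodule.mem_comap]
        exact ⟨hxc, hxd⟩
      have hy0 : y = 0 := by simpa using hS₀.disjoint.le_bot ⟨hy, hyS₀⟩
      simp [hy0]
    · rw [codisjoint_iff, eq_top_iff, ← h, sup_le_iff]
      constructor
      · rintro x ⟨v, rfl⟩
        have hx : (⟨c v, ⟨v, rfl⟩⟩ : range c) ∈ (⊤ : Submodule K (range c)) := trivial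
        rw [← hS₀.sup_eq_top] at hx
        obtain ⟨a, ha, b, hb, hab⟩ := Submodule.mem_sup.mp hx
        have hcv : c v = (a : W) + (b : W) := by
          have := congrArg (Subtype.val) hab
          simpa using this.symm
        rw [hcv]
        exact Submodule.add_mem _
          (Submodule.mem_sup_right (Submodule.mem_comap.mp ha).2)
          (Submodule.mem_sup_left ⟨b, hb, rfl⟩)
      · exact le_sup_right
  have hfr : finrank K S = finrank K (ker d) := by
    have h1 := Submodule.finrank_add_eq_of_isCompl hSd
    have h2 := finrank_range_add_finrank_ker d
    omega
  obtain ⟨N', hN'⟩ := Submodule.exists_isCompl (ker d)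
  obtain ⟨e⟩ := FiniteDimensional.nonempty_linearEquiv_of_finrank_eq hfr.symm
  obtain ⟨σ, hσ⟩ := c.rangeRestrict.exists_rightInverse_of_surjective
    (range_rangeRestrict c)
  set B : W →ₗ[K] V :=
    σ ∘ₗ (Submodule.inclusion hSle) ∘ₗ e.toLinearMap ∘ₗ (ker d).linearProjOfIsCompl N' hN'
    with hB
  refine ⟨B, ?_⟩
  have hcB : ∀ x : W, c (B x) = ↑(e ((ker d).linearProjOfIsCompl N' hN' x)) := by
    intro x
    have hrr : c (σ (Submodule.inclusion hSle (e ((ker d).linearProjOfIsCompl N' hN' x))))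
        = ↑(c.rangeRestrict (σ (Submodule.inclusion hSle (e ((ker d).linearProjOfIsCompl N' hN' x))))) := rfl
    rw [hB]
    simp only [LinearMap.comp_apply, LinearEquiv.coe_coe]
    have hid : ∀ y, c.rangeRestrict (σ y) = y := fun y => by
      rw [← LinearMap.comp_apply, hσ]; rfl
    rw [hrr, hid]
    rfl
  have hker : ∀ z, (c ∘ₗ B + d) z = 0 → z = 0 := by
    intro z hz
    have hz' : (↑(e ((ker d).linearProjOfIsCompl N' hN' z)) : W) + d z = 0 := by
      simpa [LinearMap.add_apply, LinearMap.comp_apply, hcB] using hz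
    have hmem : (↑(e ((ker d).linearProjOfIsCompl N' hN' z)) : W) ∈ S ⊓ range d := by
      refine ⟨(e _).2, ?_⟩
      have : (↑(e ((ker d).linearProjOfIsCompl N' hN' z)) : W) = d (-z) := by
        rw [map_neg]
        exact eq_neg_of_add_eq_zero_left hz'
      exact ⟨-z, this.symm⟩
    rw [hSd.inf_eq_bot, Submodule.mem_bot] at hmem
    have hdz : d z = 0 := by
      rw [hmem, zero_add] at hz'; exact hz'
    have hzker : z ∈ ker d := hdz
    have hproj := Submodule.linearProjOfIsCompl_apply_left hN' ⟨z, hzker⟩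
    have he0 : e ((ker d).linearProjOfIsCompl N' hN' z) = 0 := Subtype.ext (by simpa using hmem)
    rw [show ((ker d).linearProjOfIsCompl N' hN') z
        = ((ker d).projectionOnto N' hN') ↑(⟨z, hzker⟩ : ker d) from rfl, hproj] at he0
    have : (⟨z, hzker⟩ : ker d) = 0 := e.injective (by simpa using he0)
    simpa using Subtype.ext_iff.mp this
  have hinj : Function.Injective (c ∘ₗ B + d) :=
    LinearMap.ker_eq_bot.mp (LinearMap.ker_eq_bot'.mpr hker)
  exact ⟨hinj, injective_iff_surjective.mp hinj⟩

lemma aux_s14 [FiniteDimensional K W] (φ : (V × W) ≃ₗ[K] (V × W)) :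
    ∃ g₁ g₂ g₃ : (V × W) ≃ₗ[K] (V × W),
      (∀ p, (g₁ p).2 = p.2) ∧ (∀ p, (g₂ p).1 = p.1) ∧ (∀ p, (g₃ p).2 = p.2) ∧
      ∀ p, φ p = g₁ (g₂ (g₃ p)) := by
  classical
  set c : V →ₗ[K] W := snd K V W ∘ₗ φ.toLinearMap ∘ₗ inl K V W with hc
  set d : W →ₗ[K] W := snd K V W ∘ₗ φ.toLinearMap ∘ₗ inr K V W with hd
  have hsnd : ∀ p : V × W, (φ p).2 = c p.1 + d p.2 := by
    intro p
    have : φ p = φ (inl K V W p.1) + φ (inr K V W p.2) := by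
      rw [← map_add]
      congr
      simp
    rw [this]
    rfl
  have hsup : range c ⊔ range d = ⊤ := by
    rw [eq_top_iff]
    intro w _
    obtain ⟨p, hp⟩ := φ.surjective (0, w)
    have : w = c p.1 + d p.2 := by rw [← hsnd, hp]
    rw [this]
    exact Submodule.add_mem _ (Submodule.mem_sup_left ⟨p.1, rfl⟩)
      (Submodule.mem_sup_right ⟨p.2, rfl⟩)
  obtain ⟨B, hBbij⟩ := key_s14 c d hsup
  set d' : W ≃ₗ[K] W := LinearEquiv.ofBijective _ hBbij with hd'
  have hd'app : ∀ w, d' w = c (B w) + d w := fun w => rfl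
  set g₂ : (V × W) ≃ₗ[K] (V × W) := eR c d' with hg₂
  set g₃ : (V × W) ≃ₗ[K] (V × W) := (eL B).symm with hg₃
  set g₁ : (V × W) ≃ₗ[K] (V × W) := g₂.symm.trans ((eL B).trans φ) with hg₁
  have hψsnd : ∀ q : V × W, (φ (eL B q)).2 = c q.1 + d' q.2 := by
    intro q
    rw [hsnd, eL_apply, hd'app]
    simp only []
    rw [map_add]
    abel
  refine ⟨g₁, g₂, g₃, ?_, ?_, ?_, ?_⟩
  · intro p
    have hq : g₂ (g₂.symm p) = p := g₂.apply_symm_apply p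
    have h1 : (g₂.symm p).1 = p.1 := by
      conv_rhs => rw [← hq]
      rfl
    have h2 : c (g₂.symm p).1 + d' (g₂.symm p).2 = p.2 := by
      conv_rhs => rw [← hq]
      rfl
    calc (g₁ p).2 = (φ (eL B (g₂.symm p))).2 := rfl
      _ = c (g₂.symm p).1 + d' (g₂.symm p).2 := hψsnd _
      _ = p.2 := h2
  · intro p; rfl
  · intro p
    have : (eL B (g₃ p)).2 = (g₃ p).2 := rfl
    rw [← this, hg₃, LinearEquiv.apply_symm_apply]
  · intro p
    simp only [hg₁, hg₃, LinearEquiv.trans_apply, LinearEquiv.symm_apply_apply,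
      LinearEquiv.apply_symm_apply]

end Aux

/-- For finite-dimensional vector spaces `V`, `W` over a field `K`,
`GL(V × W) = G_L·G_R·G_L = G_R·G_L·G_R`: every linear automorphism of `V × W`
is a composition of three linear automorphisms alternating between those fixing
the second coordinate (`G_L`) and those fixing the first coordinate (`G_R`). -/
theorem finvect_alternation_diameter_three
    (K V W : Type*) [Field K] [AddCommGroup V] [Module K V] [FiniteDimensional K V]
    [AddCommGroup W] [Module K W] [FiniteDimensional K W]
    (φ : (V × W) ≃ₗ[K] (V × W)) :
    (∃ g₁ g₂ g₃ : (V × W) ≃ₗ[K] (V × W),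
      (∀ p, (g₁ p).2 = p.2) ∧ (∀ p, (g₂ p).1 = p.1) ∧ (∀ p, (g₃ p).2 = p.2) ∧
      ∀ p, φ p = g₁ (g₂ (g₃ p))) ∧
    (∃ h₁ h₂ h₃ : (V × W) ≃ₗ[K] (V × W),
      (∀ p, (h₁ p).1 = p.1) ∧ (∀ p, (h₂ p).2 = p.2) ∧ (∀ p, (h₃ p).1 = p.1) ∧
      ∀ p, φ p = h₁ (h₂ (h₃ p))) := by
  constructor
  · exact aux_s14 φ
  · set σ : (V × W) ≃ₗ[K] (W × V) := LinearEquiv.prodComm K V W with hσ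
    obtain ⟨g₁, g₂, g₃, h1, h2, h3, h4⟩ := aux_s14 ((σ.symm.trans φ).trans σ)
    refine ⟨(σ.trans g₁).trans σ.symm, (σ.trans g₂).trans σ.symm, (σ.trans g₃).trans σ.symm,
      ?_, ?_, ?_, ?_⟩
    · intro p
      calc ((σ.trans g₁).trans σ.symm p).1 = (g₁ (σ p)).2 := rfl
        _ = (σ p).2 := h1 _
        _ = p.1 := rfl
    · intro p
      calc ((σ.trans g₂).trans σ.symm p).2 = (g₂ (σ p)).1 := rfl
        _ = (σ p).1 := h2 _
        _ = p.2 := rfl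
    · intro p
      calc ((σ.trans g₃).trans σ.symm p).1 = (g₃ (σ p)).2 := rfl
        _ = (σ p).2 := h3 _
        _ = p.1 := rfl
    · intro p
      have := h4 (σ p)
      simp only [LinearEquiv.trans_apply, LinearEquiv.symm_apply_apply,
        LinearEquiv.apply_symm_apply] at this ⊢
      rw [← this, LinearEquiv.symm_apply_apply]
end
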